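/- arXiv:2111.11978 — 13 statements merged into one kernel-verified Lean document; each statement's English description precedes it below -/
import Mathlib

section
/- Let R ⊆ S be an extension of commutative rings. Then R ⊆ S is Prüfer if and only if for each s ∈ S one has R[s] = (R :_R s)·R[s], where R[s] is the subring of S generated by R and s. -/
universe u v

/-- A ring homomorphism is a *flat epimorphism* if it makes the target a flat module over
the source and it is an epimorphism in the category of commutative rings. -/
def RingHom.IsFlatEpi {A : Type u} {B : Type v} [CommRing A] [CommRing B] (f : A →+* B) : Prop :=
  (letI := f.toAlgebra; Module.Flat A B) ∧
    ∀ ⦃C : Type (max u v)⦄ [CommRing C], ∀ g h : B →+* C, g.comp f = h.comp f → g = h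

/-- A ring homomorphism `f : A →+* B` is *Prüfer* if for every subring `T` of `B` containing
the image of `f`, the induced map `A →+* T` is a flat epimorphism.  For an extension of rings
`R ⊆ S` (i.e. `R : Subring S`), the extension is Prüfer precisely when `R.subtype.IsPrufer`. -/
def RingHom.IsPrufer {A : Type u} {B : Type v} [CommRing A] [CommRing B] (f : A →+* B) : Prop :=
  ∀ (T : Subring B) (hT : f.range ≤ T),
    (f.codRestrict T fun a => hT (f.mem_range_self a)).IsFlatEpi

/-- The conductor ideal `(R :_R s) = {r ∈ R | r · s ∈ R}` of an element `s ∈ S`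
with respect to a subring `R` of `S`. -/
def Subring.condIdeal {S : Type*} [CommRing S] (R : Subring S) (s : S) : Ideal R where
  carrier := {r : R | (r : S) * s ∈ R}
  add_mem' := by
    intro a b ha hb
    have := R.add_mem ha hb
    simpa [add_mul] using this
  zero_mem' := by simpa using R.zero_mem
  smul_mem' := by
    intro c x hx
    have := R.mul_mem c.2 hx
    simpa [mul_assoc] using this

/-- A *strong divisor* of a (local) commutative ring `R` is a regular element `t`
such that the principal ideal `Rt` is comparable to every ideal of `R`. -/
def IsStrongDivisor {R : Type*} [CommRing R] (t : R) : Prop :=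
  t ∈ nonZeroDivisors R ∧ ∀ I : Ideal R, I ≤ Ideal.span {t} ∨ Ideal.span {t} ≤ I

lemma Subring.mem_condIdeal' {S : Type*} [CommRing S] (R : Subring S) (s : S) (a : R) :
    a ∈ R.condIdeal s ↔ (a : S) * s ∈ R := Iff.rfl

section Aux
open TensorProduct
universe w


private theorem aux_forward {A B : Type w} [CommRing A] [CommRing B] [Algebra A B]
    [Module.Flat A B]
    (hepi : ∀ g h : B →+* B ⊗[A] B,
      g.comp (algebraMap A B) = h.comp (algebraMap A B) → g = h)
    (s : B) :
    Ideal.map (algebraMap A B)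
      (Submodule.comap (LinearMap.toSpanSingleton A B s)
        (LinearMap.range (Algebra.linearMap A B))) = ⊤ := by
  classical
  set I : Ideal A := Submodule.comap (LinearMap.toSpanSingleton A B s)
      (LinearMap.range (Algebra.linearMap A B)) with hIdef
  -- epi gives tensor symmetry
  have htensor : ∀ b : B, (b ⊗ₜ[A] (1 : B) : B ⊗[A] B) = 1 ⊗ₜ[A] b := by
    have hcomp : (Algebra.TensorProduct.includeLeftRingHom (R := A) (A := B) (B := B)).comp
        (algebraMap A B) =
        ((Algebra.TensorProduct.includeRight (R := A) (A := B) (B := B)).toRingHom).comp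
          (algebraMap A B) := by
      ext a
      show (algebraMap A B a) ⊗ₜ[A] (1 : B) = 1 ⊗ₜ[A] (algebraMap A B a)
      rw [Algebra.algebraMap_eq_smul_one, ← TensorProduct.smul_tmul]
    have := hepi _ _ hcomp
    intro b
    exact RingHom.congr_fun this b
  set N : Submodule A B := LinearMap.range (Algebra.linearMap A B) with hNdef
  have h1N : (1 : B) ∈ N := ⟨1, by simp⟩
  have key : ∀ b : B, ((N.mkQ b) ⊗ₜ[A] (1 : B) : (B ⧸ N) ⊗[A] B) = 0 := by
    intro b
    have e1 : ((N.mkQ b) ⊗ₜ[A] (1 : B) : (B ⧸ N) ⊗[A] B)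
        = (LinearMap.rTensor B N.mkQ) (b ⊗ₜ[A] 1) := by
      rw [LinearMap.rTensor_tmul]
    have hz : N.mkQ 1 = 0 := (Submodule.Quotient.mk_eq_zero N).mpr h1N
    rw [e1, htensor b, LinearMap.rTensor_tmul, hz, TensorProduct.zero_tmul]
  set φ : A →ₗ[A] B ⧸ N := N.mkQ ∘ₗ LinearMap.toSpanSingleton A B s with hφdef
  have hker : LinearMap.ker φ = I := by
    rw [hφdef, LinearMap.ker_comp, Submodule.ker_mkQ]
  set g : (A ⧸ LinearMap.ker φ) →ₗ[A] B ⧸ N := (LinearMap.ker φ).liftQ φ le_rfl with hgdef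
  have hginj : Function.Injective g := by
    rw [← LinearMap.ker_eq_bot]
    exact Submodule.ker_liftQ_eq_bot _ _ _ le_rfl
  have h10 : ((Submodule.Quotient.mk (1 : A) : A ⧸ LinearMap.ker φ) ⊗ₜ[A] (1 : B)
      : (A ⧸ LinearMap.ker φ) ⊗[A] B) = 0 := by
    apply Module.Flat.rTensor_preserves_injective_linearMap (M := B) g hginj
    rw [map_zero, LinearMap.rTensor_tmul]
    have e2 : g (Submodule.Quotient.mk (1 : A)) = N.mkQ s := by
      rw [hgdef, Submodule.liftQ_apply, hφdef]
      simp
    rw [e2]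
    exact key s
  -- the evaluation map
  set ℓ : A →ₗ[A] (B →ₗ[A] B ⧸ (I • (⊤ : Submodule A B))) :=
    LinearMap.toSpanSingleton A _ (I • (⊤ : Submodule A B)).mkQ with hℓdef
  have hℓker : LinearMap.ker φ ≤ LinearMap.ker ℓ := by
    rw [hker]
    intro a ha
    rw [LinearMap.mem_ker, hℓdef, LinearMap.toSpanSingleton_apply]
    ext b
    simp only [LinearMap.smul_apply, LinearMap.zero_apply, Submodule.mkQ_apply]
    rw [← Submodule.Quotient.mk_smul, Submodule.Quotient.mk_eq_zero]
    exact Submodule.smul_mem_smul ha Submodule.mem_top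
  set μ : (A ⧸ LinearMap.ker φ) ⊗[A] B →ₗ[A] B ⧸ (I • (⊤ : Submodule A B)) :=
    TensorProduct.lift ((LinearMap.ker φ).liftQ ℓ hℓker) with hμdef
  have hmem : (1 : B) ∈ I • (⊤ : Submodule A B) := by
    have := congrArg μ h10
    rw [map_zero, hμdef, TensorProduct.lift.tmul, Submodule.liftQ_apply, hℓdef,
      LinearMap.toSpanSingleton_apply, one_smul, Submodule.mkQ_apply] at this
    exact (Submodule.Quotient.mk_eq_zero _).mp this
  rw [Ideal.smul_top_eq_map] at hmem
  exact Ideal.eq_top_iff_one _ |>.mpr hmem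

universe w2


set_option maxHeartbeats 1000000 in
set_option synthInstance.maxHeartbeats 400000 in
private theorem aux_flat {A T : Type w2} [CommRing A] [CommRing T] [Algebra A T]
    (hinj : Function.Injective (algebraMap A T))
    (H : ∀ (Q : Ideal T), Q ≠ ⊤ → ∀ t : T, ∃ a : A,
      (∃ n : A, algebraMap A T a * t = algebraMap A T n) ∧ algebraMap A T a ∉ Q) :
    Module.Flat A T := by
  rw [Module.Flat.iff_lTensor_injective']
  intro I
  have hbc : Function.Injective (LinearMap.baseChange T I.subtype) := by
    intro x y hxy
    suffices h0 : ∀ z : T ⊗[A] I, LinearMap.baseChange T I.subtype z = 0 → z = 0 by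
      have := h0 (x - y) (by rw [map_sub, hxy, sub_self])
      exact sub_eq_zero.mp this
    intro z hz
    by_contra hz0
    set J : Ideal T := (Submodule.span T {z}).annihilator with hJdef
    have hJ : J ≠ ⊤ := by
      intro h
      apply hz0
      have h1 : (1 : T) ∈ J := h ▸ Submodule.mem_top
      rw [hJdef, Submodule.mem_annihilator_span_singleton, one_smul] at h1
      exact h1
    obtain ⟨Q, hQmax, hJQ⟩ := Ideal.exists_le_maximal J hJ
    set TQ := Localization.AtPrime Q with hTQdef
    set P : Ideal A := Q.comap (algebraMap A T) with hPdef
    haveI hQP : Q.IsPrime := hQmax.isPrime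
    haveI : P.IsPrime := Ideal.IsPrime.comap _
    have halg : ∀ x : A, algebraMap A TQ x = algebraMap T TQ (algebraMap A T x) := fun x =>
      IsScalarTower.algebraMap_apply A T TQ x
    haveI : IsLocalization P.primeCompl TQ := by
      constructor
      constructor
      · rintro ⟨y, hy⟩
        have hy' : algebraMap A T y ∈ Q.primeCompl := hy
        rw [halg]
        exact IsLocalization.map_units (M := Q.primeCompl) TQ ⟨_, hy'⟩
      · intro w
        obtain ⟨⟨t, v⟩, hv⟩ := IsLocalization.surj (M := Q.primeCompl) w
        obtain ⟨a, ⟨n₁, hn₁⟩, ha⟩ := H Q hQmax.ne_top t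
        obtain ⟨d, ⟨n₂, hn₂⟩, hd⟩ := H Q hQmax.ne_top (v : T)
        have hden : a * n₂ ∈ P.primeCompl := by
          intro hmem
          rw [hPdef] at hmem
          have hQm : algebraMap A T (a * n₂) ∈ Q := hmem
          rw [map_mul, ← hn₂] at hQm
          rcases hQP.mem_or_mem hQm with h | h
          · exact ha h
          · rcases hQP.mem_or_mem h with h' | h'
            · exact hd h'
            · exact v.2 h'
        refine ⟨⟨d * n₁, ⟨a * n₂, hden⟩⟩, ?_⟩
        show w * algebraMap A TQ (a * n₂) = algebraMap A TQ (d * n₁)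
        have e1 : algebraMap A T (a * n₂) = algebraMap A T a * (algebraMap A T d * (v : T)) := by
          rw [map_mul, hn₂]
        have e2 : algebraMap A T (d * n₁) = algebraMap A T d * (algebraMap A T a * t) := by
          rw [map_mul, hn₁]
        have hv' : w * algebraMap T TQ (v : T) = algebraMap T TQ t := hv
        rw [halg, halg, e1, e2, map_mul, map_mul, map_mul, map_mul, ← hv']
        ring
      · intro a₁ a₂ heq
        rw [halg, halg] at heq
        obtain ⟨w, hw⟩ := IsLocalization.exists_of_eq (M := Q.primeCompl) heq
        obtain ⟨e, ⟨m, hm⟩, he⟩ := H Q hQmax.ne_top (w : T)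
        have hmP : m ∈ P.primeCompl := by
          intro hmem
          have hQm : algebraMap A T m ∈ Q := hmem
          rw [← hm] at hQm
          rcases hQP.mem_or_mem hQm with h | h
          · exact he h
          · exact w.2 h
        refine ⟨⟨m, hmP⟩, hinj ?_⟩
        show algebraMap A T (m * a₁) = algebraMap A T (m * a₂)
        rw [map_mul, map_mul, ← hm]
        calc algebraMap A T e * (w : T) * algebraMap A T a₁
            = algebraMap A T e * ((w : T) * algebraMap A T a₁) := by ring
          _ = algebraMap A T e * ((w : T) * algebraMap A T a₂) := by rw [hw]
          _ = algebraMap A T e * (w : T) * algebraMap A T a₂ := by ring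
    haveI hflatQ : Module.Flat A TQ := IsLocalization.flat TQ P.primeCompl
    set mk1 : T ⊗[A] I →ₗ[T] TQ ⊗[T] (T ⊗[A] I) := TensorProduct.mk T TQ (T ⊗[A] I) 1
      with hmk1def
    haveI : IsLocalizedModule Q.primeCompl mk1 :=
      (isLocalizedModule_iff_isBaseChange Q.primeCompl TQ mk1).mpr
        (TensorProduct.isBaseChange T (T ⊗[A] I) TQ)
    set eIl : TQ ⊗[T] (T ⊗[A] I) →ₗ[TQ] TQ ⊗[A] I :=
      (AlgebraTensorModule.cancelBaseChange A T TQ TQ I).toLinearMap with heIdef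
    set eAl : TQ ⊗[T] (T ⊗[A] A) →ₗ[TQ] TQ ⊗[A] A :=
      (AlgebraTensorModule.cancelBaseChange A T TQ TQ A).toLinearMap with heAdef
    set F1 : TQ ⊗[T] (T ⊗[A] I) →ₗ[TQ] TQ ⊗[A] A :=
      (LinearMap.baseChange TQ I.subtype) ∘ₗ eIl with hF1def
    set F2 : TQ ⊗[T] (T ⊗[A] I) →ₗ[TQ] TQ ⊗[A] A :=
      eAl ∘ₗ (LinearMap.baseChange TQ (LinearMap.baseChange T I.subtype)) with hF2def
    have hcomm : F1 = F2 := by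
      apply LinearMap.ext
      intro y
      induction y with
      | zero => rw [F1.map_zero, F2.map_zero]
      | add u v hu hv => rw [F1.map_add, F2.map_add, hu, hv]
      | tmul q w =>
        induction w with
        | zero => rw [TensorProduct.tmul_zero, F1.map_zero, F2.map_zero]
        | add u v hu hv =>
            rw [TensorProduct.tmul_add, F1.map_add, F2.map_add, hu, hv]
        | tmul t i => rfl
    have hinjQ : Function.Injective (LinearMap.baseChange TQ I.subtype) := by
      have := (Module.Flat.iff_lTensor_injective' (R := A) (M := TQ)).mp hflatQ I
      rwa [← LinearMap.baseChange_eq_ltensor] at this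
    have h1z : eIl ((1 : TQ) ⊗ₜ[T] z) = 0 := by
      apply hinjQ
      rw [(LinearMap.baseChange TQ I.subtype).map_zero]
      have h := LinearMap.congr_fun hcomm ((1 : TQ) ⊗ₜ[T] z)
      rw [hF1def, hF2def, LinearMap.comp_apply, LinearMap.comp_apply] at h
      rw [h, LinearMap.baseChange_tmul, hz, TensorProduct.tmul_zero, eAl.map_zero]
    have hz1 : mk1 z = 0 := by
      have h0 : ((1 : TQ) ⊗ₜ[T] z : TQ ⊗[T] (T ⊗[A] I)) = 0 :=
        (AlgebraTensorModule.cancelBaseChange A T TQ TQ I).injective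
          (by rw [LinearEquiv.map_zero]; exact h1z)
      exact h0
    obtain ⟨c, hc⟩ := (IsLocalizedModule.eq_zero_iff Q.primeCompl mk1).mp hz1
    have hcJ : (c : T) ∈ J := by
      rw [hJdef, Submodule.mem_annihilator_span_singleton]
      exact hc
    exact c.2 (hJQ hcJ)
  intro x y hxy
  apply hbc
  rw [LinearMap.baseChange_eq_ltensor]
  exact hxy

end Aux

/-- `R ⊆ S` is Prüfer iff for each `s ∈ S` one has
`R[s] = (R :_R s)·R[s]`, where `R[s]` is the subring of `S` generated by `R` and `s`. -/
theorem isPrufer_iff_condIdeal_adjoin {S : Type*} [CommRing S] (R : Subring S) :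
    R.subtype.IsPrufer ↔
      ∀ s : S,
        Ideal.map
          (Subring.inclusion
            (show R ≤ Subring.closure ((R : Set S) ∪ {s}) from
              fun x hx => Subring.subset_closure (Set.mem_union_left _ hx)))
          (R.condIdeal s) = ⊤ := by
  constructor
  · intro hP s
    have hRB : R ≤ Subring.closure ((R : Set S) ∪ {s}) :=
      fun x hx => Subring.subset_closure (Set.mem_union_left _ hx)
    have hT : R.subtype.range ≤ Subring.closure ((R : Set S) ∪ {s}) := by
      rw [Subring.range_subtype]; exact hRB
    obtain ⟨hflat, hepi⟩ := hP (Subring.closure ((R : Set S) ∪ {s})) hT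
    letI : Algebra ↥R ↥(Subring.closure ((R : Set S) ∪ {s})) :=
      (R.subtype.codRestrict _ fun a => hT (R.subtype.mem_range_self a)).toAlgebra
    haveI : Module.Flat ↥R ↥(Subring.closure ((R : Set S) ∪ {s})) := hflat
    set sB : ↥(Subring.closure ((R : Set S) ∪ {s})) :=
      ⟨s, Subring.subset_closure (Set.mem_union_right _ rfl)⟩ with hsBdef
    have key := aux_forward (A := ↥R) (B := ↥(Subring.closure ((R : Set S) ∪ {s})))
      (fun g h e => hepi g h e) sB
    have hIeq : R.condIdeal s = Submodule.comap (LinearMap.toSpanSingleton ↥R _ sB)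
        (LinearMap.range (Algebra.linearMap ↥R ↥(Subring.closure ((R : Set S) ∪ {s})))) := by
      ext a
      rw [Subring.mem_condIdeal']
      constructor
      · intro ha
        refine Submodule.mem_comap.mpr ⟨(⟨(a : S) * s, ha⟩ : ↥R), ?_⟩
        apply Subtype.ext
        show (a : S) * s = ((a • sB : ↥(Subring.closure ((R : Set S) ∪ {s}))) : S)
        rw [Algebra.smul_def]
        rfl
      · intro ha
        obtain ⟨y, hy⟩ := Submodule.mem_comap.mp ha
        have hval := congrArg Subtype.val hy
        have : ((a • sB : ↥(Subring.closure ((R : Set S) ∪ {s}))) : S) = (a : S) * s := by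
          rw [Algebra.smul_def]; rfl
        rw [LinearMap.toSpanSingleton_apply, this] at hval
        rw [← hval]
        exact (y : ↥R).2
    rw [hIeq]
    exact key
  · intro hyp
    intro T hT
    have hRT : R ≤ T := by
      have h := hT; rwa [Subring.range_subtype] at h
    constructor
    · -- flatness
      letI : Algebra ↥R ↥T :=
        (R.subtype.codRestrict T fun a => hT (R.subtype.mem_range_self a)).toAlgebra
      show Module.Flat ↥R ↥T
      apply aux_flat
      · exact fun a b hab => Subtype.ext (show (a : S) = (b : S) from congrArg (Subtype.val : ↥T → S) hab)
      · intro Q hQ t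
        have hBT : Subring.closure ((R : Set S) ∪ {(t : S)}) ≤ T :=
          Subring.closure_le.mpr (Set.union_subset hRT (Set.singleton_subset_iff.mpr t.2))
        by_contra hcon
        push_neg at hcon
        have hle : Ideal.map
            (Subring.inclusion
              (show R ≤ Subring.closure ((R : Set S) ∪ {(t : S)}) from
                fun x hx => Subring.subset_closure (Set.mem_union_left _ hx)))
            (R.condIdeal (t : S)) ≤ Ideal.comap (Subring.inclusion hBT) Q := by
          rw [Ideal.map_le_iff_le_comap]
          intro a ha
          rw [Subring.mem_condIdeal'] at ha
          rw [Ideal.mem_comap, Ideal.mem_comap]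
          exact hcon a ⟨(⟨(a : S) * (t : S), ha⟩ : ↥R), Subtype.ext rfl⟩
        rw [hyp (t : S)] at hle
        have h2 : (1 : ↥(Subring.closure ((R : Set S) ∪ {(t : S)}))) ∈
            Ideal.comap (Subring.inclusion hBT) Q := hle Submodule.mem_top
        rw [Ideal.mem_comap, map_one] at h2
        exact hQ ((Ideal.eq_top_iff_one Q).mpr h2)
    · -- epi
      intro C _ g h e
      set f : ↥R →+* ↥T := R.subtype.codRestrict T fun b => hT (R.subtype.mem_range_self b)
        with hfdef
      have e' : ∀ r : ↥R, g (f r) = h (f r) := fun r => RingHom.congr_fun e r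
      apply RingHom.ext
      intro t
      have hBT : Subring.closure ((R : Set S) ∪ {(t : S)}) ≤ T :=
        Subring.closure_le.mpr (Set.union_subset hRT (Set.singleton_subset_iff.mpr t.2))
      set x : C := g t - h t with hxdef
      have hann : ∀ a : ↥R, ((a : S) * (t : S) ∈ R) →
          g (f a) * x = 0 := by
        intro a ha
        have h1 : f a * t = f ⟨(a : S) * (t : S), ha⟩ := Subtype.ext rfl
        have key : g (f a * t) = g (f a) * h t := by
          rw [h1, e' _, ← h1, map_mul, ← e' a]
        rw [hxdef, mul_sub, ← map_mul, key, sub_self]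
      -- annihilator trick
      set J : Ideal C := (Submodule.span C {x}).annihilator with hJdef
      have hle : Ideal.map
          (Subring.inclusion
            (show R ≤ Subring.closure ((R : Set S) ∪ {(t : S)}) from
              fun y hy => Subring.subset_closure (Set.mem_union_left _ hy)))
          (R.condIdeal (t : S)) ≤ Ideal.comap (g.comp (Subring.inclusion hBT)) J := by
        rw [Ideal.map_le_iff_le_comap]
        intro a ha
        rw [Subring.mem_condIdeal'] at ha
        show g ((Subring.inclusion hBT) ((Subring.inclusion _) a)) ∈ J
        rw [hJdef, Submodule.mem_annihilator_span_singleton, smul_eq_mul]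
        exact hann a ha
      rw [hyp (t : S)] at hle
      have h1 : (1 : C) ∈ J := by
        have h2 : (1 : ↥(Subring.closure ((R : Set S) ∪ {(t : S)}))) ∈
            Ideal.comap (g.comp (Subring.inclusion hBT)) J := hle Submodule.mem_top
        rw [Ideal.mem_comap, map_one] at h2
        exact h2
      rw [hJdef, Submodule.mem_annihilator_span_singleton, one_smul] at h1
      exact sub_eq_zero.mp h1
end

section
/- Let R ⊆ S be an extension of commutative rings and let r₁, …, rₙ ∈ R be elements generating the unit ideal of R (so that Spec(R) = D(r₁) ∪ ⋯ ∪ D(rₙ)). If for each i = 1, …, n the induced extension R_{rᵢ} ⊆ S_{rᵢ} of localizations away from rᵢ is Prüfer, then R ⊆ S is Prüfer. -/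
universe u v

set_option maxHeartbeats 1000000
set_option synthInstance.maxHeartbeats 1000000

open TensorProduct in
theorem my_flat_of_localized_span {R : Type*} [CommRing R] {M : Type*} [AddCommGroup M]
    [Module R M] (s : Set R) (hs : Ideal.span s = ⊤)
    (H : ∀ r : s, Module.Flat (Localization.Away r.1)
      (LocalizedModule (Submonoid.powers r.1) M)) : Module.Flat R M := by
  rw [Module.Flat.iff_rTensor_injective']
  intro I
  rw [injective_iff_map_eq_zero]
  intro x hx
  haveI : ∀ r : s, IsLocalizedModule (Submonoid.powers r.1)
      (TensorProduct.mk R (Localization.Away r.1) (I ⊗[R] M) 1) := fun r =>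
    (isLocalizedModule_iff_isBaseChange (Submonoid.powers r.1) (Localization.Away r.1) _).mpr
      (TensorProduct.isBaseChange R _ _)
  apply Module.eq_zero_of_isLocalized_span s hs
    (Mₚ := fun r : s => Localization.Away r.1 ⊗[R] (I ⊗[R] M))
    (fun r : s => TensorProduct.mk R (Localization.Away r.1) (I ⊗[R] M) 1)
  intro r
  set A := Localization.Away r.1
  haveI : Module.Flat A (LocalizedModule (Submonoid.powers r.1) M) := H r
  haveI : Module.Flat A (A ⊗[R] M) := Module.Flat.of_linearEquiv
    ((IsLocalizedModule.isBaseChange (Submonoid.powers r.1) A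
      (LocalizedModule.mkLinearMap (Submonoid.powers r.1) M)).equiv)
  haveI : Module.Flat R (A ⊗[R] M) := Module.Flat.trans R A (A ⊗[R] M)
  have hinj : Function.Injective (LinearMap.rTensor (A ⊗[R] M) I.subtype) :=
    Module.Flat.rTensor_preserves_injective_linearMap I.subtype I.injective_subtype
  have key : (LinearMap.rTensor (A ⊗[R] M) I.subtype) ∘ₗ (TensorProduct.leftComm R A I M).toLinearMap
      = (TensorProduct.leftComm R A R M).toLinearMap ∘ₗ
        (LinearMap.lTensor A (LinearMap.rTensor M I.subtype)) := by
    ext a i m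
    simp [TensorProduct.leftComm]
  have h1 : LinearMap.lTensor A (LinearMap.rTensor M I.subtype) ((1:A) ⊗ₜ x) = 0 := by
    simp [hx]
  have h2 : LinearMap.rTensor (A ⊗[R] M) I.subtype
      ((TensorProduct.leftComm R A I M) ((1:A) ⊗ₜ x)) = 0 := by
    have := LinearMap.congr_fun key ((1:A) ⊗ₜ x)
    simp only [LinearMap.coe_comp, Function.comp_apply, LinearEquiv.coe_coe] at this
    rw [this, h1, map_zero]
  have h3 : (TensorProduct.leftComm R A I M) ((1:A) ⊗ₜ x) = 0 := hinj (by rw [h2, map_zero])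
  simpa using (TensorProduct.leftComm R A I M).map_eq_zero_iff.mp h3

/-- If `r₁, …, rₙ ∈ R` generate the unit ideal of `R` and each induced
extension of localizations `R_{rᵢ} ⊆ S_{rᵢ}` is Prüfer, then `R ⊆ S` is Prüfer. -/
theorem isPrufer_of_localization_cover {S : Type*} [CommRing S] (R : Subring S)
    (n : ℕ) (r : Fin n → R) (hspan : Ideal.span (Set.range r) = ⊤)
    (hloc : ∀ i : Fin n, (Localization.awayMap R.subtype (r i)).IsPrufer) :
    R.subtype.IsPrufer := by
  intro T hT
  set A : ↥R →+* ↥T := R.subtype.codRestrict T fun a => hT (R.subtype.mem_range_self a) with hA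
  let F : ∀ i : Fin n, Localization.Away (r i) →+* Localization.Away (R.subtype (r i)) :=
    fun i => Localization.awayMap R.subtype (r i)
  let G : ∀ i : Fin n, Localization.Away (A (r i)) →+* Localization.Away (R.subtype (r i)) :=
    fun i => Localization.awayMap T.subtype (A (r i))
  let H : ∀ i : Fin n, Localization.Away (r i) →+* Localization.Away (A (r i)) :=
    fun i => Localization.awayMap A (r i)
  haveI instL : ∀ i : Fin n, IsLocalization (Submonoid.powers (T.subtype (A (r i))))
      (Localization.Away (R.subtype (r i))) := fun i => Localization.isLocalization
  have hGH : ∀ i, (G i).comp (H i) = F i := fun i => by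
    apply IsLocalization.ringHom_ext (Submonoid.powers (r i))
    ext x
    simp only [F, G, H, RingHom.coe_comp, Function.comp_apply, Localization.awayMap,
      IsLocalization.Away.map, IsLocalization.map_eq]
    erw [RingHom.comp_apply, IsLocalization.map_eq, IsLocalization.map_eq]
    rfl
  have hGinj : ∀ i, Function.Injective (G i) := fun i => by
    haveI : IsLocalization ((Submonoid.powers (A (r i))).map T.subtype)
        (Localization.Away (T.subtype (A (r i)))) := by
      rw [Submonoid.map_powers]
      exact Localization.isLocalization
    exact IsLocalization.map_injective_of_injective (M := Submonoid.powers (A (r i)))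
      (S := Localization.Away (A (r i))) (Q := Localization.Away (T.subtype (A (r i))))
      (fun a b hab => Subtype.ext hab)
  let T' : ∀ i : Fin n, Subring (Localization.Away (R.subtype (r i))) := fun i => (G i).range
  have hT' : ∀ i, (F i).range ≤ T' i := by
    rintro i y ⟨x, rfl⟩
    exact ⟨H i x, RingHom.congr_fun (hGH i) x⟩
  let A' : ∀ i : Fin n, Localization.Away (r i) →+* (T' i) := fun i =>
    (F i).codRestrict (T' i) fun a => (hT' i) ((F i).mem_range_self a)
  have hFE : ∀ i, (A' i).IsFlatEpi := fun i => hloc i (T' i) (hT' i)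
  let e : ∀ i : Fin n, Localization.Away (A (r i)) ≃+* (T' i) := fun i =>
    RingEquiv.ofBijective ((G i).rangeRestrict)
      ⟨fun a b hab => hGinj i (congrArg Subtype.val hab), (G i).rangeRestrict_surjective⟩
  have he : ∀ i (x : Localization.Away (r i)), e i (H i x) = A' i x := fun i x =>
    Subtype.ext (RingHom.congr_fun (hGH i) x)
  constructor
  · letI := A.toAlgebra
    apply my_flat_of_localized_span (Set.range r) hspan
    rintro ⟨ρ, i, rfl⟩
    haveI : IsLocalization (Algebra.algebraMapSubmonoid ↥T (Submonoid.powers (r i)))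
        (Localization.Away (A (r i))) := by
      have hme : Algebra.algebraMapSubmonoid ↥T (Submonoid.powers (r i))
          = Submonoid.powers (A (r i)) := by
        rw [Algebra.algebraMapSubmonoid, Submonoid.map_powers]
        rfl
      rw [hme]
      exact Localization.isLocalization
    letI : Algebra (Localization.Away (r i)) (Localization.Away (A (r i))) := (H i).toAlgebra
    have hH : ∀ (a : ↥R) (s : Submonoid.powers (r i)), H i (Localization.mk a s)
        = Localization.mk (A a) ⟨A s, by
          obtain ⟨m, hm⟩ := s.2
          exact ⟨m, by simp only [← hm, map_pow]⟩⟩ := fun a s => by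
      rw [Localization.mk_eq_mk', Localization.mk_eq_mk']
      exact IsLocalization.map_mk' _ a s
    haveI : IsScalarTower ↥R (Localization.Away (r i)) (Localization.Away (A (r i))) := by
      refine ⟨fun x y z => ?_⟩
      show (H i) (x • y) * z = x • ((H i) y * z)
      induction y using Localization.induction_on with | _ p => ?_
      induction z using Localization.induction_on with | _ q => ?_
      obtain ⟨a, s⟩ := p
      obtain ⟨t, u⟩ := q
      rw [Localization.smul_mk, hH, hH, Localization.mk_mul, Localization.mk_mul,
        Localization.smul_mk]
      congr 1
      show A (x * a) * t = A x * (A a * t)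
      rw [map_mul, mul_assoc]
    letI : Algebra (Localization.Away (r i)) (T' i) := (A' i).toAlgebra
    haveI hflatT' : Module.Flat (Localization.Away (r i)) (T' i) := (hFE i).1
    let ee : Localization.Away (A (r i)) ≃ₐ[Localization.Away (r i)] (T' i) :=
      { e i with commutes' := fun c => he i c }
    haveI hflatTl : Module.Flat (Localization.Away (r i)) (Localization.Away (A (r i))) :=
      Module.Flat.of_linearEquiv ee.toLinearEquiv
    let ℓ := IsLocalizedModule.iso (Submonoid.powers (r i))
        (IsScalarTower.toAlgHom ↥R ↥T (Localization.Away (A (r i)))).toLinearMap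
    let ℓ' := LinearMap.extendScalarsOfIsLocalization (Submonoid.powers (r i))
        (Localization.Away (r i)) ℓ.toLinearMap
    have hb : Function.Bijective ℓ' := ℓ.bijective
    exact Module.Flat.of_linearEquiv (LinearEquiv.ofBijective ℓ' hb)
  · intro C _ g h ghe
    have hgh : ∀ x : ↥R, g (A x) = h (A x) := fun x => RingHom.congr_fun ghe x
    ext t
    have key : ∀ i : Fin n, ∃ m : ℕ, g (A (r i)) ^ m * (g t - h t) = 0 := by
      intro i
      have hug : IsUnit ((algebraMap C (Localization.Away (g (A (r i))))) (g (A (r i)))) :=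
        IsLocalization.map_units _
          (⟨g (A (r i)), Submonoid.mem_powers _⟩ : Submonoid.powers (g (A (r i))))
      have huh : IsUnit ((algebraMap C (Localization.Away (g (A (r i))))) (h (A (r i)))) := by
        rw [← hgh (r i)]; exact hug
      let gl : Localization.Away (A (r i)) →+* Localization.Away (g (A (r i))) :=
        IsLocalization.Away.lift (A (r i))
          (g := (algebraMap C (Localization.Away (g (A (r i))))).comp g) hug
      let hl : Localization.Away (A (r i)) →+* Localization.Away (g (A (r i))) :=
        IsLocalization.Away.lift (A (r i))
          (g := (algebraMap C (Localization.Away (g (A (r i))))).comp h) huh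
      have hcompl : gl.comp (H i) = hl.comp (H i) := by
        apply IsLocalization.ringHom_ext (Submonoid.powers (r i))
        ext x
        simp only [RingHom.coe_comp, Function.comp_apply, gl, hl, H, Localization.awayMap,
          IsLocalization.Away.map]
        rw [IsLocalization.map_eq, IsLocalization.Away.lift_eq, IsLocalization.Away.lift_eq]
        simp only [RingHom.coe_comp, Function.comp_apply]
        rw [hgh x]
      have hpq : (gl.comp (e i).symm.toRingHom).comp (A' i)
          = (hl.comp (e i).symm.toRingHom).comp (A' i) := by
        ext x
        have hsymm : (e i).symm (A' i x) = H i x := by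
          rw [← he i x, RingEquiv.symm_apply_apply]
        simp only [RingHom.coe_comp, Function.comp_apply, RingEquiv.toRingHom_eq_coe,
          RingEquiv.coe_toRingHom, hsymm]
        exact RingHom.congr_fun hcompl x
      have heq : gl.comp (e i).symm.toRingHom = hl.comp (e i).symm.toRingHom :=
        (hFE i).2 _ _ hpq
      have hgl_hl : ∀ y, gl y = hl y := fun y => by
        have hy := RingHom.congr_fun heq (e i y)
        simpa only [RingHom.coe_comp, Function.comp_apply, RingEquiv.toRingHom_eq_coe,
          RingEquiv.coe_toRingHom, RingEquiv.symm_apply_apply] using hy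
      have halg : algebraMap C (Localization.Away (g (A (r i)))) (g t)
          = algebraMap C (Localization.Away (g (A (r i)))) (h t) := by
        have h1 : gl (algebraMap ↥T (Localization.Away (A (r i))) t)
            = algebraMap C (Localization.Away (g (A (r i)))) (g t) := by
          simp only [gl]
          rw [IsLocalization.Away.lift_eq]
          rfl
        have h2 : hl (algebraMap ↥T (Localization.Away (A (r i))) t)
            = algebraMap C (Localization.Away (g (A (r i)))) (h t) := by
          simp only [hl]
          rw [IsLocalization.Away.lift_eq]
          rfl
        rw [← h1, ← h2, hgl_hl]
      obtain ⟨c, hc⟩ :=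
        (IsLocalization.eq_iff_exists (Submonoid.powers (g (A (r i)))) _).mp halg
      obtain ⟨m, hm⟩ := c.2
      refine ⟨m, ?_⟩
      rw [mul_sub, sub_eq_zero]
      have : (c : C) * g t = (c : C) * h t := hc
      rw [← hm] at this
      exact this
    let J : Ideal ↥R :=
      { carrier := {x : ↥R | g (A x) * (g t - h t) = 0}
        add_mem' := fun {a b} ha hb => by
          simp only [Set.mem_setOf_eq, map_add, add_mul] at *
          rw [ha, hb, add_zero]
        zero_mem' := by simp
        smul_mem' := fun c x hx => by
          simp only [Set.mem_setOf_eq, smul_eq_mul, map_mul, mul_assoc] at *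
          rw [hx, mul_zero] }
    have hJ : Ideal.span (Set.range r) ≤ J.radical := by
      rw [Ideal.span_le]
      rintro _ ⟨i, rfl⟩
      obtain ⟨m, hm⟩ := key i
      exact ⟨m, show g (A ((r i) ^ m)) * (g t - h t) = 0 by rw [map_pow, map_pow]; exact hm⟩
    have h1J : (1 : ↥R) ∈ J.radical := by
      rw [hspan] at hJ
      exact hJ trivial
    obtain ⟨k, hk⟩ := h1J
    have h0 : g (A (1 ^ k)) * (g t - h t) = 0 := hk
    have : g t - h t = 0 := by simpa using h0
    exact sub_eq_zero.mp this
end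

section
/- Let R ⊆ S be an extension of commutative rings such that the complement S \ R is closed under multiplication. Then R is integrally closed in S. -/
open Polynomial

private lemma monic_divX_aux {A : Type*} [CommRing A] {p : A[X]} (hp : p.Monic)
    (h : 1 ≤ p.natDegree) : p.divX.Monic := by
  have hd : p.divX.natDegree = p.natDegree - 1 := natDegree_divX_eq_natDegree_tsub_one
  unfold Monic leadingCoeff
  rw [hd, coeff_divX, Nat.sub_add_cancel h]
  exact hp

private lemma key_aux {S : Type*} [CommRing S] (R : Subring S)
    (hmul : ∀ x y : S, x ∉ R → y ∉ R → x * y ∉ R) (s : S) :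
    ∀ n : ℕ, ∀ p : R[X], p.Monic → p.natDegree = n → aeval s p = 0 → s ∈ R := by
  intro n
  induction n with
  | zero =>
    intro p hp hdeg heval
    have : p = 1 := hp.natDegree_eq_zero.mp hdeg
    rw [this, map_one] at heval
    have h0 : (1 : S) = 0 := heval
    have : s = s * 1 := (mul_one s).symm
    rw [h0, mul_zero] at this
    rw [this]; exact R.zero_mem
  | succ n ih =>
    intro p hp hdeg heval
    by_contra hs
    -- p = X * divX p + C (coeff 0)
    have hsplit : X * p.divX + C (p.coeff 0) = p := X_mul_divX_add p
    have heval2 : s * aeval s p.divX + (p.coeff 0 : S) = 0 := by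
      rw [← hsplit] at heval
      simp only [map_add, map_mul, aeval_X, aeval_C] at heval
      exact heval
    have hprod : s * aeval s p.divX ∈ R := by
      have : s * aeval s p.divX = -(p.coeff 0 : S) := by linear_combination heval2
      rw [this]; exact R.neg_mem (p.coeff 0).2
    have hq : aeval s p.divX ∈ R := by
      by_contra hq
      exact hmul s _ hs hq hprod
    -- now split by n
    rcases Nat.eq_zero_or_pos n with hn | hn
    · -- natDegree p = 1, divX has degree 0 and is monic, so divX = 1
      have h1 : p.divX.Monic := monic_divX_aux hp (by omega)
      have hd0 : p.divX.natDegree = 0 := by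
        rw [natDegree_divX_eq_natDegree_tsub_one, hdeg, hn]
      have : p.divX = 1 := h1.natDegree_eq_zero.mp hd0
      rw [this, map_one] at heval2
      have : s = -(p.coeff 0 : S) := by linear_combination heval2
      exact hs (this ▸ R.neg_mem (p.coeff 0).2)
    · -- divX is monic of degree n ≥ 1; subtract constant r and apply ih
      have h1 : p.divX.Monic := monic_divX_aux hp (by omega)
      have hd : p.divX.natDegree = n := by
        rw [natDegree_divX_eq_natDegree_tsub_one, hdeg]
        omega
      set r : R := ⟨aeval s p.divX, hq⟩ with hr
      have hq2 : (p.divX - C r).Monic := by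
        apply Monic.sub_of_left h1
        calc (C r).degree ≤ 0 := degree_C_le
        _ < p.divX.degree := by
            rw [← natDegree_pos_iff_degree_pos, hd]; exact hn
      have hdeg2 : (p.divX - C r).natDegree = n := by
        rw [natDegree_sub_C, hd]
      have heval3 : aeval s (p.divX - C r) = 0 := by
        rw [map_sub, aeval_C]
        exact sub_eq_zero.mpr rfl
      exact hs (ih _ hq2 hdeg2 heval3)

/-- If `R ⊆ S` is an extension of commutative rings such that `S \ R` is
closed under multiplication, then `R` is integrally closed in `S`. -/
theorem integrallyClosed_of_compl_mul_closed {S : Type*} [CommRing S] (R : Subring S)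
    (hmul : ∀ x y : S, x ∉ R → y ∉ R → x * y ∉ R) :
    ∀ s : S, IsIntegral R s → s ∈ R := by
  intro s hs
  obtain ⟨p, hp, heval⟩ := hs
  exact key_aux R hmul s p.natDegree p hp rfl heval
end

section
/- Let S be a commutative ring, let n > 1, and let R, B₁, …, Bₙ be subrings of S such that all the Bᵢ, except possibly two of them, are integrally closed in S. If R ⊆ B₁ ∪ ⋯ ∪ Bₙ, then R ⊆ Bᵢ for some i. -/
open Polynomial

lemma algmap_eq {S : Type*} [CommRing S] (B : Subring S) (v : S) (h : v ∈ B) :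
    (algebraMap (↥B) S) ⟨v, h⟩ = v := rfl

lemma mem_of_pow_mem' {S : Type*} [CommRing S] (B : Subring S)
    (hB : ∀ s : S, IsIntegral B s → s ∈ B) {x : S} {k : ℕ} (hk : k ≠ 0)
    (hx : x ^ k ∈ B) : x ∈ B := by
  apply hB
  refine ⟨X ^ k - C ⟨x ^ k, hx⟩, monic_X_pow_sub_C _ hk, ?_⟩
  simp [algmap_eq]

lemma mem_of_pow_sub_self_mem {S : Type*} [CommRing S] (B : Subring S)
    (hB : ∀ s : S, IsIntegral B s → s ∈ B) {x : S} {k : ℕ} (hk : 2 ≤ k)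
    (h : x ^ k - x ∈ B) : x ∈ B := by
  apply hB
  refine ⟨X ^ k - (X + C ⟨x ^ k - x, h⟩), ?_, ?_⟩
  · refine Polynomial.monic_X_pow_sub ?_
    refine lt_of_le_of_lt (Polynomial.degree_add_le _ _) ?_
    refine max_lt ?_ ?_
    · exact lt_of_le_of_lt Polynomial.degree_X_le (by exact_mod_cast hk)
    · exact lt_of_le_of_lt Polynomial.degree_C_le (by exact_mod_cast Nat.lt_of_lt_of_le two_pos hk)
  · simp [algmap_eq]

lemma key_chain {S : Type*} [CommRing S] (B : Subring S)
    (hB : ∀ s : S, IsIntegral B s → s ∈ B) {x : S} {s t : ℕ} (hst : s < t)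
    (h : x ^ 2 ^ s - x ^ 2 ^ t ∈ B) : x ∈ B := by
  have h2 : x ^ 2 ^ t = (x ^ 2 ^ s) ^ 2 ^ (t - s) := by
    rw [← pow_mul, ← pow_add, Nat.add_sub_cancel' hst.le]
  have hneg : (x ^ 2 ^ s) ^ 2 ^ (t - s) - x ^ 2 ^ s ∈ B := by
    have := B.neg_mem h
    rw [neg_sub, h2] at this
    exact this
  have hu : x ^ 2 ^ s ∈ B := by
    refine mem_of_pow_sub_self_mem B hB ?_ hneg
    calc (2:ℕ) = 2 ^ 1 := by norm_num
    _ ≤ 2 ^ (t - s) := Nat.pow_le_pow_right (by norm_num) (by omega)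
  exact mem_of_pow_mem' B hB (by positivity) hu

lemma core_lemma {S : Type*} [CommRing S] {ι : Type*} [DecidableEq ι]
    (R : Subring S) (B : ι → Subring S) (T : Finset ι)
    (hcov : (R : Set S) ⊆ ⋃ l ∈ T, (B l : Set S))
    {i j : ι} (hi : i ∈ T) (hj : j ∈ T) (hij : i ≠ j)
    (hcl : ∀ k ∈ T, k ≠ i → k ≠ j → ∀ s : S, IsIntegral (B k) s → s ∈ B k)
    {x y : S} (hxR : x ∈ R) (hyR : y ∈ R)
    (hxi : x ∈ B i) (hyi : y ∉ B i)
    (hx : ∀ l ∈ T, l ≠ i → l ≠ j → x ∉ B l) :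
    ∃ m : ℕ, x ^ 2 ^ m + y ∈ B j := by
  by_contra hc
  push_neg at hc
  have hmem : ∀ m : ℕ, ∃ l, l ∈ T ∧ x ^ 2 ^ m + y ∈ B l := by
    intro m
    have hzR : x ^ 2 ^ m + y ∈ R := R.add_mem (R.pow_mem hxR _) hyR
    have := hcov hzR
    simpa using this
  choose l hlT hlB using hmem
  have hlne_i : ∀ m, l m ≠ i := by
    intro m h
    apply hyi
    have hb := hlB m
    rw [h] at hb
    have := (B i).sub_mem hb ((B i).pow_mem hxi (2 ^ m))
    simpa using this
  have hlne_j : ∀ m, l m ≠ j := by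
    intro m h
    exact hc m (h ▸ hlB m)
  have hmaps : ∀ m ∈ Finset.range (T.card), l m ∈ (T.erase i).erase j := by
    intro m _
    exact Finset.mem_erase.mpr ⟨hlne_j m, Finset.mem_erase.mpr ⟨hlne_i m, hlT m⟩⟩
  have hcard : ((T.erase i).erase j).card < (Finset.range (T.card)).card := by
    rw [Finset.card_range, Finset.card_erase_of_mem (Finset.mem_erase.mpr ⟨hij.symm, hj⟩),
      Finset.card_erase_of_mem hi]
    have : 1 ≤ T.card := Finset.card_pos.mpr ⟨i, hi⟩
    omega
  obtain ⟨m, _, m', _, hmm', heq⟩ :=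
    Finset.exists_ne_map_eq_of_card_lt_of_maps_to hcard hmaps
  have hclosed : ∀ s : S, IsIntegral (B (l m)) s → s ∈ B (l m) :=
    hcl (l m) (hlT m) (hlne_i m) (hlne_j m)
  have hdiff : x ^ 2 ^ m - x ^ 2 ^ m' ∈ B (l m) := by
    have := (B (l m)).sub_mem (hlB m) (heq ▸ hlB m')
    have h2 : (x ^ 2 ^ m + y) - (x ^ 2 ^ m' + y) = x ^ 2 ^ m - x ^ 2 ^ m' := by ring
    rwa [h2] at this
  have hxl : x ∈ B (l m) := by
    rcases hmm'.lt_or_gt with h | h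
    · exact key_chain _ hclosed h hdiff
    · refine key_chain _ hclosed h ?_
      have := (B (l m)).neg_mem hdiff
      simpa using this
  exact hx (l m) (hlT m) (hlne_i m) (hlne_j m) hxl

/-- (Avoidance lemma) Let `R, B₁, …, Bₙ` (`n > 1`) be subrings of `S` such
that all the `Bᵢ`, except possibly two of them, are integrally closed in `S`.  If
`R ⊆ B₁ ∪ ⋯ ∪ Bₙ`, then `R ⊆ Bᵢ` for some `i`. -/
theorem subring_avoidance {S : Type*} [CommRing S] (n : ℕ) (hn : 1 < n)
    (R : Subring S) (B : Fin n → Subring S)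
    (hic : ∃ i j : Fin n, ∀ k : Fin n, k ≠ i → k ≠ j →
      ∀ s : S, IsIntegral (B k) s → s ∈ B k)
    (hsub : (R : Set S) ⊆ ⋃ i : Fin n, (B i : Set S)) :
    ∃ i : Fin n, R ≤ B i := by
  classical
  by_contra hcon
  push_neg at hcon
  obtain ⟨i₀, j₀, hic⟩ := hic
  -- minimal covering finset
  set P : ℕ → Prop := fun k => ∃ T : Finset (Fin n),
    T.card ≤ k ∧ (R : Set S) ⊆ ⋃ l ∈ T, (B l : Set S) with hP
  have hPn : ∃ k, P k := by
    refine ⟨n, Finset.univ, by simp, ?_⟩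
    intro s hs
    have := hsub hs
    simpa using this
  obtain ⟨T, hTcard, hTcov⟩ := Nat.find_spec hPn
  have hmin : ∀ l ∈ T, ¬ ((R : Set S) ⊆ ⋃ l' ∈ T.erase l, (B l' : Set S)) := by
    intro l hl hcontra
    have h1 : 1 ≤ T.card := Finset.card_pos.mpr ⟨l, hl⟩
    have hfind : 1 ≤ Nat.find hPn := by
      omega
    refine Nat.find_min hPn (m := Nat.find hPn - 1) (by omega) ?_
    exact ⟨T.erase l, by rw [Finset.card_erase_of_mem hl]; omega, hcontra⟩
  -- exclusive elements
  have hexcl : ∀ l ∈ T, ∃ a : S, a ∈ R ∧ a ∈ B l ∧ ∀ l' ∈ T, l' ≠ l → a ∉ B l' := by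
    intro l hl
    obtain ⟨a, haR, hanot⟩ := Set.not_subset.mp (hmin l hl)
    simp only [Set.mem_iUnion, not_exists] at hanot
    have haU := hTcov haR
    simp only [Set.mem_iUnion] at haU
    obtain ⟨l'', hl''T, hl''B⟩ := haU
    have hl''eq : l'' = l := by
      by_contra hne
      exact hanot l'' (Finset.mem_erase.mpr ⟨hne, hl''T⟩) hl''B
    subst hl''eq
    refine ⟨a, haR, hl''B, ?_⟩
    intro l' hl' hne
    exact fun hmem => hanot l' (Finset.mem_erase.mpr ⟨hne, hl'⟩) hmem
  -- T is nonempty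
  have hT0 : T.Nonempty := by
    rcases Finset.eq_empty_or_nonempty T with rfl | h
    · have := hTcov R.zero_mem
      simp at this
    · exact h
  -- T has at least 2 elements
  have hT2 : 2 ≤ T.card := by
    by_contra h
    push_neg at h
    obtain ⟨l, hl⟩ := hT0
    have : T = {l} := by
      apply Finset.eq_singleton_iff_unique_mem.mpr
      refine ⟨hl, ?_⟩
      intro y hy
      by_contra hne
      have := Finset.one_lt_card.mpr ⟨y, hy, l, hl, hne⟩
      omega
    apply hcon l
    intro s hs
    have hseq := hTcov hs
    rw [this] at hseq
    simpa using hseq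
  -- choose exceptional pair i j in T
  obtain ⟨i, j, hi, hj, hij, hgood⟩ :
      ∃ i j : Fin n, i ∈ T ∧ j ∈ T ∧ i ≠ j ∧
        ∀ k ∈ T, k ≠ i → k ≠ j → k ≠ i₀ ∧ k ≠ j₀ := by
    by_cases hi₀ : i₀ ∈ T
    · by_cases hj₀ : j₀ ∈ T
      · by_cases heq : i₀ = j₀
        · obtain ⟨f, hf⟩ : (T.erase i₀).Nonempty := by
            apply Finset.card_pos.mp
            rw [Finset.card_erase_of_mem hi₀]; omega
          obtain ⟨hfne, hfT⟩ := Finset.mem_erase.mp hf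
          exact ⟨i₀, f, hi₀, hfT, fun h => hfne h.symm, fun k _ hk1 _ => ⟨hk1, heq ▸ hk1⟩⟩
        · exact ⟨i₀, j₀, hi₀, hj₀, heq, fun k _ h1 h2 => ⟨h1, h2⟩⟩
      · obtain ⟨f, hf⟩ : (T.erase i₀).Nonempty := by
          apply Finset.card_pos.mp
          rw [Finset.card_erase_of_mem hi₀]; omega
        obtain ⟨hfne, hfT⟩ := Finset.mem_erase.mp hf
        exact ⟨i₀, f, hi₀, hfT, fun h => hfne h.symm,
          fun k hk hk1 _ => ⟨hk1, fun h => hj₀ (h ▸ hk)⟩⟩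
    · by_cases hj₀ : j₀ ∈ T
      · obtain ⟨f, hf⟩ : (T.erase j₀).Nonempty := by
          apply Finset.card_pos.mp
          rw [Finset.card_erase_of_mem hj₀]; omega
        obtain ⟨hfne, hfT⟩ := Finset.mem_erase.mp hf
        exact ⟨j₀, f, hj₀, hfT, fun h => hfne h.symm,
          fun k hk hk1 _ => ⟨fun h => hi₀ (h ▸ hk), hk1⟩⟩
      · obtain ⟨a, ha, b, hb, hab⟩ := Finset.one_lt_card.mp hT2
        exact ⟨a, b, ha, hb, hab,
          fun k hk _ _ => ⟨fun h => hi₀ (h ▸ hk), fun h => hj₀ (h ▸ hk)⟩⟩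
  have hcl : ∀ k ∈ T, k ≠ i → k ≠ j → ∀ s : S, IsIntegral (B k) s → s ∈ B k := by
    intro k hk h1 h2
    obtain ⟨h3, h4⟩ := hgood k hk h1 h2
    exact hic k h3 h4
  -- exclusive elements for i and j
  obtain ⟨ai, haiR, haiB, hai⟩ := hexcl i hi
  obtain ⟨aj, hajR, hajB, haj⟩ := hexcl j hj
  have hajnotin_i : aj ∉ B i := haj i hi hij
  have hainot : ∀ l ∈ T, l ≠ i → l ≠ j → ai ∉ B l := fun l hl h1 _ => hai l hl h1
  -- Step 2: find m with ai^(2^m) ∈ B j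
  obtain ⟨m, hm⟩ := core_lemma R B T hTcov hi hj hij hcl haiR hajR haiB hajnotin_i hainot
  set p := ai ^ 2 ^ m with hp
  have hpj : p ∈ B j := by
    have := (B j).sub_mem hm hajB
    simpa using this
  have hpi : p ∈ B i := (B i).pow_mem haiB _
  have hpR : p ∈ R := R.pow_mem haiR _
  -- c = ai + aj
  set c := ai + aj with hcdef
  have hcR : c ∈ R := R.add_mem haiR hajR
  have hci : c ∉ B i := by
    intro h
    exact hajnotin_i (by simpa [hcdef] using (B i).sub_mem h haiB)
  have hcj : c ∉ B j := by
    intro h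
    exact hai j hj (Ne.symm hij) (by simpa [hcdef] using (B j).sub_mem h hajB)
  -- p avoids all closed members
  have hpnot : ∀ l ∈ T, l ≠ i → l ≠ j → p ∉ B l := by
    intro l hl h1 h2 hpl
    have hai_in : ai ∈ B l :=
      mem_of_pow_mem' (B l) (hcl l hl h1 h2) (by positivity) hpl
    exact hai l hl h1 hai_in
  -- Step 3
  obtain ⟨t, ht⟩ := core_lemma R B T hTcov hi hj hij hcl hpR hcR hpi hci hpnot
  apply hcj
  have := (B j).sub_mem ht ((B j).pow_mem hpj (2 ^ t))
  simpa using this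
end

section
/- Let R ⊆ S be a Prüfer extension of commutative rings and let U, B₁, …, Bₙ be intermediate rings with R ⊆ U, Bᵢ ⊆ S, such that B₁ ∩ ⋯ ∩ Bₙ ⊆ U, the extension U ⊆ S is Prüfer, and the complement S \ U is closed under multiplication (i.e., U ⊆ S is Prüfer–Manis). Then Bᵢ ⊆ U for some i. -/
universe u v

section PruferAux

open TensorProduct

variable {S : Type u} [CommRing S]

set_option maxHeartbeats 1000000 in
set_option synthInstance.maxHeartbeats 400000 in
private lemma wrep (R : Subring S) (hR : R.subtype.IsPrufer)
    (D : Subring S) (hRD : R ≤ D) (x : S) :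
    ∃ (F : Finset S) (e : S → S) (k : S → ℕ),
      (∀ z ∈ F, e z ∈ D ∧ e z * x ∈ D) ∧ (∑ z ∈ F, e z * x ^ k z) = 1 := by
  classical
  set T : Subring S := Subring.closure (↑D ∪ {x}) with hT
  have hDT : D ≤ T := fun z hz => Subring.subset_closure (Or.inl hz)
  have hxT : x ∈ T := Subring.subset_closure (Or.inr rfl)
  have hRT : R ≤ T := le_trans hRD hDT
  have hT' : R.subtype.range ≤ T := by rw [R.range_subtype]; exact hRT
  obtain ⟨hflat, hepi⟩ := hR T hT'
  set f : ↥R →+* ↥T := R.subtype.codRestrict T fun a => hT' (R.subtype.mem_range_self a) with hf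
  have hfc : ∀ r : ↥R, (f r : S) = (r : S) := fun r => rfl
  letI : Algebra ↥R ↥T := f.toAlgebra
  haveI : Module.Flat ↥R ↥T := hflat
  set gens : Set S := {z | ∃ (e : S) (k : ℕ), e ∈ D ∧ e * x ∈ D ∧ z = e * x ^ k} with hgens
  set J : Submodule ↥D S := Submodule.span ↥D gens with hJ
  -- J is stable under multiplication by x
  have Jx : ∀ z ∈ J, z * x ∈ J := by
    intro z hz
    induction hz using Submodule.span_induction with
    | mem w hw =>
      obtain ⟨e, k, he, hex, rfl⟩ := hw
      exact Submodule.subset_span ⟨e, k + 1, he, hex, by ring⟩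
    | zero => simp only [zero_mul]; exact J.zero_mem
    | add a b _ _ ha hb => rw [add_mul]; exact J.add_mem ha hb
    | smul d a _ ha =>
      have h : (d • a) * x = d • (a * x) := by
        show ((d:S) * a) * x = (d:S) * (a * x); ring
      rw [h]; exact J.smul_mem d ha
  have Jxpow : ∀ z ∈ J, ∀ k : ℕ, z * x ^ k ∈ J := by
    intro z hz k
    induction k with
    | zero => simpa using hz
    | succ m ih => rw [pow_succ, ← mul_assoc]; exact Jx _ ih
  -- elements multiplying all conductor elements into J
  have Vmul : ∀ z : S, (∀ e : S, e ∈ D → e * x ∈ D → e * z ∈ J) → ∀ j ∈ J, z * j ∈ J := by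
    intro z hzV j hj
    induction hj using Submodule.span_induction with
    | mem w hw =>
      obtain ⟨e, k, he, hex, rfl⟩ := hw
      have h1 : e * z ∈ J := hzV e he hex
      have h : z * (e * x ^ k) = (e * z) * x ^ k := by ring
      rw [h]; exact Jxpow _ h1 k
    | zero => simp only [mul_zero]; exact J.zero_mem
    | add a b _ _ ha hb => rw [mul_add]; exact J.add_mem ha hb
    | smul d a _ ha =>
      have h : z * (d • a) = d • (z * a) := by
        show z * ((d:S) * a) = (d:S) * (z * a); ring
      rw [h]; exact J.smul_mem d ha
  set V : Subring S :=
    { carrier := {z | ∀ e : S, e ∈ D → e * x ∈ D → e * z ∈ J},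
      one_mem' := by
        intro e he hex
        rw [mul_one]
        exact Submodule.subset_span ⟨e, 0, he, hex, by ring⟩
      mul_mem' := by
        intro z w hz hw e he hex
        have h1 : e * w ∈ J := hw e he hex
        have h : e * (z * w) = z * (e * w) := by ring
        rw [h]
        exact Vmul z hz _ h1
      zero_mem' := by intro e he hex; rw [mul_zero]; exact J.zero_mem
      add_mem' := by
        intro z w hz hw e he hex
        rw [mul_add]; exact J.add_mem (hz e he hex) (hw e he hex)
      neg_mem' := by
        intro z hz e he hex
        rw [mul_neg]; exact J.neg_mem (hz e he hex) } with hV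
  have hDV : (↑D ∪ {x} : Set S) ⊆ ↑V := by
    rintro z (hz | rfl)
    · intro e he hex
      have hmem : e * z * x ∈ D := by
        have h : e * z * x = (e * x) * z := by ring
        rw [h]; exact D.mul_mem hex hz
      exact Submodule.subset_span ⟨e * z, 0, D.mul_mem he hz, hmem, by ring⟩
    · intro e he hex
      exact Submodule.subset_span ⟨e, 1, he, hex, by ring⟩
  have hTV : T ≤ V := Subring.closure_le.2 hDV
  have hcond : ∀ (τ : S), τ ∈ T → ∀ e : S, e ∈ D → e * x ∈ D → e * τ ∈ J :=
    fun τ hτ => hTV hτ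
  -- now the tensor argument
  have hsmulT : ∀ (r : ↥R) (τ : ↥T), ((r • τ : ↥T) : S) = (r : S) * (τ : S) := by
    intro r τ
    show ((f r * τ : ↥T) : S) = _
    push_cast [hfc]
    ring
  have hsmulS : ∀ (r : ↥R) (s : S), r • s = (r : S) * s := fun r s => rfl
  letI : Algebra ↥R ↥D := (Subring.inclusion hRD).toAlgebra
  have hsmulD : ∀ (r : ↥R) (d : ↥D), ((r • d : ↥D) : S) = (r : S) * (d : S) := by
    intro r d
    show ((Subring.inclusion hRD r * d : ↥D) : S) = _
    push_cast
    rfl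
  set g : (↥D × ↥D) →ₗ[↥R] S :=
    { toFun := fun p => (p.1 : S) + (p.2 : S) * x
      map_add' := by
        intro p q
        show ((p.1 + q.1 : ↥D) : S) + ((p.2 + q.2 : ↥D) : S) * x = _
        push_cast; ring
      map_smul' := by
        intro r p
        show ((r • p.1 : ↥D) : S) + ((r • p.2 : ↥D) : S) * x = r • ((p.1 : S) + (p.2 : S) * x)
        rw [hsmulD, hsmulD, hsmulS]; ring } with hg
  set lcoe : ↥T →ₗ[↥R] S :=
    { toFun := fun τ => (τ : S)
      map_add' := by intro a b; push_cast; ring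
      map_smul' := by
        intro r τ
        show ((r • τ : ↥T) : S) = r • (τ : S)
        rw [hsmulT]; exact (hsmulS r (τ : S)).symm } with hlcoe
  have hxtensor : (⟨x, hxT⟩ : ↥T) ⊗ₜ[↥R] (1 : ↥T) = (1 : ↥T) ⊗ₜ[↥R] (⟨x, hxT⟩ : ↥T) := by
    have h1 : (Algebra.TensorProduct.includeLeftRingHom : ↥T →+* ↥T ⊗[↥R] ↥T).comp f
        = (Algebra.TensorProduct.includeRight.toRingHom : ↥T →+* ↥T ⊗[↥R] ↥T).comp f := by
      ext r
      show (f r) ⊗ₜ[↥R] (1:↥T) = (1:↥T) ⊗ₜ[↥R] (f r)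
      have h : f r = algebraMap ↥R ↥T r := rfl
      rw [h, Algebra.algebraMap_eq_smul_one, ← TensorProduct.smul_tmul', TensorProduct.tmul_smul]
    have h2 := hepi _ _ h1
    exact congrArg (fun φ => φ (⟨x, hxT⟩ : ↥T)) h2
  have hx0 : (⟨x, hxT⟩ : ↥T) ⊗ₜ[↥R] (1 : S) - (1 : ↥T) ⊗ₜ[↥R] x = 0 := by
    have h3 := congrArg (LinearMap.lTensor ↥T lcoe) hxtensor
    rw [LinearMap.lTensor_tmul, LinearMap.lTensor_tmul] at h3
    have c1 : lcoe (1 : ↥T) = (1 : S) := rfl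
    have c2 : lcoe (⟨x, hxT⟩ : ↥T) = x := rfl
    rw [c1, c2] at h3
    rw [h3, sub_self]
  set ξ : ↥T ⊗[↥R] (↥D × ↥D) :=
    (⟨x, hxT⟩ : ↥T) ⊗ₜ[↥R] ((1 : ↥D), (0 : ↥D)) - (1 : ↥T) ⊗ₜ[↥R] ((0 : ↥D), (1 : ↥D)) with hξ
  have hgξ : (g.lTensor ↥T) ξ = 0 := by
    rw [hξ, map_sub, LinearMap.lTensor_tmul, LinearMap.lTensor_tmul]
    have c1 : g ((1 : ↥D), (0 : ↥D)) = (1 : S) := by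
      show ((1:↥D):S) + ((0:↥D):S) * x = 1
      push_cast; ring
    have c2 : g ((0 : ↥D), (1 : ↥D)) = x := by
      show ((0:↥D):S) + ((1:↥D):S) * x = x
      push_cast; ring
    rw [c1, c2]
    exact hx0
  have hexact := Module.Flat.lTensor_exact (M := ↥T) (LinearMap.exact_subtype_ker_map g)
  obtain ⟨η, hη⟩ := (hexact ξ).mp hgξ
  set Ψb : ↥T →ₗ[↥R] (↥D × ↥D) →ₗ[↥R] S := LinearMap.mk₂ ↥R (fun τ p => (τ : S) * (p.2 : S))
    (by intro a b p; push_cast; ring)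
    (by intro r a p
        show ((r • a : ↥T) : S) * (p.2 : S) = r • ((a : S) * (p.2 : S))
        rw [hsmulT, hsmulS]; ring)
    (by intro a p q; show (a:S) * ((p.2 + q.2 : ↥D):S) = _; push_cast; ring)
    (by intro r a p; show (a:S) * ((r • p.2 : ↥D):S) = r • ((a:S) * (p.2:S)); rw [hsmulD, hsmulS]; ring)
    with hΨb
  set Ψ : ↥T ⊗[↥R] (↥D × ↥D) →ₗ[↥R] S := TensorProduct.lift Ψb with hΨ
  have hΨξ : Ψ ξ = -1 := by
    rw [hξ, map_sub, hΨ, TensorProduct.lift.tmul, TensorProduct.lift.tmul, hΨb]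
    show x * ((0:↥D):S) - ((1:↥T):S) * ((1:↥D):S) = -1
    push_cast; ring
  have hmem : ∀ ζ : ↥T ⊗[↥R] (LinearMap.ker g),
      Ψ ((LinearMap.lTensor ↥T (LinearMap.ker g).subtype) ζ) ∈ J := by
    intro ζ
    induction ζ using TensorProduct.induction_on with
    | zero => rw [map_zero, map_zero]; exact J.zero_mem
    | tmul τ κ =>
      rw [LinearMap.lTensor_tmul, hΨ, TensorProduct.lift.tmul, hΨb]
      show (τ : S) * (((κ : ↥D × ↥D).2 : ↥D) : S) ∈ J
      have hκ : ((κ : ↥D × ↥D).1 : S) + ((κ : ↥D × ↥D).2 : S) * x = 0 := by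
        have h := κ.2
        rw [LinearMap.mem_ker] at h
        exact h
      have hdx : ((κ : ↥D × ↥D).2 : S) * x ∈ D := by
        have h4 : ((κ : ↥D × ↥D).2 : S) * x = -((κ : ↥D × ↥D).1 : S) := by linear_combination hκ
        rw [h4]; exact D.neg_mem (κ : ↥D × ↥D).1.2
      have h5 := hcond (τ : S) τ.2 ((κ : ↥D × ↥D).2 : S) (κ : ↥D × ↥D).2.2 hdx
      have h6 : (τ : S) * (((κ : ↥D × ↥D).2 : ↥D) : S) = ((κ : ↥D × ↥D).2 : S) * (τ : S) := by ring
      rw [h6]; exact h5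
    | add a b ha hb => rw [map_add, map_add]; exact J.add_mem ha hb
  have hm1 : (-1 : S) ∈ J := by
    rw [← hΨξ, ← hη]
    exact hmem η
  have h1J : (1 : S) ∈ J := by
    have h : (1 : S) = -(-1 : S) := by ring
    rw [h]
    exact J.neg_mem hm1
  -- extract a finite representation
  rw [hJ] at h1J
  obtain ⟨c, hsupp, hsum⟩ := Submodule.mem_span_set.mp h1J
  have hgen : ∀ z ∈ c.support, ∃ (d : S) (km : ℕ), d ∈ D ∧ d * x ∈ D ∧ z = d * x ^ km := by
    intro z hz
    have := hsupp hz
    rw [hgens] at this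
    exact this
  choose! d km hd hdx hzeq using hgen
  refine ⟨c.support, fun z => (c z : S) * d z, km, ?_, ?_⟩
  · intro z hz
    refine ⟨D.mul_mem (c z).2 (hd z hz), ?_⟩
    have h : (c z : S) * d z * x = (c z : S) * (d z * x) := by ring
    rw [h]; exact D.mul_mem (c z).2 (hdx z hz)
  · rw [Finsupp.sum] at hsum
    calc ∑ z ∈ c.support, (c z : S) * d z * x ^ km z
        = ∑ z ∈ c.support, c z • z := by
          refine Finset.sum_congr rfl (fun z hz => ?_)
          have h' : (c z : S) * (d z * x ^ km z) = (c z : S) * d z * x ^ km z := by ring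
          rw [← h', ← hzeq z hz]
          rfl
      _ = 1 := hsum

set_option maxHeartbeats 1000000 in
private lemma core (R : Subring S) (hR : R.subtype.IsPrufer) (U : Subring S)
    (hmanis : ∀ x y : S, x ∉ U → y ∉ U → x * y ∉ U)
    (A B : Subring S) (hA : R ≤ A) (hB : R ≤ B)
    (hAB : ∀ z : S, z ∈ A → z ∈ B → z ∈ U)
    (a b : S) (ha : a ∈ A) (hb : b ∈ B) (haU : a ∉ U) (hbU : b ∉ U)
    (hch : ∀ z : S, z * a ∈ U → z * b ∈ U) : False := by
  classical
  set D : Subring S := A ⊓ B with hD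
  have hRD : R ≤ D := le_inf hA hB
  have hDA : D ≤ A := inf_le_left
  have hDB : D ≤ B := inf_le_right
  have hDU : ∀ z : S, z ∈ D → z ∈ U := fun z hz => hAB z (hDA hz) (hDB hz)
  -- step (ii): invertibility-type data for a over D
  obtain ⟨F₁, e₁, k₁, he₁, hsum₁⟩ := wrep R hR D hRD a
  set u : S := ∑ z ∈ F₁.filter (fun z => k₁ z = 0), e₁ z with hu
  set w : S := ∑ z ∈ F₁.filter (fun z => ¬ k₁ z = 0), e₁ z * a ^ (k₁ z - 1) with hw
  have huD : u ∈ D := D.sum_mem (fun z hz => (he₁ z (Finset.mem_filter.mp hz).1).1)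
  have huaU : u * a ∈ D := by
    rw [hu, Finset.sum_mul]
    exact D.sum_mem (fun z hz => (he₁ z (Finset.mem_filter.mp hz).1).2)
  have hwa : w * a = 1 - u := by
    have hsplit := Finset.sum_filter_add_sum_filter_not F₁ (fun z => k₁ z = 0)
      (fun z => e₁ z * a ^ k₁ z)
    rw [hsum₁] at hsplit
    have h1 : ∑ z ∈ F₁.filter (fun z => k₁ z = 0), e₁ z * a ^ k₁ z = u := by
      rw [hu]
      refine Finset.sum_congr rfl fun z hz => ?_
      rw [(Finset.mem_filter.mp hz).2, pow_zero, mul_one]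
    have h2 : w * a = ∑ z ∈ F₁.filter (fun z => ¬ k₁ z = 0), e₁ z * a ^ k₁ z := by
      rw [hw, Finset.sum_mul]
      refine Finset.sum_congr rfl fun z hz => ?_
      have hk : k₁ z ≠ 0 := (Finset.mem_filter.mp hz).2
      rw [mul_assoc, ← pow_succ, Nat.sub_add_cancel (Nat.one_le_iff_ne_zero.mpr hk)]
    rw [h2]
    linear_combination hsplit - h1
  set sa : S := 1 - u with hsa
  have hsaD : sa ∈ D := D.sub_mem D.one_mem huD
  have hwU : w ∈ U := by
    by_contra hwU'
    exact (hmanis w a hwU' haU) (by rw [hwa]; exact hDU _ hsaD)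
  set t : S := w * b with ht
  -- the maximal ideal q
  set Ib : Ideal ↥D :=
    { carrier := {d : ↥D | (d : S) * b ∈ U},
      add_mem' := by
        intro p q hp hq
        show ((p + q : ↥D) : S) * b ∈ U
        push_cast
        rw [add_mul]
        exact U.add_mem hp hq
      zero_mem' := by
        show ((0 : ↥D) : S) * b ∈ U
        push_cast
        rw [zero_mul]
        exact U.zero_mem
      smul_mem' := by
        intro c p hp
        show ((c * p : ↥D) : S) * b ∈ U
        push_cast
        rw [mul_assoc]
        exact U.mul_mem (hDU _ c.2) hp } with hIb
  have hIbne : Ib ≠ ⊤ := by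
    intro hcon
    have h1 : (1 : ↥D) ∈ Ib := by rw [hcon]; trivial
    have h2 : ((1 : ↥D) : S) * b ∈ U := h1
    rw [OneMemClass.coe_one, one_mul] at h2
    exact hbU h2
  obtain ⟨q, hqmax, hIbq⟩ := Ideal.exists_le_maximal Ib hIbne
  -- the predicate "lies in q"
  set qmem : S → Prop := fun z => ∃ hz : z ∈ D, (⟨z, hz⟩ : ↥D) ∈ q with hqmem
  have q_D : ∀ z : S, qmem z → z ∈ D := fun z hz => hz.1
  have q_add : ∀ z z' : S, qmem z → qmem z' → qmem (z + z') := by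
    rintro z z' ⟨hz, hq1⟩ ⟨hz', hq2⟩
    exact ⟨D.add_mem hz hz', q.add_mem hq1 hq2⟩
  have q_mull : ∀ z z' : S, z ∈ D → qmem z' → qmem (z * z') := by
    rintro z z' hz ⟨hz', hq2⟩
    refine ⟨D.mul_mem hz hz', ?_⟩
    have : (⟨z * z', D.mul_mem hz hz'⟩ : ↥D) = (⟨z, hz⟩ : ↥D) * ⟨z', hz'⟩ := rfl
    rw [this]
    exact q.mul_mem_left _ hq2
  have q_one : ¬ qmem 1 := by
    rintro ⟨h1, hq1⟩
    have : (⟨(1:S), h1⟩ : ↥D) = 1 := rfl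
    rw [this] at hq1
    exact hqmax.ne_top (q.eq_top_of_isUnit_mem hq1 isUnit_one)
  have q_zero : qmem 0 := ⟨D.zero_mem, by
    have : (⟨(0:S), D.zero_mem⟩ : ↥D) = 0 := rfl
    rw [this]; exact q.zero_mem⟩
  have q_prime : ∀ z z' : S, z ∈ D → z' ∈ D → qmem (z * z') → ¬ qmem z' → qmem z := by
    intro z z' hz hz' hzz' hnz'
    haveI := hqmax.isPrime
    obtain ⟨hmem, hq⟩ := hzz'
    have : (⟨z * z', hmem⟩ : ↥D) = (⟨z, hz⟩ : ↥D) * ⟨z', hz'⟩ := rfl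
    rw [this] at hq
    rcases Ideal.IsPrime.mem_or_mem ‹q.IsPrime› hq with h | h
    · exact ⟨hz, h⟩
    · exact absurd ⟨hz', h⟩ hnz'
  have q_sum : ∀ (F : Finset S) (g : S → S), (∀ z ∈ F, qmem (g z)) → qmem (∑ z ∈ F, g z) := by
    intro F g hF
    induction F using Finset.induction_on with
    | empty => simpa using q_zero
    | insert _ _ hx ih =>
      rw [Finset.sum_insert hx]
      exact q_add _ _ (hF _ (Finset.mem_insert_self _ _))
        (ih fun z hz => hF z (Finset.mem_insert_of_mem hz))
  -- conductors towards a and b land in q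
  have hIb' : ∀ z : S, z ∈ D → z * b ∈ U → qmem z := by
    intro z hz hzb
    exact ⟨hz, hIbq hzb⟩
  have hIa : ∀ z : S, z ∈ D → z * a ∈ U → qmem z := by
    intro z hz hza
    exact hIb' z hz (hch z hza)
  have hsanq : ¬ qmem sa := by
    intro hcon
    have h1 : qmem u := hIa u huD (hDU _ huaU)
    have h2 : qmem 1 := by
      have : (1:S) = u + sa := by rw [hsa]; ring
      rw [this]
      exact q_add _ _ h1 hcon
    exact q_one h2
  -- LOSE: the conductor of t lies entirely in q
  have hlose : ∀ f : S, f ∈ D → f * t ∈ D → qmem f ∧ qmem (f * t) := by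
    intro f hf hft
    have heq : (f * t) * a = (f * sa) * b := by rw [ht, ← hwa]; ring
    have hζA : (f * t) * a ∈ A := A.mul_mem (hDA hft) ha
    have hζB : (f * t) * a ∈ B := by
      rw [heq]
      exact B.mul_mem (hDB (D.mul_mem hf hsaD)) hb
    have hζU : (f * t) * a ∈ U := hAB _ hζA hζB
    have h1 : qmem (f * t) := hIa _ hft hζU
    have h2 : qmem (f * sa) := hIb' _ (D.mul_mem hf hsaD) (by rw [← heq]; exact hζU)
    exact ⟨q_prime f sa hf hsaD h2 hsanq, h1⟩
  -- Step A : wrep at t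
  obtain ⟨F₂, e₂, k₂, he₂, hsum₂⟩ := wrep R hR D hRD t
  set u₂ : S := ∑ z ∈ F₂.filter (fun z => k₂ z = 0), e₂ z with hu₂
  set w₁ : S := ∑ z ∈ F₂.filter (fun z => ¬ k₂ z = 0), e₂ z * t ^ (k₂ z - 1) with hw₁
  have hu₂q : qmem u₂ :=
    q_sum _ _ (fun z hz => (hlose _ (he₂ z (Finset.mem_filter.mp hz).1).1
      (he₂ z (Finset.mem_filter.mp hz).1).2).1)
  have hw₁t : w₁ * t = 1 - u₂ := by
    have hsplit := Finset.sum_filter_add_sum_filter_not F₂ (fun z => k₂ z = 0)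
      (fun z => e₂ z * t ^ k₂ z)
    rw [hsum₂] at hsplit
    have h1 : ∑ z ∈ F₂.filter (fun z => k₂ z = 0), e₂ z * t ^ k₂ z = u₂ := by
      rw [hu₂]
      refine Finset.sum_congr rfl fun z hz => ?_
      rw [(Finset.mem_filter.mp hz).2, pow_zero, mul_one]
    have h2 : w₁ * t = ∑ z ∈ F₂.filter (fun z => ¬ k₂ z = 0), e₂ z * t ^ k₂ z := by
      rw [hw₁, Finset.sum_mul]
      refine Finset.sum_congr rfl fun z hz => ?_
      have hk : k₂ z ≠ 0 := (Finset.mem_filter.mp hz).2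
      rw [mul_assoc, ← pow_succ, Nat.sub_add_cancel (Nat.one_le_iff_ne_zero.mpr hk)]
    rw [h2]
    linear_combination hsplit - h1
  set s₀ : S := 1 - u₂ with hs₀
  have hs₀D : s₀ ∈ D := D.sub_mem D.one_mem (q_D _ hu₂q)
  have hs₀nq : ¬ qmem s₀ := by
    intro hcon
    have h2 : qmem 1 := by
      have h : (1:S) = u₂ + s₀ := by rw [hs₀]; ring
      rw [h]; exact q_add _ _ hu₂q hcon
    exact q_one h2
  -- Step B : conductor of w₁ lies in q
  have hBstep : ∀ f : S, f ∈ D → f * w₁ ∈ D → qmem f := by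
    intro f hf hfw
    have h1 : (f * w₁) * t = f * s₀ := by rw [mul_assoc, hw₁t, hs₀]
    have h3 := (hlose (f * w₁) hfw (by rw [h1]; exact D.mul_mem hf hs₀D)).2
    rw [h1] at h3
    exact q_prime f s₀ hf hs₀D h3 hs₀nq
  -- Step C : wrep at w₁, get almost-integral relation for t
  obtain ⟨F₃, e₃, k₃, he₃, hsum₃⟩ := wrep R hR D hRD w₁
  have he₃q : ∀ z ∈ F₃, qmem (e₃ z) := fun z hz => hBstep _ (he₃ z hz).1 (he₃ z hz).2
  set N : ℕ := F₃.sup k₃ with hN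
  by_cases hN0 : N = 0
  · have hq1 : qmem 1 := by
      rw [← hsum₃]
      refine q_sum _ _ fun z hz => ?_
      have hk : k₃ z = 0 :=
        Nat.eq_zero_of_le_zero (hN0 ▸ (hN ▸ Finset.le_sup hz))
      rw [hk, pow_zero, mul_one]
      exact he₃q z hz
    exact q_one hq1
  have hNpos : 0 < N := Nat.pos_of_ne_zero hN0
  have hkle : ∀ z ∈ F₃, k₃ z ≤ N := fun z hz => hN ▸ Finset.le_sup hz
  have hTN : t ^ N = ∑ z ∈ F₃, e₃ z * s₀ ^ k₃ z * t ^ (N - k₃ z) := by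
    calc t ^ N = (∑ z ∈ F₃, e₃ z * w₁ ^ k₃ z) * t ^ N := by rw [hsum₃, one_mul]
      _ = ∑ z ∈ F₃, e₃ z * s₀ ^ k₃ z * t ^ (N - k₃ z) := by
          rw [Finset.sum_mul]
          refine Finset.sum_congr rfl fun z hz => ?_
          have h1 : t ^ N = t ^ k₃ z * t ^ (N - k₃ z) := by
            rw [← pow_add, Nat.add_sub_cancel' (hkle z hz)]
          have h2 : s₀ ^ k₃ z = w₁ ^ k₃ z * t ^ k₃ z := by rw [← mul_pow, hw₁t]
          rw [h1, h2]
          ring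
  set s₁ : S := 1 - ∑ z ∈ F₃.filter (fun z => k₃ z = 0), e₃ z with hs₁
  have hsum₃0 : qmem (∑ z ∈ F₃.filter (fun z => k₃ z = 0), e₃ z) :=
    q_sum _ _ (fun z hz => he₃q z (Finset.mem_filter.mp hz).1)
  have hs₁D : s₁ ∈ D := D.sub_mem D.one_mem (q_D _ hsum₃0)
  have hs₁nq : ¬ qmem s₁ := by
    intro hcon
    have h2 : qmem 1 := by
      have h : (1:S) = (∑ z ∈ F₃.filter (fun z => k₃ z = 0), e₃ z) + s₁ := by rw [hs₁]; ring
      rw [h]; exact q_add _ _ hsum₃0 hcon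
    exact q_one h2
  have hs₁tN : s₁ * t ^ N
      = ∑ z ∈ F₃.filter (fun z => ¬ k₃ z = 0), e₃ z * s₀ ^ k₃ z * t ^ (N - k₃ z) := by
    have hsplit := Finset.sum_filter_add_sum_filter_not F₃ (fun z => k₃ z = 0)
      (fun z => e₃ z * s₀ ^ k₃ z * t ^ (N - k₃ z))
    rw [← hTN] at hsplit
    have h1 : ∑ z ∈ F₃.filter (fun z => k₃ z = 0), e₃ z * s₀ ^ k₃ z * t ^ (N - k₃ z)
        = (∑ z ∈ F₃.filter (fun z => k₃ z = 0), e₃ z) * t ^ N := by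
      rw [Finset.sum_mul]
      refine Finset.sum_congr rfl fun z hz => ?_
      rw [(Finset.mem_filter.mp hz).2]
      rw [pow_zero, Nat.sub_zero, mul_one]
    rw [h1] at hsplit
    rw [hs₁]
    linear_combination hsplit.symm
  -- Step D : θ is almost integral with q-coefficients
  set θ : S := s₁ * t with hθ
  have hθN : θ ^ N = ∑ z ∈ F₃.filter (fun z => ¬ k₃ z = 0),
      (e₃ z * (s₀ ^ k₃ z * s₁ ^ (k₃ z - 1))) * θ ^ (N - k₃ z) := by
    have h0 : θ ^ N = s₁ ^ (N - 1) * (s₁ * t ^ N) := by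
      rw [hθ, mul_pow, ← mul_assoc, ← pow_succ]
      rw [Nat.sub_add_cancel hNpos]
    rw [h0, hs₁tN, Finset.mul_sum]
    refine Finset.sum_congr rfl fun z hz => ?_
    have hk : k₃ z ≠ 0 := (Finset.mem_filter.mp hz).2
    have hkpos : 0 < k₃ z := Nat.pos_of_ne_zero hk
    have hkN : k₃ z ≤ N := hkle z (Finset.mem_filter.mp hz).1
    have hexp : N - 1 = (k₃ z - 1) + (N - k₃ z) := by omega
    have hsplit : s₁ ^ (N - 1) = s₁ ^ (k₃ z - 1) * s₁ ^ (N - k₃ z) := by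
      rw [← pow_add, ← hexp]
    have hθpow : θ ^ (N - k₃ z) = s₁ ^ (N - k₃ z) * t ^ (N - k₃ z) := by rw [hθ, mul_pow]
    rw [hsplit, hθpow]
    ring
  -- Step E : conductor of θ lies in q, and the Nakayama contradiction
  have hloseθ : ∀ f : S, f ∈ D → f * θ ∈ D → qmem f := by
    intro f hf hfθ
    have h1 : f * θ = (f * s₁) * t := by rw [hθ]; ring
    have h2 := (hlose (f * s₁) (D.mul_mem hf hs₁D) (by rw [← h1]; exact hfθ)).1
    exact q_prime f s₁ hf hs₁D h2 hs₁nq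
  obtain ⟨F₄, e₄, k₄, he₄, hsum₄⟩ := wrep R hR D hRD θ
  have he₄q : ∀ z ∈ F₄, qmem (e₄ z) := fun z hz => hloseθ _ (he₄ z hz).1 (he₄ z hz).2
  set M : Submodule ↥D S := Submodule.span ↥D (Set.range fun j : Fin N => θ ^ (j : ℕ)) with hM
  have h1M : (1 : S) ∈ M := by
    rw [hM]
    exact Submodule.subset_span ⟨⟨0, hNpos⟩, by simp⟩
  have hθM : ∀ z ∈ M, z * θ ∈ M := by
    intro z hz
    rw [hM] at hz ⊢
    induction hz using Submodule.span_induction with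
    | mem v hv =>
      obtain ⟨j, rfl⟩ := hv
      by_cases hj : (j : ℕ) + 1 < N
      · rw [← pow_succ]
        exact Submodule.subset_span ⟨⟨(j:ℕ)+1, hj⟩, rfl⟩
      · have hjN : (j : ℕ) + 1 = N := by omega
        rw [← pow_succ, hjN, hθN]
        refine Submodule.sum_mem _ fun z hz => ?_
        have hcD : e₃ z * (s₀ ^ k₃ z * s₁ ^ (k₃ z - 1)) ∈ D :=
          D.mul_mem (he₃ z (Finset.mem_filter.mp hz).1).1
            (D.mul_mem (D.pow_mem hs₀D _) (D.pow_mem hs₁D _))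
        have hkx : k₃ z ≠ 0 := (Finset.mem_filter.mp hz).2
        have hlt : N - k₃ z < N := by
          have := Nat.pos_of_ne_zero hkx
          omega
        have hgen : θ ^ (N - k₃ z) ∈ Submodule.span ↥D (Set.range fun j : Fin N => θ ^ (j : ℕ)) :=
          Submodule.subset_span ⟨⟨N - k₃ z, hlt⟩, rfl⟩
        have := Submodule.smul_mem _ (⟨_, hcD⟩ : ↥D) hgen
        exact this
    | zero => rw [zero_mul]; exact Submodule.zero_mem _
    | add v v' _ _ hv hv' => rw [add_mul]; exact Submodule.add_mem _ hv hv'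
    | smul d v _ hv =>
      have h : (d • v) * θ = d • (v * θ) := by
        show ((d : S) * v) * θ = (d : S) * (v * θ); ring
      rw [h]
      exact Submodule.smul_mem _ _ hv
  have hzθpow : ∀ z ∈ M, ∀ j : ℕ, z * θ ^ j ∈ M := by
    intro z hz j
    induction j with
    | zero => simpa using hz
    | succ m ih => rw [pow_succ, ← mul_assoc]; exact hθM _ ih
  have hMle : M ≤ q • M := by
    intro z hz
    have hrep : z = ∑ v ∈ F₄, e₄ v * (z * θ ^ k₄ v) := by
      calc z = z * ∑ v ∈ F₄, e₄ v * θ ^ k₄ v := by rw [hsum₄, mul_one]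
        _ = ∑ v ∈ F₄, e₄ v * (z * θ ^ k₄ v) := by
              rw [Finset.mul_sum]
              exact Finset.sum_congr rfl fun v hv => by ring
    rw [hrep]
    refine Submodule.sum_mem _ fun v hv => ?_
    obtain ⟨hvD, hvq⟩ := he₄q v hv
    have hmem : z * θ ^ k₄ v ∈ M := hzθpow z hz _
    have := Submodule.smul_mem_smul hvq hmem
    exact this
  have hfg : M.FG := Submodule.fg_span (Set.finite_range _)
  obtain ⟨r, hr1, hr0⟩ :=
    Submodule.exists_sub_one_mem_and_smul_eq_zero_of_fg_of_le_smul q M hfg hMle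
  have hrz : (r : S) = 0 := by
    have h := hr0 1 h1M
    have h' : (r : S) * 1 = 0 := h
    rw [mul_one] at h'
    exact h'
  have hr00 : r = 0 := Subtype.ext hrz
  rw [hr00] at hr1
  have hneg1 : (-1 : ↥D) ∈ q := by simpa using hr1
  have h1q : (1 : ↥D) ∈ q := by
    have := q.neg_mem hneg1
    simpa using this
  exact hqmax.ne_top (q.eq_top_of_isUnit_mem h1q isUnit_one)

private lemma chainlem (U : Subring S) (hmanis : ∀ x y : S, x ∉ U → y ∉ U → x * y ∉ U)
    (x y : S) (hx : x ∉ U) (hy : y ∉ U) :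
    (∀ z : S, z * x ∈ U → z * y ∈ U) ∨ (∀ z : S, z * y ∈ U → z * x ∈ U) := by
  by_contra hcon
  push_neg at hcon
  obtain ⟨⟨z, hzx, hzy⟩, ⟨z', hz'y, hz'x⟩⟩ := hcon
  have h1 : (z * y) * (z' * x) ∉ U := hmanis _ _ hzy hz'x
  have h2 : (z * y) * (z' * x) = (z * x) * (z' * y) := by ring
  exact h1 (h2 ▸ U.mul_mem hzx hz'y)

private lemma lem2 (R : Subring S) (hR : R.subtype.IsPrufer) (U : Subring S)
    (hmanis : ∀ x y : S, x ∉ U → y ∉ U → x * y ∉ U)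
    (A B : Subring S) (hA : R ≤ A) (hB : R ≤ B)
    (hAB : ∀ z : S, z ∈ A → z ∈ B → z ∈ U) :
    A ≤ U ∨ B ≤ U := by
  by_contra hcon
  push_neg at hcon
  obtain ⟨hAU, hBU⟩ := hcon
  rw [SetLike.not_le_iff_exists] at hAU hBU
  obtain ⟨a, ha, haU⟩ := hAU
  obtain ⟨b, hb, hbU⟩ := hBU
  rcases chainlem U hmanis a b haU hbU with hch | hch
  · exact core R hR U hmanis A B hA hB hAB a b ha hb haU hbU hch
  · exact core R hR U hmanis B A hB hA (fun z h1 h2 => hAB z h2 h1) b a hb ha hbU haU hch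

end PruferAux

/-- Let `R ⊆ S` be a Prüfer extension and `U, B₁, …, Bₙ` intermediate rings
with `B₁ ∩ ⋯ ∩ Bₙ ⊆ U`, the extension `U ⊆ S` Prüfer and `S \ U` multiplicatively closed
(i.e. `U ⊆ S` Prüfer–Manis).  Then `Bᵢ ⊆ U` for some `i`. -/
theorem exists_le_of_iInter_le_pruferManis {S : Type*} [CommRing S] (R : Subring S)
    (hR : R.subtype.IsPrufer) (n : ℕ) (hn : 0 < n)
    (U : Subring S) (B : Fin n → Subring S)
    (hRU : R ≤ U) (hRB : ∀ i : Fin n, R ≤ B i)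
    (hinter : (⋂ i : Fin n, (B i : Set S)) ⊆ (U : Set S))
    (hU : U.subtype.IsPrufer)
    (hmanis : ∀ x y : S, x ∉ U → y ∉ U → x * y ∉ U) :
    ∃ i : Fin n, B i ≤ U := by
  induction n with
  | zero => exact absurd hn (by omega)
  | succ m ih =>
    rcases Nat.eq_zero_or_pos m with hm | hm
    · subst hm
      refine ⟨0, fun z hz => ?_⟩
      refine hinter (Set.mem_iInter.mpr fun i => ?_)
      have h0 : i = 0 := Fin.fin_one_eq_zero i
      rw [h0]
      exact hz
    · set B' : Subring S := ⨅ i : Fin m, B i.succ with hB'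
      have hRB' : R ≤ B' := le_iInf fun i => hRB i.succ
      have hAB : ∀ z : S, z ∈ B 0 → z ∈ B' → z ∈ U := by
        intro z h0 h'
        refine hinter (Set.mem_iInter.mpr fun i => ?_)
        rcases Fin.eq_zero_or_eq_succ i with rfl | ⟨j, rfl⟩
        · exact h0
        · have hc : (B' : Set S) = ⋂ i : Fin m, (B i.succ : Set S) := by
            rw [hB']; exact Subring.coe_iInf
          have h2 : z ∈ ⋂ i : Fin m, (B i.succ : Set S) := hc ▸ h'
          exact Set.mem_iInter.mp h2 j
      rcases lem2 R hR U hmanis (B 0) B' (hRB 0) hRB' hAB with h | h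
      · exact ⟨0, h⟩
      · have hinter' : (⋂ i : Fin m, (B i.succ : Set S)) ⊆ (U : Set S) := by
          intro z hz
          have hzB' : z ∈ (B' : Set S) := by
            rw [hB', Subring.coe_iInf]; exact hz
          exact h hzB'
        obtain ⟨i, hi⟩ := ih hm (fun i => B i.succ) (fun i => hRB i.succ) hinter'
        exact ⟨i.succ, hi⟩
end

section
/- Let R ⊆ S be an extension of commutative rings and let T, T₁, …, Tₙ be intermediate rings with R ⊆ T, Tᵢ ⊆ S, such that T is a localization of R at some multiplicatively closed subset Σ of R (i.e., T = R_Σ inside S), and for each i the inclusion R → Tᵢ is a flat epimorphism. If T ⊆ T₁ ∪ ⋯ ∪ Tₙ, then T ⊆ Tᵢ for some i. -/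
universe u v

/-- Let `R ⊆ T, T₁, …, Tₙ ⊆ S` with `T = R_Σ` a localization of `R` inside
`S` and each `R → Tᵢ` a flat epimorphism.  If `T ⊆ T₁ ∪ ⋯ ∪ Tₙ`, then `T ⊆ Tᵢ` for some `i`. -/
theorem localization_avoidance_flatEpi {S : Type*} [CommRing S] (R T : Subring S)
    (hRT : R ≤ T) (M : Submonoid R)
    (hloc : letI := (Subring.inclusion hRT).toAlgebra; IsLocalization M T)
    (n : ℕ) (T' : Fin n → Subring S) (hRT' : ∀ i : Fin n, R ≤ T' i)
    (hfe : ∀ i : Fin n, (Subring.inclusion (hRT' i)).IsFlatEpi)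
    (hsub : (T : Set S) ⊆ ⋃ i : Fin n, (T' i : Set S)) :
    ∃ i : Fin n, T ≤ T' i := by
  letI := (Subring.inclusion hRT).toAlgebra
  haveI : IsLocalization M T := hloc
  have hcoe : ∀ x : R, ((Subring.inclusion hRT x : T) : S) = (x : S) := fun x => rfl
  by_cases h : ∃ i : Fin n, ∀ σ ∈ M, ∃ u ∈ T' i, (σ : S) * u = 1
  · obtain ⟨i, hi⟩ := h
    refine ⟨i, fun t ht => ?_⟩
    obtain ⟨⟨r, σ⟩, hrs⟩ := IsLocalization.surj (M := M) (S := T) ⟨t, ht⟩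
    obtain ⟨u, hu, huσ⟩ := hi σ σ.2
    have hS : t * ((σ : R) : S) = ((r : R) : S) := congrArg Subtype.val hrs
    have ht' : t = ((r : R) : S) * u := by
      calc t = t * (((σ : R) : S) * u) := by rw [huσ, mul_one]
        _ = (t * ((σ : R) : S)) * u := by ring
        _ = ((r : R) : S) * u := by rw [hS]
    rw [ht']
    exact (T' i).mul_mem (hRT' i r.2) hu
  · exfalso
    push_neg at h
    choose σ hσM hσ using h
    have hPM : (∏ i, σ i) ∈ M := M.prod_mem fun i _ => hσM i
    obtain ⟨v, hv⟩ := (IsLocalization.map_units T ⟨∏ i, σ i, hPM⟩).exists_right_inv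
    have hvS : ((∏ i, σ i : R) : S) * ((v : T) : S) = 1 := by
      have := congrArg (Subtype.val) hv
      exact this
    obtain ⟨i, hvi⟩ := Set.mem_iUnion.mp (hsub (v : T).2)
    set u : S := ((v : T) : S) * ∏ j ∈ Finset.univ.erase i, ((σ j : R) : S) with hu
    have huT : u ∈ T' i := by
      refine (T' i).mul_mem hvi ?_
      exact Subring.prod_mem _ fun j _ => hRT' i (σ j).2
    refine hσ i u huT ?_
    have hprod : ((∏ j, σ j : R) : S) = ∏ j, ((σ j : R) : S) := by
      exact map_prod (R.subtype) _ _
    calc ((σ i : R) : S) * u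
        = (((σ i : R) : S) * ∏ j ∈ Finset.univ.erase i, ((σ j : R) : S)) * ((v : T) : S) := by
          rw [hu]; ring
      _ = (∏ j, ((σ j : R) : S)) * ((v : T) : S) := by congr 1; exact Finset.mul_prod_erase _ (fun j => ((σ j : R) : S)) (Finset.mem_univ i)
      _ = 1 := by rw [← hprod, hvS]
end

section
/- Let S be a commutative ring, I an ideal of S, φ : S → S/I the canonical projection, R' a subring of S' := S/I, and R := φ⁻¹(R') the pullback subring of S. Then R ⊆ S is a Prüfer extension if and only if R' ⊆ S' is a Prüfer extension. -/
universe u v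

section Aux

variable {S : Type v} [CommRing S]

open scoped TensorProduct

/-- The set of "conductor elements" of `t` inside `T`: elements of `R` that multiply `t`
into `R`. -/
def CondGen (R T : Subring S) (t : S) : Set ↥T :=
  {x : ↥T | (x : S) ∈ R ∧ (x : S) * t ∈ R}

/-- The conductor condition characterizing flat epimorphisms of extensions. -/
def CondTop (R T : Subring S) : Prop :=
  ∀ t : ↥T, (1 : ↥T) ∈ Ideal.span (CondGen R T (t : S))

lemma one_mem_span_inter (R T : Subring S) (h : CondTop R T) (F : Finset ↥T) :
    (1 : ↥T) ∈ Ideal.span {x : ↥T | (x : S) ∈ R ∧ ∀ t ∈ F, (x : S) * (t : S) ∈ R} := by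
  classical
  induction F using Finset.induction_on with
  | empty =>
      apply Ideal.subset_span
      exact ⟨R.one_mem, by simp⟩
  | @insert a F haF ih =>

      have h1 := h a
      have hmul := Ideal.mul_mem_mul h1 ih
      rw [one_mul, Ideal.span_mul_span'] at hmul
      refine Ideal.span_mono ?_ hmul
      rintro z ⟨x, hx, y, hy, rfl⟩
      refine ⟨R.mul_mem hx.1 hy.1, ?_⟩
      intro t ht
      rcases Finset.mem_insert.mp ht with rfl | htF
      · have hrw : ((x * y : ↥T) : S) * (t : S) = ((x : S) * (t : S)) * (y : S) := by
          push_cast; ring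
        rw [hrw]; exact R.mul_mem hx.2 hy.1
      · have hrw : ((x * y : ↥T) : S) * (t : S) = (x : S) * ((y : S) * (t : S)) := by
          push_cast; ring
        rw [hrw]; exact R.mul_mem hx.1 (hy.2 t htF)

lemma coe_finset_sum' {T : Subring S} {ι : Type*} (s : Finset ι) (g : ι → ↥T) :
    ((∑ i ∈ s, g i : ↥T) : S) = ∑ i ∈ s, ((g i : S)) :=
  map_sum T.subtype g s

lemma isFlatEpi_of_condTop {R T : Subring S} (h : CondTop R T)
    (hmem : ∀ x : ↥R, R.subtype x ∈ T) :
    (R.subtype.codRestrict T hmem).IsFlatEpi := by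
  classical
  set f : ↥R →+* ↥T := R.subtype.codRestrict T hmem with hfdef
  letI : Algebra ↥R ↥T := f.toAlgebra
  have hsmul : ∀ (r : ↥R) (t : ↥T), ((r • t : ↥T) : S) = (r : S) * (t : S) := by
    intro r t
    rw [Algebra.smul_def]
    rfl
  refine ⟨?_, ?_⟩
  · show Module.Flat ↥R ↥T
    rw [Module.Flat.iff_forall_isTrivialRelation]
    intro ι c x hrel
    have hrelS : ∑ i, (c i : S) * ((x i : ↥T) : S) = 0 := by
      have h0 := congrArg (fun z : ↥T => (z : S)) hrel
      simp only [coe_finset_sum'] at h0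
      simpa [hsmul] using h0
    obtain ⟨n, u, y, hrep⟩ := Submodule.mem_span_set'.mp
      (one_mem_span_inter R T h (Finset.image x Finset.univ))
    have hy1 : ∀ j, ((y j : ↥T) : S) ∈ R := fun j => (y j).2.1
    have hy2 : ∀ j i, ((y j : ↥T) : S) * ((x i : ↥T) : S) ∈ R :=
      fun j i => (y j).2.2 (x i) (Finset.mem_image_of_mem x (Finset.mem_univ i))
    have hone : ∑ j, (u j : S) * ((y j : ↥T) : S) = 1 := by
      have h0 := congrArg (fun z : ↥T => (z : S)) hrep
      simp only [coe_finset_sum'] at h0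
      simpa [smul_eq_mul] using h0
    refine ⟨n,
      fun i j => ⟨((y j : ↥T) : S) * ((x i : ↥T) : S), hy2 j i⟩,
      fun j => u j, ?_, ?_⟩
    · intro i
      apply Subtype.ext
      rw [coe_finset_sum']
      have hswap : (∑ j : Fin n,
            (((⟨((y j : ↥T) : S) * ((x i : ↥T) : S), hy2 j i⟩ : ↥R)
              • u j : ↥T) : S))
          = ∑ j : Fin n, (((y j : ↥T) : S) * ((x i : ↥T) : S)) * (u j : S) :=
        Fintype.sum_equiv (Equiv.refl _) _ _ fun j => hsmul _ _
      rw [hswap]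
      have hring : ∀ j : Fin n, (((y j : ↥T) : S) * ((x i : ↥T) : S)) * (u j : S)
          = ((x i : ↥T) : S) * ((u j : S) * ((y j : ↥T) : S)) := fun j => by ring
      rw [Finset.sum_congr rfl fun j _ => hring j, ← Finset.mul_sum, hone, mul_one]
    · intro j
      apply Subtype.ext
      have : ((∑ i, c i * ⟨((y j : ↥T) : S) * ((x i : ↥T) : S), hy2 j i⟩ : ↥R) : S)
          = ∑ i, (c i : S) * (((y j : ↥T) : S) * ((x i : ↥T) : S)) :=
        map_sum R.subtype _ _
      rw [this]
      have h2 : ∀ i : Fin ι, (c i : S) * (((y j : ↥T) : S) * ((x i : ↥T) : S))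
          = ((y j : ↥T) : S) * ((c i : S) * ((x i : ↥T) : S)) := by intro i; ring
      rw [Finset.sum_congr rfl fun i _ => h2 i, ← Finset.mul_sum, hrelS, mul_zero]
      simp
  · intro C _ g1 g2 hgg
    have hagree : ∀ z : ↥T, (z : S) ∈ R → g1 z = g2 z := by
      intro z hz
      have hzf : z = f ⟨(z : S), hz⟩ := Subtype.ext rfl
      rw [hzf]
      exact RingHom.congr_fun hgg _
    ext t
    obtain ⟨n, u, y, hrep⟩ := Submodule.mem_span_set'.mp (h t)
    have hone : ∑ i, u i * (y i : ↥T) = (1 : ↥T) := by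
      simpa [smul_eq_mul] using hrep
    have hyR : ∀ i, ((y i : ↥T) : S) ∈ R := fun i => (y i).2.1
    have hytR : ∀ i, (((y i : ↥T) * t : ↥T) : S) ∈ R := fun i => (y i).2.2
    calc g1 t = g1 ((∑ i, u i * (y i : ↥T)) * t) := by rw [hone, one_mul]
    _ = ∑ i, g1 (u i) * g1 ((y i : ↥T) * t) := by
        rw [Finset.sum_mul, map_sum]
        exact Finset.sum_congr rfl fun i _ => by rw [mul_assoc, map_mul]
    _ = ∑ i, g1 (u i) * (g2 (y i : ↥T) * g2 t) := by
        refine Finset.sum_congr rfl fun i _ => ?_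
        rw [hagree _ (hytR i), map_mul]
    _ = (∑ i, g1 (u i) * g1 (y i : ↥T)) * g2 t := by
        rw [Finset.sum_mul]
        refine Finset.sum_congr rfl fun i _ => ?_
        rw [hagree _ (hyR i), mul_assoc]
    _ = g1 (∑ i, u i * (y i : ↥T)) * g2 t := by
        rw [map_sum]
        congr 1
        exact Finset.sum_congr rfl fun i _ => (map_mul g1 _ _).symm
    _ = g2 t := by rw [hone, map_one, one_mul]

lemma condTop_of_isFlatEpi {R T : Subring S} (hRT : R ≤ T)
    (hmem : ∀ x : ↥R, R.subtype x ∈ T)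
    (hfe : (R.subtype.codRestrict T hmem).IsFlatEpi) : CondTop R T := by
  classical
  set f : ↥R →+* ↥T := R.subtype.codRestrict T hmem with hfdef
  letI : Algebra ↥R ↥T := f.toAlgebra
  obtain ⟨hflat, hepi⟩ := hfe
  haveI : Module.Flat ↥R ↥T := hflat
  have hsmul : ∀ (r : ↥R) (t : ↥T), ((r • t : ↥T) : S) = (r : S) * (t : S) := by
    intro r t
    rw [Algebra.smul_def]
    rfl
  intro t
  have hcomp : (Algebra.TensorProduct.includeLeftRingHom : ↥T →+* ↥T ⊗[↥R] ↥T).comp f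
      = (Algebra.TensorProduct.includeRight : ↥T →ₐ[↥R] ↥T ⊗[↥R] ↥T).toRingHom.comp f := by
    ext r
    show f r ⊗ₜ[↥R] (1 : ↥T) = (1 : ↥T) ⊗ₜ[↥R] f r
    have hfr : f r = algebraMap ↥R ↥T r := rfl
    have h1 : algebraMap ↥R (↥T ⊗[↥R] ↥T) r = (algebraMap ↥R ↥T r) ⊗ₜ 1 :=
      Algebra.TensorProduct.algebraMap_apply r
    have h2 : algebraMap ↥R (↥T ⊗[↥R] ↥T) r = 1 ⊗ₜ algebraMap ↥R ↥T r :=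
      Algebra.TensorProduct.algebraMap_apply' r
    rw [hfr, ← h1, h2]
  have heq := hepi _ _ hcomp
  have hten : ∀ z : ↥T, z ⊗ₜ[↥R] (1 : ↥T) = (1 : ↥T) ⊗ₜ[↥R] z := by
    intro z
    have := RingHom.congr_fun heq z
    simpa using this
  -- set up the vanishing expression
  set m : ULift.{v} (Fin 2) → ↥T := fun i => ![t, -1] i.down with hm
  set nn : ULift.{v} (Fin 2) → ↥T := fun i => ![1, t] i.down with hnn
  have hmn : ∑ i, m i ⊗ₜ[↥R] nn i = (0 : ↥T ⊗[↥R] ↥T) := by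
    have hswap : ∑ i : ULift (Fin 2), m i ⊗ₜ[↥R] nn i
        = ∑ i : Fin 2, (![t, -1] i) ⊗ₜ[↥R] (![1, t] i) :=
      Fintype.sum_equiv Equiv.ulift _ _ fun i => rfl
    rw [hswap, Fin.sum_univ_two]
    simp only [Matrix.cons_val_zero, Matrix.cons_val_one, Matrix.head_cons]
    rw [TensorProduct.neg_tmul, hten t]
    abel
  have hinj : Function.Injective
      (LinearMap.rTensor ↥T (Submodule.span ↥R (Set.range m)).subtype) :=
    Module.Flat.rTensor_preserves_injective_linearMap _ (Submodule.injective_subtype _)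
  obtain ⟨κ, a, y, h1, h2⟩ :=
    TensorProduct.vanishesTrivially_of_sum_tmul_eq_zero_of_rTensor_injective ↥R hinj hmn
  -- from the relations, a ⟨0⟩ j is a conductor element
  have hcond : ∀ j, ((a ⟨0⟩ j : ↥R) : S) * (t : S) = ((a ⟨1⟩ j : ↥R) : S) := by
    intro j
    have h2j := h2 j
    have hswap : ∑ i : ULift (Fin 2), a i j • m i
        = a ⟨0⟩ j • t + a ⟨1⟩ j • (-1 : ↥T) := by
      have h5 : ∑ i : ULift (Fin 2), a i j • m i
          = ∑ i : Fin 2, a ⟨i⟩ j • (![t, -1] i) :=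
        Fintype.sum_equiv Equiv.ulift _ _ fun i => rfl
      rw [h5, Fin.sum_univ_two]
      simp only [Matrix.cons_val_zero, Matrix.cons_val_one, Matrix.head_cons]
    rw [hswap] at h2j
    have h4 : ((a ⟨0⟩ j • t + a ⟨1⟩ j • (-1 : ↥T) : ↥T) : S) = 0 := by rw [h2j]; rfl
    have h5 : ((a ⟨0⟩ j : ↥R) : S) * (t : S) - ((a ⟨1⟩ j : ↥R) : S) = 0 := by
      rw [← h4]
      push_cast [hsmul]
      ring
    exact sub_eq_zero.mp h5
  have h10 := h1 ⟨0⟩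
  have h1S : (1 : ↥T) = ∑ j, a ⟨0⟩ j • y j := by
    simpa [hnn] using h10
  rw [show ((t : ↥T) : S) = (t : S) from rfl]
  rw [h1S]
  refine Submodule.sum_mem _ fun j _ => ?_
  have hj : a ⟨0⟩ j • y j = y j * (⟨((a ⟨0⟩ j : ↥R) : S), hRT (a ⟨0⟩ j).2⟩ : ↥T) := by
    apply Subtype.ext
    rw [hsmul]
    push_cast
    ring
  rw [hj]
  refine Ideal.mul_mem_left _ _ (Ideal.subset_span ?_)
  exact ⟨(a ⟨0⟩ j).2, by rw [show ((⟨((a ⟨0⟩ j : ↥R) : S), hRT (a ⟨0⟩ j).2⟩ : ↥T) : S)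
    = ((a ⟨0⟩ j : ↥R) : S) from rfl, hcond j]; exact (a ⟨1⟩ j).2⟩

end Aux

section Transfer

variable {S : Type*} [CommRing S] (I : Ideal S) (R' : Subring (S ⧸ I))

lemma condTop_up {T : Subring S}
    (h' : CondTop R' (T.map (Ideal.Quotient.mk I))) :
    CondTop (Subring.comap (Ideal.Quotient.mk I) R') T := by
  classical
  set φ := Ideal.Quotient.mk I with hφ
  intro t
  have htT : φ (t : S) ∈ T.map φ := ⟨(t : S), t.2, rfl⟩
  obtain ⟨n, u, y, hrep⟩ := Submodule.mem_span_set'.mp (h' ⟨φ (t : S), htT⟩)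
  choose uu huuT huu using fun i => Subring.mem_map.mp (u i).2
  choose yy hyyT hyy using fun i => Subring.mem_map.mp (y i : ↥(T.map φ)).2
  have hone : ∑ i, ((u i : ↥(T.map φ)) : S ⧸ I) * ((y i : ↥(T.map φ)) : S ⧸ I) = 1 := by
    have h0 := congrArg (fun z : ↥(T.map φ) => (z : S ⧸ I)) hrep
    simp only [coe_finset_sum'] at h0
    simpa [smul_eq_mul] using h0
  set e : S := (∑ i, uu i * yy i) - 1 with he
  have hφe : φ e = 0 := by
    rw [he]
    rw [map_sub, map_sum, map_one]
    have : ∀ i, φ (uu i * yy i) = ((u i : ↥(T.map φ)) : S ⧸ I) * ((y i : ↥(T.map φ)) : S ⧸ I) := by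
      intro i
      rw [map_mul, huu i, hyy i]
    rw [Finset.sum_congr rfl fun i _ => this i, hone, sub_self]
  have heT : e ∈ T := by
    refine T.sub_mem (Subring.sum_mem T fun i _ => T.mul_mem (huuT i) (hyyT i)) T.one_mem
  have heR : e ∈ Subring.comap φ R' := by
    rw [Subring.mem_comap, hφe]; exact R'.zero_mem
  have hetR : e * (t : S) ∈ Subring.comap φ R' := by
    rw [Subring.mem_comap, map_mul, hφe, zero_mul]; exact R'.zero_mem
  have hyyR : ∀ i, yy i ∈ Subring.comap φ R' := by
    intro i
    rw [Subring.mem_comap, hyy i]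
    exact (y i).2.1
  have hyytR : ∀ i, yy i * (t : S) ∈ Subring.comap φ R' := by
    intro i
    rw [Subring.mem_comap, map_mul, hyy i]
    exact (y i).2.2
  have hrw : (1 : ↥T) = (∑ i, (⟨uu i, huuT i⟩ : ↥T) * ⟨yy i, hyyT i⟩) - ⟨e, heT⟩ := by
    apply Subtype.ext
    push_cast
    rw [he]
    ring
  rw [hrw]
  refine Submodule.sub_mem _ (Submodule.sum_mem _ fun i _ => ?_)
    (Ideal.subset_span ⟨heR, hetR⟩)
  exact Ideal.mul_mem_left _ _ (Ideal.subset_span ⟨hyyR i, hyytR i⟩)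

lemma condTop_down {T' : Subring (S ⧸ I)}
    (h : CondTop (Subring.comap (Ideal.Quotient.mk I) R')
      (Subring.comap (Ideal.Quotient.mk I) T')) : CondTop R' T' := by
  classical
  set φ := Ideal.Quotient.mk I with hφ
  intro t'
  obtain ⟨t, ht⟩ := Ideal.Quotient.mk_surjective (t' : S ⧸ I)
  have htT : t ∈ Subring.comap φ T' := by
    rw [Subring.mem_comap]
    show φ t ∈ T'
    rw [ht]; exact t'.2
  obtain ⟨n, u, y, hrep⟩ := Submodule.mem_span_set'.mp (h ⟨t, htT⟩)
  have hone : ∑ i, ((u i : ↥(Subring.comap φ T')) : S)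
      * ((y i : ↥(Subring.comap φ T')) : S) = 1 := by
    have h0 := congrArg (fun z : ↥(Subring.comap φ T') => (z : S)) hrep
    simp only [coe_finset_sum'] at h0
    simpa [smul_eq_mul] using h0
  have hrw : (1 : ↥T') = ∑ i,
      (⟨φ ((u i : ↥(Subring.comap φ T')) : S), (u i : ↥(Subring.comap φ T')).2⟩ : ↥T')
      * ⟨φ ((y i : ↥(Subring.comap φ T')) : S), ((y i : ↥(Subring.comap φ T')) : _).2⟩ := by
    apply Subtype.ext
    rw [coe_finset_sum']
    push_cast
    have : ∀ i, φ ((u i : ↥(Subring.comap φ T')) : S) * φ ((y i : ↥(Subring.comap φ T')) : S)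
        = φ (((u i : ↥(Subring.comap φ T')) : S) * ((y i : ↥(Subring.comap φ T')) : S)) :=
      fun i => (map_mul φ _ _).symm
    rw [Finset.sum_congr rfl fun i _ => this i, ← map_sum, hone, map_one]
  rw [hrw]
  refine Submodule.sum_mem _ fun i _ => ?_
  refine Ideal.mul_mem_left _ _ (Ideal.subset_span ?_)
  constructor
  · show φ ((y i : ↥(Subring.comap φ T')) : S) ∈ R'
    exact (y i).2.1
  · show φ ((y i : ↥(Subring.comap φ T')) : S) * (t' : S ⧸ I) ∈ R'
    rw [← ht, ← map_mul]
    exact (y i).2.2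

end Transfer

/-- Let `I` be an ideal of `S`, `φ : S → S/I` the projection, `R'` a subring
of `S' := S/I` and `R := φ⁻¹(R')`.  Then `R ⊆ S` is Prüfer iff `R' ⊆ S'` is Prüfer. -/
theorem prufer_pullback_quotient {S : Type*} [CommRing S] (I : Ideal S)
    (R' : Subring (S ⧸ I)) :
    (Subring.comap (Ideal.Quotient.mk I) R').subtype.IsPrufer ↔ R'.subtype.IsPrufer := by
  set φ := Ideal.Quotient.mk I with hφ
  set R : Subring S := Subring.comap φ R' with hR
  constructor
  · intro hP T' hT'range
    have hR'T' : R' ≤ T' := by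
      rw [← Subring.range_subtype R']; exact hT'range
    set T : Subring S := Subring.comap φ T' with hT
    have hRT : R ≤ T := (Subring.gc_map_comap φ).monotone_u hR'T'
    have h1 := hP T (by rw [Subring.range_subtype]; exact hRT)
    have hcond : CondTop R T := condTop_of_isFlatEpi hRT _ h1
    have hcond' : CondTop R' T' := condTop_down I R' hcond
    exact isFlatEpi_of_condTop hcond' _
  · intro hP T hTrange
    have hRT : R ≤ T := by
      rw [← Subring.range_subtype R]; exact hTrange
    set T' : Subring (S ⧸ I) := T.map φ with hT'
    have hR'T' : R' ≤ T' := by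
      intro x hx
      obtain ⟨z, hz⟩ := Ideal.Quotient.mk_surjective x
      exact ⟨z, hRT (by rw [Subring.mem_comap, hz]; exact hx), hz⟩
    have h1 := hP T' (by rw [Subring.range_subtype]; exact hR'T')
    have hcond' : CondTop R' T' := condTop_of_isFlatEpi hR'T' _ h1
    have hcond : CondTop R T := condTop_up I R' hcond'
    exact isFlatEpi_of_condTop hcond _
end

section
/- Let R ⊆ S be an extension of commutative rings with R local. Then R ⊆ S is a Prüfer extension if and only if every element s ∈ S \ R is invertible in S with s⁻¹ ∈ R. -/
universe u v

set_option maxHeartbeats 1000000 in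
set_option synthInstance.maxHeartbeats 400000 in
open TensorProduct in
/-- Key lemma: if `R ⊆ S` is Prüfer with `R` local and `s ∉ R`, then `1` is a combination
`∑_{n ≥ 1} cₙ sⁿ` with all `cₙ` in the maximal ideal of `R`. -/
lemma prufer_main {S : Type v} [CommRing S] (R : Subring S) [IsLocalRing R]
    (hP : R.subtype.IsPrufer) (s : S) (hs : s ∉ R) :
    ∃ g : ℕ →₀ R, (∀ n, g n ∈ IsLocalRing.maximalIdeal R) ∧ g 0 = 0 ∧
      (g.sum fun n c => (c : S) * s ^ n) = 1 := by
  classical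
  set A := ↥R with hA
  let Talg : Subalgebra A S := Algebra.adjoin A {s}
  let T : Subring S := Talg.toSubring
  have hsT : s ∈ T := Algebra.self_mem_adjoin_singleton A s
  have hT : R.subtype.range ≤ T := by
    rintro x ⟨r, rfl⟩
    exact Talg.algebraMap_mem r
  have hfe := hP T hT
  set f : A →+* ↥T := R.subtype.codRestrict T (fun a => hT (R.subtype.mem_range_self a)) with hfdef
  obtain ⟨hflat, hepi⟩ := hfe
  letI : Algebra A ↥T := f.toAlgebra
  haveI : Module.Flat A ↥T := hflat
  -- epi consequence: b ⊗ 1 = 1 ⊗ b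
  have hcomm : ∀ b : ↥T, (b ⊗ₜ[A] (1 : ↥T) : ↥T ⊗[A] ↥T) = 1 ⊗ₜ[A] b := by
    have hext : (Algebra.TensorProduct.includeLeftRingHom (R := A) (A := ↥T) (B := ↥T)).comp f =
        (Algebra.TensorProduct.includeRight (R := A) (A := ↥T) (B := ↥T)).toRingHom.comp f := by
      ext a
      show (f a ⊗ₜ[A] (1 : ↥T) : ↥T ⊗[A] ↥T) = 1 ⊗ₜ[A] f a
      have : f a = a • (1 : ↥T) := by
        show f a = f a * 1
        rw [mul_one]
      rw [this, TensorProduct.tmul_smul, ← TensorProduct.smul_tmul']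
    have := hepi _ _ hext
    intro b
    exact RingHom.congr_fun this b
  -- the quotient module C = T / R
  set N : Submodule A ↥T := LinearMap.range (Algebra.linearMap A ↥T) with hN
  have hone : (Submodule.Quotient.mk (1 : ↥T) : ↥T ⧸ N) = 0 :=
    (Submodule.Quotient.mk_eq_zero N).2 ⟨1, by simp [Algebra.linearMap_apply]⟩
  haveI hsub : Subsingleton (↥T ⊗[A] (↥T ⧸ N)) := by
    refine ⟨fun x y => ?_⟩
    suffices h : ∀ z : ↥T ⊗[A] (↥T ⧸ N), z = 0 by rw [h x, h y]
    intro z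
    induction z using TensorProduct.induction_on with
    | zero => rfl
    | add u v hu hv => rw [hu, hv, add_zero]
    | tmul b c =>
      obtain ⟨b', rfl⟩ := Submodule.mkQ_surjective N c
      have key : b ⊗ₜ[A] b' = (b * b') ⊗ₜ[A] (1 : ↥T) := by
        calc b ⊗ₜ[A] b' = (b ⊗ₜ[A] (1 : ↥T)) * ((1 : ↥T) ⊗ₜ[A] b') := by
              rw [Algebra.TensorProduct.tmul_mul_tmul, mul_one, one_mul]
        _ = (b ⊗ₜ[A] (1 : ↥T)) * (b' ⊗ₜ[A] (1 : ↥T)) := by rw [← hcomm b']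
        _ = (b * b') ⊗ₜ[A] (1 : ↥T) := by rw [Algebra.TensorProduct.tmul_mul_tmul, mul_one]
      have happ := congrArg (LinearMap.lTensor ↥T N.mkQ) key
      simp only [LinearMap.lTensor_tmul] at happ
      show b ⊗ₜ[A] (N.mkQ b') = 0
      rw [happ]
      show (b * b') ⊗ₜ[A] (Submodule.Quotient.mk (1 : ↥T)) = 0
      rw [hone, TensorProduct.tmul_zero]
  -- conductor ideal
  set J : Ideal A := R.condIdeal s with hJdef
  have hJmem : ∀ a : A, a ∈ J ↔ (a : S) * s ∈ R := fun a => Iff.rfl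
  have hJ : J ≠ ⊤ := by
    intro h
    apply hs
    have h1 : (1 : A) ∈ J := h ▸ Submodule.mem_top
    simpa using (hJmem 1).1 h1
  have hJm : J ≤ IsLocalRing.maximalIdeal A := IsLocalRing.le_maximalIdeal hJ
  set σ : ↥T := ⟨s, hsT⟩ with hσ
  set ψ : A →ₗ[A] (↥T ⧸ N) := N.mkQ.comp (LinearMap.toSpanSingleton A ↥T σ) with hψ
  have hker : ∀ a : A, ψ a = 0 ↔ a ∈ J := by
    intro a
    have h1 : ψ a = Submodule.Quotient.mk (a • σ) := rfl
    rw [h1, Submodule.Quotient.mk_eq_zero]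
    constructor
    · rintro ⟨a', ha'⟩
      have : ((a' : S)) = (a : S) * s := congrArg Subtype.val ha'
      exact (hJmem a).2 (this ▸ a'.2)
    · intro ha
      exact ⟨⟨(a : S) * s, ha⟩, Subtype.ext rfl⟩
  have hkJ : LinearMap.ker ψ = (J : Submodule A A) := by
    ext a
    simpa [LinearMap.mem_ker] using hker a
  set φ : (A ⧸ J) →ₗ[A] (↥T ⧸ N) :=
    Submodule.liftQ (J : Submodule A A) ψ (le_of_eq hkJ.symm) with hφ
  have hinj : Function.Injective φ := by
    rw [← LinearMap.ker_eq_bot]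
    exact Submodule.ker_liftQ_eq_bot _ _ _ (le_of_eq hkJ)
  have hinj2 : Function.Injective (LinearMap.lTensor ↥T φ) :=
    Module.Flat.lTensor_preserves_injective_linearMap φ hinj
  haveI : Subsingleton (↥T ⊗[A] (A ⧸ J)) := ⟨fun x y => hinj2 (Subsingleton.elim _ _)⟩
  haveI : Subsingleton (↥T ⧸ (J • (⊤ : Submodule A ↥T))) :=
    (TensorProduct.tensorQuotEquivQuotSMul ↥T J).symm.toEquiv.subsingleton
  have htop : (J • (⊤ : Submodule A ↥T)) = ⊤ := by
    rw [Submodule.eq_top_iff']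
    intro b
    have : (Submodule.Quotient.mk b : ↥T ⧸ (J • (⊤ : Submodule A ↥T))) = 0 :=
      Subsingleton.elim _ _
    rwa [Submodule.Quotient.mk_eq_zero] at this
  have h1 : (1 : ↥T) ∈ J • (⊤ : Submodule A ↥T) := by rw [htop]; exact Submodule.mem_top
  -- push down to S
  let val : ↥T →ₗ[A] S :=
    { toFun := fun b => (b : S), map_add' := fun _ _ => rfl, map_smul' := fun _ _ => rfl }
  have h2 : (1 : S) ∈ J • (Submodule.map val ⊤) := by
    rw [← Submodule.map_smul'']
    exact ⟨1, h1, rfl⟩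
  have h3 : Submodule.map val ⊤ ≤ Submodule.span A (Set.range (s ^ ·)) := by
    rintro x ⟨b, -, rfl⟩
    have hb : (b : S) ∈ Submodule.span A ((Submonoid.closure ({s} : Set S) : Set S)) := by
      rw [← Algebra.adjoin_eq_span]
      exact b.2
    refine Submodule.span_mono ?_ hb
    intro y hy
    obtain ⟨n, hn⟩ := Submonoid.mem_closure_singleton.mp hy
    exact ⟨n, hn⟩
  have h4 : (1 : S) ∈ J • Submodule.span A (Set.range (s ^ ·)) :=
    Submodule.smul_mono le_rfl h3 h2
  -- extract a finsupp representation
  have h5 : ∃ g : ℕ →₀ A, (∀ n, g n ∈ J) ∧ (g.sum fun n c => (c : S) * s ^ n) = 1 := by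
    have key : ∀ x ∈ J • Submodule.span A (Set.range (s ^ ·)),
        ∃ g : ℕ →₀ A, (∀ n, g n ∈ J) ∧ (g.sum fun n c => (c : S) * s ^ n) = x := by
      intro x hx
      refine Submodule.smul_induction_on hx ?_ ?_
      · intro a ha y hy
        obtain ⟨c, hc⟩ := Finsupp.mem_span_range_iff_exists_finsupp.mp hy
        refine ⟨c.mapRange (fun t => a * t) (mul_zero a), fun n => ?_, ?_⟩
        · rw [Finsupp.mapRange_apply]
          exact Ideal.mul_mem_right (c n) J ha
        · rw [Finsupp.sum_mapRange_index (by intro n; simp)]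
          rw [← hc, Finsupp.smul_sum]
          apply Finsupp.sum_congr
          intro n _
          show ((a * c n : A) : S) * s ^ n = a • ((c n) • s ^ n)
          show (a : S) * (c n : S) * s ^ n = (a : S) * ((c n : S) * s ^ n)
          ring
      · rintro x y ⟨gx, hgx1, hgx2⟩ ⟨gy, hgy1, hgy2⟩
        refine ⟨gx + gy, fun n => ?_, ?_⟩
        · rw [Finsupp.add_apply]
          exact J.add_mem (hgx1 n) (hgy1 n)
        · rw [Finsupp.sum_add_index' (by intro a; simp) (by intro a b₁ b₂; rw [Subring.coe_add]; ring)]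
          rw [hgx2, hgy2]
    exact key 1 h4
  obtain ⟨g, hgJ, hgsum⟩ := h5
  -- unit trick: kill the constant term
  have hc0 : g 0 ∈ IsLocalRing.maximalIdeal A := hJm (hgJ 0)
  have hunit : IsUnit ((1 : A) - g 0) :=
    IsLocalRing.isUnit_one_sub_self_of_mem_nonunits _ hc0
  obtain ⟨v, hv⟩ := hunit
  set g1 : ℕ →₀ A := (g.erase 0).mapRange (fun t => ((v⁻¹ : Aˣ) : A) * t) (mul_zero _) with hg1
  have hg1apply : ∀ n, g1 n = ((v⁻¹ : Aˣ) : A) * (g.erase 0) n := fun n =>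
    Finsupp.mapRange_apply
  have herase_mem : ∀ n, (g.erase 0) n ∈ IsLocalRing.maximalIdeal A := by
    intro n
    by_cases hn : n = 0
    · rw [hn, Finsupp.erase_same]; exact Submodule.zero_mem _
    · rw [Finsupp.erase_ne hn]; exact hJm (hgJ n)
  refine ⟨g1, fun n => ?_, ?_, ?_⟩
  · rw [hg1apply n]
    exact Ideal.mul_mem_left _ _ (herase_mem n)
  · rw [hg1apply 0, Finsupp.erase_same, mul_zero]
  · -- the sum equals 1
    have hsum_split : ((g 0 : A) : S) * s ^ 0 + ((g.erase 0).sum fun n c => (c : S) * s ^ n) = 1 := by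
      rw [← hgsum]
      conv_rhs => rw [← Finsupp.single_add_erase 0 g]
      rw [Finsupp.sum_add_index' (by intro a; simp) (by intro a b₁ b₂; rw [Subring.coe_add]; ring)]
      rw [Finsupp.sum_single_index (by simp)]
    have hE : ((g.erase 0).sum fun n c => (c : S) * s ^ n) = ((v : A) : S) := by
      have : ((g 0 : A) : S) * s ^ 0 = ((g 0 : A) : S) := by rw [pow_zero, mul_one]
      rw [this] at hsum_split
      have hv' : ((v : A) : S) = 1 - ((g 0 : A) : S) := by
        rw [hv]; exact congrArg (· - ((g 0 : A) : S)) rfl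
      rw [hv']
      have := eq_sub_of_add_eq' hsum_split
      exact this
    rw [hg1, Finsupp.sum_mapRange_index (by intro a; simp)]
    have : ∀ n (c : A), ((((v⁻¹ : Aˣ) : A) * c : A) : S) * s ^ n
        = (((v⁻¹ : Aˣ) : A) : S) * ((c : S) * s ^ n) := by
      intro n c
      rw [Subring.coe_mul]
      ring
    have hcongr : ((g.erase 0).sum fun a b => ((((v⁻¹ : Aˣ) : A) * b : A) : S) * s ^ a)
        = ((g.erase 0).sum fun a b => (((v⁻¹ : Aˣ) : A) : S) * ((b : S) * s ^ a)) :=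
      Finsupp.sum_congr (fun n _ => this n _)
    rw [hcongr, ← Finsupp.mul_sum, hE]
    have h' : (((v⁻¹ : Aˣ) : A) : S) * ((v : A) : S) = (((((v⁻¹ : Aˣ) : A) * (v : A)) : A) : S) :=
      (Subring.coe_mul _ _ _).symm
    rw [h']
    have hvv : ((v⁻¹ : Aˣ) : A) * (v : A) = 1 := v.inv_mul
    rw [hvv]
    simp

set_option maxHeartbeats 1000000 in
/-- Let `R ⊆ S` with `R` local.  Then `R ⊆ S` is Prüfer iff every
`s ∈ S \ R` is invertible in `S` with inverse lying in `R`. -/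
theorem prufer_iff_inv_mem_of_local {S : Type*} [CommRing S] (R : Subring S)
    [IsLocalRing R] :
    R.subtype.IsPrufer ↔ ∀ s : S, s ∉ R → ∃ t : S, t ∈ R ∧ s * t = 1 := by
  classical
  constructor
  · -- Prüfer implies inverses
    intro hP s hs
    obtain ⟨g, hgm, hg0, hgsum⟩ := prufer_main R hP s hs
    set u : S := g.sum fun n c => (c : S) * s ^ (n - 1) with hu
    have hsu : s * u = 1 := by
      rw [hu, Finsupp.mul_sum, ← hgsum]
      apply Finsupp.sum_congr
      intro n hn
      have hn1 : n ≠ 0 := by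
        intro h
        exact (Finsupp.mem_support_iff.mp hn) (h ▸ hg0)
      have hpow : s ^ (n - 1) * s = s ^ n := by
        rw [← pow_succ]
        congr 1
        omega
      rw [← hpow]
      ring
    by_cases hu' : u ∈ R
    · exact ⟨u, hu', hsu⟩
    exfalso
    -- nontriviality of S
    have hnt : (1 : S) ≠ 0 := by
      intro h
      apply hs
      have : s = 0 := by rw [← mul_one s, h, mul_zero]
      rw [this]
      exact R.zero_mem
    obtain ⟨e, hem, he0, hesum⟩ := prufer_main R hP u hu'
    have hesupp : e.support.Nonempty := by
      rcases Finset.eq_empty_or_nonempty e.support with h | h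
      · exfalso
        apply hnt
        rw [← hesum, Finsupp.support_eq_empty.mp h]
        simp
      · exact h
    set m := e.support.max' hesupp with hm
    have hmem_le : ∀ k ∈ e.support, k ≤ m := fun k hk => Finset.le_max' _ k hk
    have hm1 : 1 ≤ m := by
      have h0s : m ∈ e.support := Finset.max'_mem _ _
      have : m ≠ 0 := by
        intro h
        exact (Finsupp.mem_support_iff.mp h0s) (h ▸ he0)
      omega
    have hpowu : ∀ k, k ≤ m → u ^ k * s ^ m = s ^ (m - k) := by
      intro k hk
      have h1 : s ^ m = s ^ k * s ^ (m - k) := by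
        rw [← pow_add]
        congr 1
        omega
      calc u ^ k * s ^ m = (u * s) ^ k * s ^ (m - k) := by rw [h1, mul_pow]; ring
      _ = s ^ (m - k) := by rw [mul_comm u s, hsu, one_pow, one_mul]
    have hsm : s ^ m = e.sum fun k c => (c : S) * s ^ (m - k) := by
      calc s ^ m = (e.sum fun k c => (c : S) * u ^ k) * s ^ m := by rw [hesum, one_mul]
      _ = e.sum fun k c => (c : S) * (u ^ k * s ^ m) := by
          rw [Finsupp.sum_mul]
          apply Finsupp.sum_congr
          intro k _
          ring
      _ = e.sum fun k c => (c : S) * s ^ (m - k) := by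
          apply Finsupp.sum_congr
          intro k hk
          rw [hpowu k (hmem_le k hk)]
    set V : Submodule ↥R S := Submodule.span ↥R ((s ^ ·) '' Set.Iio m) with hV
    have hVfg : V.FG := Submodule.fg_span ((Set.finite_Iio m).image _)
    have hpowV : ∀ i, s ^ i ∈ V := by
      intro i
      induction i using Nat.strong_induction_on with
      | _ i ih =>
        by_cases hi : i < m
        · exact Submodule.subset_span ⟨i, hi, rfl⟩
        · push_neg at hi
          have hrw : s ^ i = e.sum fun k c => (c : S) * s ^ (i - k) := by
            have h1 : s ^ i = s ^ (i - m) * s ^ m := by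
              rw [← pow_add]
              congr 1
              omega
            rw [h1, hsm, Finsupp.mul_sum]
            apply Finsupp.sum_congr
            intro k hk
            have h2 : s ^ (i - m) * s ^ (m - k) = s ^ (i - k) := by
              rw [← pow_add]
              congr 1
              have := hmem_le k hk
              omega
            rw [← h2]
            ring
          rw [hrw, Finsupp.sum]
          apply Submodule.sum_mem
          intro k hk
          have hk1 : k ≠ 0 := by
            intro h
            exact (Finsupp.mem_support_iff.mp hk) (h ▸ he0)
          have hkm := hmem_le k hk
          have hik : i - k < i := by omega
          have hmem := ih (i - k) hik
          exact V.smul_mem (e k) hmem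
    have hVm : V ≤ (IsLocalRing.maximalIdeal ↥R) • V := by
      rw [hV, Submodule.span_le]
      rintro x ⟨i, -, rfl⟩
      have hrw : s ^ i = g.sum fun n c => (c : S) * s ^ (n + i) := by
        calc s ^ i = (g.sum fun n c => (c : S) * s ^ n) * s ^ i := by rw [hgsum, one_mul]
        _ = g.sum fun n c => (c : S) * s ^ (n + i) := by
            rw [Finsupp.sum_mul]
            apply Finsupp.sum_congr
            intro n _
            rw [pow_add]
            ring
      show s ^ i ∈ (IsLocalRing.maximalIdeal ↥R) • V
      rw [hrw, Finsupp.sum]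
      apply Submodule.sum_mem
      intro n _
      exact Submodule.smul_mem_smul (hgm n) (hpowV (n + i))
    have hV0 : V = ⊥ := by
      refine Submodule.eq_bot_of_le_smul_of_le_jacobson_bot (IsLocalRing.maximalIdeal ↥R) V
        hVfg hVm ?_
      rw [IsLocalRing.jacobson_eq_maximalIdeal (⊥ : Ideal ↥R) bot_ne_top]
    have h1V : (1 : S) ∈ V := by
      have := hpowV 0
      rwa [pow_zero] at this
    rw [hV0] at h1V
    exact hnt (by simpa using h1V)
  · -- inverses imply Prüfer
    intro h T hT
    set f : ↥R →+* ↥T := R.subtype.codRestrict T (fun a => hT (R.subtype.mem_range_self a))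
      with hfdef
    have hfinj : Function.Injective f := by
      intro a b hab
      have h2 := congrArg Subtype.val hab
      exact Subtype.ext h2
    letI : Algebra ↥R ↥T := f.toAlgebra
    let W : Submonoid ↥R :=
      { carrier := {a : ↥R | ∃ b ∈ T, (a : S) * b = 1}
        one_mem' := ⟨1, T.one_mem, by simp⟩
        mul_mem' := by
          rintro a a' ⟨b, hb, hab⟩ ⟨b', hb', hab'⟩
          refine ⟨b * b', T.mul_mem hb hb', ?_⟩
          rw [Subring.coe_mul]
          calc (a : S) * (a' : S) * (b * b') = ((a : S) * b) * ((a' : S) * b') := by ring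
          _ = 1 := by rw [hab, hab', one_mul] }
    haveI hloc : IsLocalization W ↥T := by
      refine ⟨?_, ?_, ?_⟩
      · rintro ⟨y, b, hb, hyb⟩
        refine isUnit_iff_exists.mpr ⟨⟨b, hb⟩, Subtype.ext ?_, Subtype.ext ?_⟩
        · exact hyb
        · show b * (y : S) = 1
          rw [mul_comm]
          exact hyb
      · intro z
        by_cases hz : (z : S) ∈ R
        · refine ⟨(⟨(z : S), hz⟩, 1), Subtype.ext ?_⟩
          show (z : S) * ((1 : ↥R) : S) = ((⟨(z : S), hz⟩ : ↥R) : S)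
          simp
        · obtain ⟨t, ht, hzt⟩ := h (z : S) hz
          have htW : (⟨t, ht⟩ : ↥R) ∈ W := ⟨(z : S), z.2, by rw [mul_comm]; exact hzt⟩
          refine ⟨(1, ⟨⟨t, ht⟩, htW⟩), Subtype.ext ?_⟩
          show (z : S) * t = ((1 : ↥R) : S)
          rw [hzt]
          simp
      · intro x y hxy
        exact ⟨1, by rw [hfinj hxy]⟩
    constructor
    · exact IsLocalization.flat ↥T W
    · intro C _ g h' hgh
      exact IsLocalization.ringHom_ext W hgh
end

section
/- Let R ⊆ S be an extension of commutative rings such that S is of finite type as an R-algebra and S is a localization of R at a multiplicatively closed subset Σ of R (i.e., the inclusion R → S satisfies the universal property of localization at Σ). Then there exists x ∈ Σ such that S is the localization of R away from x, i.e., S = R_x. -/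
/-- If `R ⊆ S` is an extension of commutative rings such that `S` is of
finite type as an `R`-algebra and `S` is a localization of `R` at a multiplicatively closed
subset `Σ` of `R`, then `S = R_x` for some `x ∈ Σ`. -/
theorem exists_away_of_finiteType_localization {S : Type*} [CommRing S] (R : Subring S)
    (M : Submonoid R) [IsLocalization M S] [Algebra.FiniteType R S] :
    ∃ x : R, x ∈ M ∧ IsLocalization.Away x S := by
  classical
  obtain ⟨t, ht⟩ := Algebra.FiniteType.out (R := R) (A := S)
  set r : S → R := fun s => (IsLocalization.sec M s).1 with hr
  set m : S → M := fun s => (IsLocalization.sec M s).2 with hmdef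
  have hm : ∀ s : S, s * algebraMap R S (m s : R) = algebraMap R S (r s) :=
    fun s => IsLocalization.sec_spec M s
  set x : R := ∏ s ∈ t, (m s : R) with hx
  have hxM : x ∈ M := prod_mem fun s _ => (m s).2
  refine ⟨x, hxM, ?_⟩
  constructor
  constructor
  · rintro ⟨y, n, rfl⟩
    exact IsLocalization.map_units (M := M) S ⟨x ^ n, pow_mem hxM n⟩
  · intro z
    have key : ∀ z : S, z ∈ Algebra.adjoin R (t : Set S) →
        ∃ (n : ℕ) (c : R), z * (algebraMap R S x) ^ n = algebraMap R S c := by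
      intro z hz
      induction hz using Algebra.adjoin_induction with
      | mem s hs =>
        refine ⟨1, r s * ∏ u ∈ t.erase s, (m u : R), ?_⟩
        rw [pow_one, hx, ← Finset.mul_prod_erase t (fun u => ((m u : R))) hs,
          map_mul, map_mul, ← mul_assoc, hm s]
      | algebraMap a => exact ⟨0, a, by simp⟩
      | add a b _ _ ha hb =>
        obtain ⟨na, ca, hca⟩ := ha
        obtain ⟨nb, cb, hcb⟩ := hb
        refine ⟨na + nb, ca * x ^ nb + cb * x ^ na, ?_⟩
        have h1 : a * (algebraMap R S x) ^ na = algebraMap R S ca := hca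
        have h2 : b * (algebraMap R S x) ^ nb = algebraMap R S cb := hcb
        rw [map_add, map_mul, map_mul, map_pow, map_pow, ← h1, ← h2, pow_add]
        ring
      | mul a b _ _ ha hb =>
        obtain ⟨na, ca, hca⟩ := ha
        obtain ⟨nb, cb, hcb⟩ := hb
        refine ⟨na + nb, ca * cb, ?_⟩
        rw [pow_add, map_mul, ← hca, ← hcb]
        ring
    obtain ⟨n, c, hc⟩ := key z (ht ▸ Algebra.mem_top)
    exact ⟨⟨c, ⟨x ^ n, n, rfl⟩⟩, by simpa [map_pow] using hc⟩
  · intro a b hab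
    refine ⟨1, ?_⟩
    have : (a : S) = (b : S) := by
      simpa [Algebra.algebraMap_ofSubsemiring_apply] using hab
    simpa using Subtype.ext this
end

section
/- Let R be a local commutative ring and R ⊆ S an extension of finite type (S is a finitely generated R-algebra). Then R ⊆ S is a Prüfer extension if and only if there exists a strong divisor s of R such that S is the localization of R away from s (i.e., the inclusion R → S satisfies the universal property of inverting the powers of s). -/
universe u v

universe w

open TensorProduct Polynomial

theorem epi_tmul_eq {A B : Type w} [CommRing A] [CommRing B] [Algebra A B]
    (hepi : ∀ g h : B →+* B ⊗[A] B,
      g.comp (algebraMap A B) = h.comp (algebraMap A B) → g = h) (b b' : B) :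
    (b ⊗ₜ[A] b' : B ⊗[A] B) = 1 ⊗ₜ[A] (b * b') := by
  have h : Algebra.TensorProduct.includeLeftRingHom (R := A) (A := B) (B := B)
      = (Algebra.TensorProduct.includeRight (R := A) (A := B) (B := B)).toRingHom := by
    apply hepi
    ext a
    show (algebraMap A B a) ⊗ₜ[A] (1:B) = (1:B) ⊗ₜ[A] (algebraMap A B a)
    rw [Algebra.algebraMap_eq_smul_one, TensorProduct.smul_tmul]
  have hb : ∀ c : B, (c ⊗ₜ[A] (1:B) : B ⊗[A] B) = (1:B) ⊗ₜ[A] c := by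
    intro c
    have := congrArg (fun f => f c) h
    simpa using this
  have h1 : (b ⊗ₜ[A] b' : B ⊗[A] B) = (b ⊗ₜ[A] 1) * (1 ⊗ₜ[A] b') := by
    rw [Algebra.TensorProduct.tmul_mul_tmul, mul_one, one_mul]
  rw [h1, hb b, Algebra.TensorProduct.tmul_mul_tmul, one_mul]

theorem quot_tensor_subsingleton {A B : Type w} [CommRing A] [CommRing B] [Algebra A B]
    (hepi : ∀ g h : B →+* B ⊗[A] B,
      g.comp (algebraMap A B) = h.comp (algebraMap A B) → g = h) :
    Subsingleton ((B ⧸ LinearMap.range (Algebra.linearMap A B)) ⊗[A] B) := by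
  set Q := B ⧸ LinearMap.range (Algebra.linearMap A B)
  have hπ1 : (LinearMap.range (Algebra.linearMap A B)).mkQ 1 = 0 := by
    rw [Submodule.mkQ_apply, Submodule.Quotient.mk_eq_zero]
    exact ⟨1, by simp [Algebra.linearMap_apply]⟩
  refine subsingleton_iff_forall_eq 0 |>.mpr fun z => ?_
  induction z using TensorProduct.induction_on with
  | zero => rfl
  | add x y hx hy => rw [hx, hy, add_zero]
  | tmul q b' =>
    obtain ⟨b, rfl⟩ := Submodule.mkQ_surjective _ q
    have : ((LinearMap.range (Algebra.linearMap A B)).mkQ b) ⊗ₜ[A] b'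
        = LinearMap.rTensor B (LinearMap.range (Algebra.linearMap A B)).mkQ (b ⊗ₜ[A] b') := rfl
    rw [this, epi_tmul_eq hepi b b']
    rw [LinearMap.rTensor_tmul, hπ1, TensorProduct.zero_tmul]

theorem one_mem_conductor_smul_top {A B : Type w} [CommRing A] [CommRing B] [Algebra A B]
    [Module.Flat A B]
    (hepi : ∀ g h : B →+* B ⊗[A] B,
      g.comp (algebraMap A B) = h.comp (algebraMap A B) → g = h) (x : B) :
    (1 : B) ∈ (LinearMap.ker ((LinearMap.range (Algebra.linearMap A B)).mkQ ∘ₗ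
      LinearMap.toSpanSingleton A B x)) • (⊤ : Submodule A B) := by
  set ψ := (LinearMap.range (Algebra.linearMap A B)).mkQ ∘ₗ LinearMap.toSpanSingleton A B x
  set D : Ideal A := LinearMap.ker ψ
  have hψ' : D ≤ LinearMap.ker ψ := le_refl _
  set ψ' := Submodule.liftQ D ψ hψ'
  have hinj : Function.Injective ψ' := by
    rw [← LinearMap.ker_eq_bot, Submodule.ker_liftQ_eq_bot _ _ _ (le_refl _)]
  have hinj2 := Module.Flat.rTensor_preserves_injective_linearMap (M := B) ψ' hinj
  have hQ := quot_tensor_subsingleton hepi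
  have h1 : Subsingleton ((A ⧸ D) ⊗[A] B) := hinj2.subsingleton
  have h2 : Subsingleton (B ⧸ (D • (⊤ : Submodule A B))) :=
    (quotTensorEquivQuotSMul B D).symm.injective.subsingleton
  have h3 : D • (⊤ : Submodule A B) = ⊤ :=
    Submodule.Quotient.subsingleton_iff.mp h2
  rw [h3]; trivial

theorem flatEpi_finite_surjective {A B : Type w} [CommRing A] [CommRing B] [Algebra A B]
    [IsLocalRing A] [Nontrivial B] [Module.Flat A B] [Module.Finite A B]
    (hepi : ∀ g h : B →+* B ⊗[A] B,
      g.comp (algebraMap A B) = h.comp (algebraMap A B) → g = h) :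
    Function.Surjective (algebraMap A B) := by
  by_cases hm : (IsLocalRing.maximalIdeal A) • (⊤ : Submodule A B) = ⊤
  · exfalso
    have := Submodule.eq_bot_of_le_smul_of_le_jacobson_bot (IsLocalRing.maximalIdeal A) ⊤
      (Module.Finite.fg_top) hm.ge
      (by rw [IsLocalRing.jacobson_eq_maximalIdeal ⊥ bot_ne_top])
    simpa using congrArg (fun (p : Submodule A B) => (1 : B) ∈ p) this
  · haveI : Module.FaithfullyFlat A B :=
      ⟨fun m' hm' h => hm (by rwa [IsLocalRing.eq_maximalIdeal hm'] at h)⟩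
    haveI hQ := quot_tensor_subsingleton hepi
    have hs : Subsingleton (B ⧸ LinearMap.range (Algebra.linearMap A B)) := by
      haveI : Subsingleton ((B ⧸ LinearMap.range (Algebra.linearMap A B)) ⊗[A] B) := hQ
      exact Module.FaithfullyFlat.rTensor_reflects_triviality A B _
    have h3 : LinearMap.range (Algebra.linearMap A B) = ⊤ :=
      Submodule.Quotient.subsingleton_iff.mp hs
    intro b
    have : b ∈ LinearMap.range (Algebra.linearMap A B) := h3 ▸ Submodule.mem_top
    obtain ⟨a, ha⟩ := this
    exact ⟨a, ha⟩

section Key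

variable {S : Type w} [CommRing S] (R : Subring S)

/-- range of subtype is contained in adjoin-subring -/
theorem mem_adjoin_toSubring (x : S) :
    R.subtype.range ≤ (Algebra.adjoin ↥R ({x} : Set S)).toSubring := by
  rw [Subring.range_subtype]
  intro a ha
  have : algebraMap ↥R S ⟨a, ha⟩ ∈ Algebra.adjoin ↥R ({x} : Set S) :=
    Subalgebra.algebraMap_mem _ _
  exact this

set_option maxHeartbeats 2000000 in
theorem key_dichotomy [IsLocalRing ↥R] (hP : R.subtype.IsPrufer) {x : S} (hx : x ∉ R) :
    ∃ t : ↥R, (t : S) * x = 1 := by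
  classical
  -- the subring R[x]
  set T₁ := (Algebra.adjoin ↥R ({x} : Set S)).toSubring with hT₁def
  have hT₁ : R.subtype.range ≤ T₁ := mem_adjoin_toSubring R x
  set f : ↥R →+* ↥T₁ := R.subtype.codRestrict T₁ fun a => hT₁ (R.subtype.mem_range_self a)
  have hFE := hP T₁ hT₁
  letI : Algebra ↥R ↥T₁ := f.toAlgebra
  haveI hflat : Module.Flat ↥R ↥T₁ := hFE.1
  have halg : algebraMap ↥R ↥T₁ = f := rfl
  have hepi : ∀ g h : ↥T₁ →+* ↥T₁ ⊗[↥R] ↥T₁,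
      g.comp (algebraMap ↥R ↥T₁) = h.comp (algebraMap ↥R ↥T₁) → g = h := by
    intro g h hgh
    exact hFE.2 g h hgh
  set x' : ↥T₁ := ⟨x, Algebra.self_mem_adjoin_singleton ↥R x⟩ with hx'def
  have h1 := one_mem_conductor_smul_top hepi x'
  set D : Ideal ↥R := LinearMap.ker ((LinearMap.range (Algebra.linearMap ↥R ↥T₁)).mkQ ∘ₗ
      LinearMap.toSpanSingleton ↥R ↥T₁ x') with hDdef
  -- membership in D
  have hDmem : ∀ a : ↥R, a ∈ D ↔ ∃ a' : ↥R, (a' : S) = (a : S) * x := by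
    intro a
    rw [hDdef, LinearMap.mem_ker, LinearMap.comp_apply, Submodule.mkQ_apply,
      Submodule.Quotient.mk_eq_zero, LinearMap.toSpanSingleton_apply]
    constructor
    · rintro ⟨a', ha'⟩
      refine ⟨a', ?_⟩
      have := congrArg (Subtype.val) ha'
      simp [Algebra.smul_def, halg] at this
      exact this
    · rintro ⟨a', ha'⟩
      refine ⟨a', ?_⟩
      apply Subtype.ext
      simp [Algebra.smul_def, halg]
      exact ha'
  -- D consists of nonunits
  have hDnonunit : ∀ a : ↥R, a ∈ D → ¬IsUnit a := by
    intro a ha hu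
    obtain ⟨a', ha'⟩ := (hDmem a).1 ha
    obtain ⟨u, rfl⟩ := hu
    apply hx
    have h2 : x = ((((u⁻¹ : (↥R)ˣ) : ↥R) * a' : ↥R) : S) := by
      push_cast
      rw [ha', ← mul_assoc, ← Subring.coe_mul, u.inv_mul, OneMemClass.coe_one, one_mul]
    rw [h2]
    exact Subtype.mem _
  -- extract polynomial representation
  have hrep : ∃ p : Polynomial ↥R, (∀ j, p.coeff j ∈ D) ∧ aeval x p = 1 := by
    have := Submodule.smul_induction_on (p := fun b : ↥T₁ =>
        ∃ p : Polynomial ↥R, (∀ j, p.coeff j ∈ D) ∧ aeval x p = (b : S)) h1 ?_ ?_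
    · obtain ⟨p, h₁, h₂⟩ := this
      exact ⟨p, h₁, by simpa using h₂⟩
    · intro r hr b _
      have hb : (b : S) ∈ Algebra.adjoin ↥R ({x} : Set S) := b.2
      rw [Algebra.adjoin_singleton_eq_range_aeval] at hb
      obtain ⟨q, hq⟩ := hb
      refine ⟨r • q, fun j => ?_, ?_⟩
      · rw [Polynomial.coeff_smul, smul_eq_mul]
        exact Ideal.mul_mem_right _ _ hr
      · have hq' : aeval x q = (b : S) := hq
        rw [map_smul, hq']
        rfl
    · rintro b c ⟨p, hp1, hp2⟩ ⟨q, hq1, hq2⟩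
      exact ⟨p + q, fun j => by rw [Polynomial.coeff_add]; exact D.add_mem (hp1 j) (hq1 j),
        by rw [map_add, hp2, hq2]; push_cast; ring⟩
  obtain ⟨p, hpD, hpx⟩ := hrep
  -- the constant coefficient is a nonunit, so 1 - it is a unit
  have h0 : ¬IsUnit (p.coeff 0) := hDnonunit _ (hpD 0)
  have hu1 : IsUnit (1 - p.coeff 0) := by
    by_contra hnu
    have h1m : (1 : ↥R) ∈ IsLocalRing.maximalIdeal ↥R := by
      have := (IsLocalRing.maximalIdeal ↥R).add_mem
        ((IsLocalRing.mem_maximalIdeal _).2 h0) ((IsLocalRing.mem_maximalIdeal _).2 hnu)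
      simpa using this
    exact (IsLocalRing.maximalIdeal.isMaximal ↥R).ne_top ((Ideal.eq_top_iff_one _).2 h1m)
  set u := hu1.unit with hudef
  have hdecomp : aeval x p.divX * x + algebraMap ↥R S (p.coeff 0) = 1 := by
    have h2 := congrArg (aeval x (R := ↥R)) p.divX_mul_X_add
    rw [map_add, map_mul, aeval_X, aeval_C, hpx] at h2
    exact h2
  set w' : S := algebraMap ↥R S ((u⁻¹ : (↥R)ˣ) : ↥R) * aeval x p.divX with hw'def
  have hxw : x * w' = 1 := by
    have h2 : x * aeval x p.divX = algebraMap ↥R S (1 - p.coeff 0) := by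
      rw [map_sub, map_one]
      rw [← hdecomp]
      ring
    have h3 : ((u⁻¹ : (↥R)ˣ) : ↥R) * (1 - p.coeff 0) = 1 := by
      have := u.inv_mul
      rwa [hu1.unit_spec] at this
    calc x * (algebraMap ↥R S ((u⁻¹ : (↥R)ˣ) : ↥R) * aeval x p.divX)
        = algebraMap ↥R S ((u⁻¹ : (↥R)ˣ) : ↥R) * (x * aeval x p.divX) := by ring
      _ = algebraMap ↥R S ((u⁻¹ : (↥R)ˣ) : ↥R) * algebraMap ↥R S (1 - p.coeff 0) := by rw [h2]
      _ = algebraMap ↥R S (((u⁻¹ : (↥R)ˣ) : ↥R) * (1 - p.coeff 0)) := (map_mul _ _ _).symm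
      _ = 1 := by rw [h3, map_one]
  -- w' is integral over R
  set q' : Polynomial ↥R := ((u⁻¹ : (↥R)ˣ) : ↥R) • p.divX with hq'def
  have hw'q : w' = aeval x q' := by
    rw [hq'def, map_smul, Algebra.smul_def, hw'def]
  set n := q'.natDegree with hndef
  have hrepw : w' = ∑ j ∈ Finset.range (n+1), q'.coeff j • x ^ j := by
    rw [hw'q]
    exact aeval_eq_sum_range _
  have hpow : w' ^ (n+1) = ∑ j ∈ Finset.range (n+1), q'.coeff j • w' ^ (n - j) := by
    calc w' ^ (n+1) = (∑ j ∈ Finset.range (n+1), q'.coeff j • x ^ j) * w' ^ n := by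
          rw [← hrepw, pow_succ, mul_comm]
      _ = ∑ j ∈ Finset.range (n+1), q'.coeff j • (x ^ j * w' ^ n) := by
          rw [Finset.sum_mul]
          exact Finset.sum_congr rfl fun j _ => smul_mul_assoc _ _ _
      _ = ∑ j ∈ Finset.range (n+1), q'.coeff j • w' ^ (n - j) := by
          refine Finset.sum_congr rfl fun j hj => ?_
          have hj' : j ≤ n := Nat.lt_succ_iff.mp (Finset.mem_range.mp hj)
          congr 1
          calc x ^ j * w' ^ n = x ^ j * (w' ^ j * w' ^ (n - j)) := by
                rw [← pow_add, Nat.add_sub_cancel' hj']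
            _ = (x * w') ^ j * w' ^ (n - j) := by rw [mul_pow]; ring
            _ = w' ^ (n - j) := by rw [hxw, one_pow, one_mul]
  have hint : IsIntegral ↥R w' := by
    refine ⟨X ^ (n+1) - ∑ j ∈ Finset.range (n+1), C (q'.coeff j) * X ^ (n - j), ?_, ?_⟩
    · apply monic_X_pow_sub
      apply lt_of_le_of_lt (Polynomial.degree_sum_le _ _)
      rw [Finset.sup_lt_iff (α := WithBot ℕ) (by exact WithBot.bot_lt_coe _)]
      intro j _
      refine lt_of_le_of_lt (degree_C_mul_X_pow_le _ _) ?_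
      exact_mod_cast Nat.lt_succ_of_le (Nat.sub_le n j)
    · rw [← Polynomial.aeval_def]
      rw [map_sub, map_pow, aeval_X, map_sum]
      rw [hpow]
      rw [sub_eq_zero]
      refine Finset.sum_congr rfl fun j _ => ?_
      rw [map_mul, aeval_C, map_pow, aeval_X, Algebra.smul_def]
  -- second Prüfer application : R[w'] = R
  have hS0 : (0 : S) ≠ 1 := fun h => zero_ne_one (α := ↥R) (Subtype.ext h)
  set T₂ := (Algebra.adjoin ↥R ({w'} : Set S)).toSubring with hT₂def
  have hT₂ : R.subtype.range ≤ T₂ := mem_adjoin_toSubring R w'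
  set f₂ : ↥R →+* ↥T₂ := R.subtype.codRestrict T₂ fun a => hT₂ (R.subtype.mem_range_self a)
    with hf₂def
  have hFE₂ := hP T₂ hT₂
  letI : Algebra ↥R ↥T₂ := f₂.toAlgebra
  haveI : Module.Flat ↥R ↥T₂ := hFE₂.1
  haveI : Nontrivial ↥T₂ := ⟨0, 1, fun h => hS0 (congrArg Subtype.val h)⟩
  haveI : Module.Finite ↥R ↥T₂ := by
    obtain ⟨G, hG⟩ := hint.fg_adjoin_singleton
    let j : ↥T₂ →ₗ[↥R] S :=
      { toFun := Subtype.val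
        map_add' := fun a b => rfl
        map_smul' := fun a b => rfl }
    have hjinj : Function.Injective j := Subtype.val_injective
    have hmem : ∀ g ∈ G, g ∈ T₂ := fun g hg => by
      have h5 : g ∈ Submodule.span ↥R (G : Set S) := Submodule.subset_span hg
      rw [hG] at h5
      exact h5
    refine ⟨⟨G.attach.image fun g => (⟨g.1, hmem g.1 g.2⟩ : ↥T₂), ?_⟩⟩
    rw [eq_top_iff]
    intro b _
    have hset : j '' (↑(G.attach.image fun g => (⟨g.1, hmem g.1 g.2⟩ : ↥T₂))) = (G : Set S) := by
      ext s
      constructor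
      · rintro ⟨b, hbmem, rfl⟩
        rw [Finset.mem_coe, Finset.mem_image] at hbmem
        obtain ⟨g, _, rfl⟩ := hbmem
        exact g.2
      · intro hs
        refine ⟨⟨s, hmem s hs⟩, ?_, rfl⟩
        rw [Finset.mem_coe, Finset.mem_image]
        exact ⟨⟨s, hs⟩, Finset.mem_attach _ _, rfl⟩
    have hb : j b ∈ Submodule.span ↥R (G : Set S) := by
      rw [hG]
      exact b.2
    exact (Submodule.apply_mem_span_image_iff_mem_span hjinj).1 (by rw [hset]; exact hb)
  have hepi₂ : ∀ g h : ↥T₂ →+* ↥T₂ ⊗[↥R] ↥T₂,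
      g.comp (algebraMap ↥R ↥T₂) = h.comp (algebraMap ↥R ↥T₂) → g = h :=
    fun g h hgh => hFE₂.2 g h hgh
  obtain ⟨t, ht⟩ := flatEpi_finite_surjective hepi₂ ⟨w', Algebra.self_mem_adjoin_singleton ↥R w'⟩
  refine ⟨t, ?_⟩
  have htw : (t : S) = w' := congrArg Subtype.val ht
  rw [htw, mul_comm]
  exact hxw

end Key

section StrongDivisor

variable {A : Type*} [CommRing A]

theorem IsStrongDivisor.principal {t : A} (h : IsStrongDivisor t) (a : A) :
    a ∈ Ideal.span {t} ∨ t ∈ Ideal.span {a} := by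
  rcases h.2 (Ideal.span {a}) with h1 | h1
  · exact Or.inl (h1 (Ideal.mem_span_singleton_self a))
  · exact Or.inr (h1 (Ideal.mem_span_singleton_self t))

theorem isStrongDivisor_of_principal {t : A} (h1 : t ∈ nonZeroDivisors A)
    (h2 : ∀ a : A, a ∈ Ideal.span {t} ∨ t ∈ Ideal.span {a}) : IsStrongDivisor t := by
  refine ⟨h1, fun I => ?_⟩
  by_cases hI : I ≤ Ideal.span {t}
  · exact Or.inl hI
  · right
    obtain ⟨a, haI, hat⟩ := SetLike.not_le_iff_exists.1 hI
    rcases h2 a with h | h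
    · exact absurd h hat
    · have haLe : Ideal.span {a} ≤ I := (Ideal.span_singleton_le_iff_mem I).2 haI
      exact (Ideal.span_singleton_le_iff_mem I).2 (haLe h)

theorem isStrongDivisor_one : IsStrongDivisor (1 : A) :=
  ⟨one_mem _, fun I => Or.inl (by simp [Ideal.span_singleton_one])⟩

theorem IsStrongDivisor.mul {a b : A} (ha : IsStrongDivisor a) (hb : IsStrongDivisor b) :
    IsStrongDivisor (a * b) := by
  refine isStrongDivisor_of_principal (mul_mem ha.1 hb.1) fun c => ?_
  rcases ha.principal c with h | h
  · obtain ⟨d, hd⟩ := Ideal.mem_span_singleton'.1 h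
    rcases hb.principal d with h' | h'
    · obtain ⟨e, he⟩ := Ideal.mem_span_singleton'.1 h'
      left
      exact Ideal.mem_span_singleton'.2 ⟨e, by rw [← hd, ← he]; ring⟩
    · obtain ⟨e, he⟩ := Ideal.mem_span_singleton'.1 h'
      right
      exact Ideal.mem_span_singleton'.2 ⟨e, by rw [← hd, ← he]; ring⟩
  · obtain ⟨d, hd⟩ := Ideal.mem_span_singleton'.1 h
    right
    exact Ideal.mem_span_singleton'.2 ⟨d * b, by rw [← hd]; ring⟩

end StrongDivisor

section Backward

variable {S : Type w} [CommRing S] (R : Subring S)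

theorem prufer_of_away {s : ↥R} (hsd : IsStrongDivisor s) (hloc : IsLocalization.Away s S) :
    R.subtype.IsPrufer := by
  classical
  haveI := hloc
  have halgS : algebraMap ↥R S = R.subtype := rfl
  have hsunit : IsUnit ((s : ↥R) : S) := by
    have := IsLocalization.map_units (M := Submonoid.powers s) S ⟨s, Submonoid.mem_powers s⟩
    exact this
  have hcomp := hsd.principal
  intro T hT
  set f : ↥R →+* ↥T := R.subtype.codRestrict T fun a => hT (R.subtype.mem_range_self a) with hfdef
  letI : Algebra ↥R ↥T := f.toAlgebra
  set W : Submonoid ↥R :=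
    { carrier := {a : ↥R | IsUnit (f a)}
      one_mem' := show IsUnit (f 1) by simp
      mul_mem' := fun {a b} ha hb => show IsUnit (f (a * b)) by
        rw [map_mul]; exact IsUnit.mul ha hb } with hWdef
  have main : ∀ (n : ℕ) (z : ↥T) (r : ↥R), (z : S) * ((s : ↥R) : S)^n = r →
      ∃ w r' : ↥R, IsUnit (f w) ∧ (z : S) * w = r' := by
    intro n
    induction n with
    | zero =>
      intro z r h
      exact ⟨1, r, by simp, by simpa using h⟩
    | succ n ih =>
      intro z r h
      rcases hcomp r with hr | hr
      · obtain ⟨a, ha⟩ := Ideal.mem_span_singleton'.1 hr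
        refine ih z a ?_
        have hc : ((z : S) * ((s:↥R):S)^n) * ((s:↥R):S) = (a : S) * ((s:↥R):S) := by
          rw [mul_assoc, ← pow_succ, h, ← ha]
          push_cast
          ring
        exact hsunit.mul_right_cancel hc
      · obtain ⟨a, ha⟩ := Ideal.mem_span_singleton'.1 hr
        have h1 : ((z : S) * (((s:↥R):S)^n * (a : S))) * ((s:↥R):S) = 1 * ((s:↥R):S) := by
          have : (a : S) * (r : S) = ((s:↥R) : S) := by exact_mod_cast congrArg Subtype.val ha
          calc ((z : S) * (((s:↥R):S)^n * (a : S))) * ((s:↥R):S)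
              = ((z : S) * ((s:↥R):S)^(n+1)) * (a : S) := by rw [pow_succ]; ring
            _ = (r : S) * (a : S) := by rw [h]
            _ = 1 * ((s:↥R):S) := by rw [one_mul, mul_comm, this]
        have h2 : (z : S) * (((s:↥R):S)^n * (a : S)) = 1 := hsunit.mul_right_cancel h1

        refine ⟨s^n * a, 1, ?_, by push_cast; simpa using h2⟩
        have hinv : f (s^n * a) * z = 1 := by
          apply Subtype.ext
          show ((s^n * a : ↥R) : S) * (z : S) = 1
          rw [← h2]
          push_cast
          ring
        exact IsUnit.of_mul_eq_one _ hinv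
  haveI hLoc : IsLocalization W ↥T := by
    refine ⟨fun y => y.2, fun z => ?_, fun {r r'} h => ?_⟩
    · obtain ⟨⟨r, c⟩, hc⟩ := IsLocalization.surj (M := Submonoid.powers s) (S := S) (z : S)
      obtain ⟨n, hn⟩ := c.2
      have h : (z : S) * ((s : ↥R) : S)^n = algebraMap ↥R S r := by
        rw [← hc]
        congr 1
        have hn2 : s ^ n = (c : ↥R) := hn
        rw [show algebraMap ↥R S ((r, c).2 : ↥R) = (((r, c).2 : ↥R) : S) from rfl, ← hn2]
        push_cast
        ring
      obtain ⟨w, r', hw, hzw⟩ := main n z r h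
      refine ⟨(r', ⟨w, hw⟩), Subtype.ext ?_⟩
      exact hzw
    · have hrr : r = r' := by
        have h2 := congrArg (fun t : ↥T => (t : S)) h
        exact Subtype.ext h2
      exact ⟨1, by rw [hrr]⟩
  constructor
  · exact IsLocalization.flat ↥T W
  · intro C _ g h hgh
    exact IsLocalization.ringHom_ext W hgh

end Backward


/-- Let `R` be local and `R ⊆ S` an extension of finite type.  Then
`R ⊆ S` is Prüfer iff `S = R_s` for some strong divisor `s` of `R`. -/
theorem prufer_iff_away_strong_divisor {S : Type*} [CommRing S] (R : Subring S)
    [IsLocalRing R] [Algebra.FiniteType R S] :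
    R.subtype.IsPrufer ↔ ∃ s : R, IsStrongDivisor s ∧ IsLocalization.Away s S := by
  classical
  constructor
  · intro hP
    obtain ⟨G, hG⟩ := (inferInstance : Algebra.FiniteType ↥R S).out
    have hdi : ∀ g : S, ∃ t : ↥R, (g ∈ R → t = 1) ∧ (g ∉ R → (t : S) * g = 1) := by
      intro g
      by_cases hg : g ∈ R
      · exact ⟨1, fun _ => rfl, fun h => absurd hg h⟩
      · obtain ⟨t, ht⟩ := key_dichotomy R hP hg
        exact ⟨t, fun h => absurd h hg, fun _ => ht⟩
    choose tf htf1 htf2 using hdi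
    -- each tf g is a strong divisor
    have hsd1 : ∀ g : S, IsStrongDivisor (tf g) := by
      intro g
      by_cases hg : g ∈ R
      · rw [htf1 g hg]; exact isStrongDivisor_one
      · have ht := htf2 g hg
        refine isStrongDivisor_of_principal ?_ ?_
        · rw [mem_nonZeroDivisors_iff_right]
          intro r hr
          have hr' : (r : S) * (tf g : S) = 0 := by exact_mod_cast congrArg Subtype.val hr
          apply Subtype.ext
          have : (r : S) * ((tf g : S) * g) = 0 := by rw [← mul_assoc, hr', zero_mul]
          rw [ht, mul_one] at this
          exact this
        · intro a
          by_cases hy : (a : S) * g ∈ R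
          · left
            refine Ideal.mem_span_singleton'.2 ⟨⟨(a : S) * g, hy⟩, ?_⟩
            apply Subtype.ext
            push_cast
            calc ((a : S) * g) * (tf g : S) = (a : S) * ((tf g : S) * g) := by ring
              _ = a := by rw [ht, mul_one]
          · obtain ⟨t', ht'⟩ := key_dichotomy R hP hy
            right
            refine Ideal.mem_span_singleton'.2 ⟨t', ?_⟩
            apply Subtype.ext
            push_cast
            calc (t' : S) * (a : S) = (t' : S) * ((a : S) * ((tf g : S) * g)) := by
                  rw [ht, mul_one]
              _ = ((t' : S) * ((a : S) * g)) * (tf g : S) := by ring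
              _ = (tf g : S) := by rw [ht', one_mul]
    set s : ↥R := ∏ g ∈ G, tf g with hsdef
    have hsd : IsStrongDivisor s :=
      Finset.prod_induction tf IsStrongDivisor (fun _ _ ha hb => ha.mul hb)
        isStrongDivisor_one (fun g _ => hsd1 g)
    have hucoe : ∀ g : S, IsUnit ((tf g : ↥R) : S) := by
      intro g
      by_cases hg : g ∈ R
      · rw [htf1 g hg]; simp
      · exact IsUnit.of_mul_eq_one g (htf2 g hg)
    have hscoe : ((s : ↥R) : S) = ∏ g ∈ G, ((tf g : ↥R) : S) := by
      rw [hsdef]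
      exact map_prod R.subtype tf G
    have hsu : IsUnit ((s : ↥R) : S) := by
      rw [hscoe]
      exact Finset.prod_induction _ IsUnit (fun _ _ => IsUnit.mul) isUnit_one
        (fun g _ => hucoe g)
    refine ⟨s, hsd, ?_, ?_, ?_⟩
    · -- map_units
      rintro ⟨y, n, rfl⟩
      show IsUnit (algebraMap ↥R S (s ^ n))
      have : algebraMap ↥R S (s ^ n) = ((s : ↥R) : S) ^ n := by push_cast; rfl
      rw [this]
      exact hsu.pow n
    · -- surjectivity
      intro z
      have hz : z ∈ Algebra.adjoin ↥R (↑G : Set S) := by rw [hG]; trivial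
      have hrep : ∃ (n : ℕ) (r : ↥R), z * ((s : ↥R) : S) ^ n = (r : S) := by
        induction hz using Algebra.adjoin_induction with
        | mem g hg =>
          by_cases hgR : g ∈ R
          · exact ⟨0, ⟨g, hgR⟩, by simp⟩
          · refine ⟨1, ∏ g' ∈ G.erase g, tf g', ?_⟩
            rw [pow_one, hscoe, ← Finset.mul_prod_erase _ _ hg, ← mul_assoc,
              mul_comm g, htf2 g hgR, one_mul]
            exact (map_prod R.subtype tf (G.erase g)).symm
        | algebraMap r => exact ⟨0, r, by simp; rfl⟩
        | add x y _ _ hx hy =>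
          obtain ⟨n, r, hr⟩ := hx
          obtain ⟨m, r', hr'⟩ := hy
          refine ⟨n + m, r * s ^ m + r' * s ^ n, ?_⟩
          push_cast
          rw [pow_add]
          calc (x + y) * (((s:↥R):S) ^ n * ((s:↥R):S) ^ m)
              = (x * ((s:↥R):S) ^ n) * ((s:↥R):S) ^ m
                + (y * ((s:↥R):S) ^ m) * ((s:↥R):S) ^ n := by ring
            _ = (r : S) * ((s:↥R):S) ^ m + (r' : S) * ((s:↥R):S) ^ n := by rw [hr, hr']
        | mul x y _ _ hx hy =>
          obtain ⟨n, r, hr⟩ := hx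
          obtain ⟨m, r', hr'⟩ := hy
          refine ⟨n + m, r * r', ?_⟩
          push_cast
          rw [pow_add]
          calc (x * y) * (((s:↥R):S) ^ n * ((s:↥R):S) ^ m)
              = (x * ((s:↥R):S) ^ n) * (y * ((s:↥R):S) ^ m) := by ring
            _ = (r : S) * (r' : S) := by rw [hr, hr']
      obtain ⟨n, r, hr⟩ := hrep
      exact ⟨(r, ⟨s ^ n, pow_mem (Submonoid.mem_powers s) n⟩), by
        show z * algebraMap ↥R S (s ^ n) = algebraMap ↥R S r
        have hcast : algebraMap ↥R S (s ^ n) = ((s : ↥R) : S) ^ n := by push_cast; rfl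
        rw [hcast]
        exact hr⟩
    · -- exists_of_eq
      intro r r' h
      exact ⟨1, by rw [Subtype.ext (h : ((r : ↥R) : S) = (r' : S))]⟩
  · rintro ⟨s, hsd, hloc⟩
    exact prufer_of_away R hsd hloc
end

section
/- Let R be a local commutative ring and x ∈ R a non-zero-divisor. Then x is a strong divisor of R if and only if the extension R ⊆ R_x is Prüfer, where R_x is the localization of R away from x (into which R embeds since x is regular). -/
universe u v

open TensorProduct in
lemma RingHom.IsFlatEpi.tmul_comm {A B : Type u} [CommRing A] [CommRing B] {f : A →+* B}
    (h : f.IsFlatEpi) : letI := f.toAlgebra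
    ∀ t : B, (t ⊗ₜ[A] (1 : B) : B ⊗[A] B) = 1 ⊗ₜ[A] t := by
  letI := f.toAlgebra
  intro t
  have hc : (Algebra.TensorProduct.includeLeftRingHom (R := A) (A := B) (B := B)).comp f =
      (Algebra.TensorProduct.includeRight (R := A) (A := B) (B := B)).toRingHom.comp f := by
    ext a
    show (f a) ⊗ₜ[A] (1 : B) = 1 ⊗ₜ[A] (f a)
    have hfa : f a = a • (1 : B) := Algebra.algebraMap_eq_smul_one a
    rw [hfa, smul_tmul]
  exact RingHom.congr_fun (h.2 _ _ hc) t

open TensorProduct in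
/-- The key consequence of being a flat epimorphism: for any `t` in the target, the
"conductor ideal" `{a | a • t ∈ R}` generates the unit ideal of the target. -/
theorem conductor_smul_top {R A : Type*} [CommRing R] [CommRing A] [Algebra R A]
    [Module.Flat R A]
    (hepi : ∀ t : A, (t ⊗ₜ[R] (1 : A) : A ⊗[R] A) = 1 ⊗ₜ[R] t) (t : A) :
    (Submodule.comap (LinearMap.toSpanSingleton R A t)
      (LinearMap.range (Algebra.linearMap R A))) • (⊤ : Submodule R A) = ⊤ := by
  set R₀ := LinearMap.range (Algebra.linearMap R A) with hR₀
  set I : Ideal R := Submodule.comap (LinearMap.toSpanSingleton R A t) R₀ with hI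
  set π := R₀.mkQ with hπ
  set g : R →ₗ[R] (A ⧸ R₀) := π ∘ₗ LinearMap.toSpanSingleton R A t with hg
  have hker : LinearMap.ker g = I := by
    ext a
    simp only [hg, LinearMap.mem_ker, LinearMap.coe_comp, Function.comp_apply,
      LinearMap.toSpanSingleton_apply, hπ, Submodule.mkQ_apply, Submodule.Quotient.mk_eq_zero,
      hI, Submodule.mem_comap]
  set φ : (R ⧸ I) →ₗ[R] (A ⧸ R₀) := Submodule.liftQ I g hker.ge with hφ
  have hinj : Function.Injective φ := by
    rw [← LinearMap.ker_eq_bot]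
    exact Submodule.ker_liftQ_eq_bot I g hker.ge hker.le
  rw [Submodule.eq_top_iff']
  intro a
  have hπ1 : π 1 = 0 := by
    rw [hπ, Submodule.mkQ_apply, Submodule.Quotient.mk_eq_zero]
    exact ⟨1, map_one (algebraMap R A)⟩
  have h0 : (π t ⊗ₜ[R] a : (A ⧸ R₀) ⊗[R] A) = 0 := by
    have h1 := congrArg (TensorProduct.map π (LinearMap.mulLeft R a)) (hepi t)
    simp only [TensorProduct.map_tmul, LinearMap.mulLeft_apply, mul_one, hπ1,
      TensorProduct.zero_tmul] at h1
    exact h1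
  have h2 : ((Ideal.Quotient.mk I 1 : R ⧸ I) ⊗ₜ[R] a : (R ⧸ I) ⊗[R] A) = 0 := by
    apply Module.Flat.rTensor_preserves_injective_linearMap (M := A) φ hinj
    rw [map_zero]
    show (φ.rTensor A) (_ ⊗ₜ a) = 0
    rw [LinearMap.rTensor_tmul]
    have hφ1 : φ (Ideal.Quotient.mk I 1) = π t := by
      show φ (Submodule.Quotient.mk 1) = π t
      rw [hφ, Submodule.liftQ_apply, hg]
      simp
    rw [hφ1]
    exact h0
  have h3 := congrArg (TensorProduct.quotTensorEquivQuotSMul A I) h2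
  rw [map_zero, TensorProduct.quotTensorEquivQuotSMul_mk_tmul, one_smul] at h3
  exact (Submodule.Quotient.mk_eq_zero _).mp h3

open TensorProduct in
/-- If `R → S` is a Prüfer extension with `R` local, then for any `s : S`, either `s` is in
the image of `R`, or `1` lies in `m • R[s]`. -/
lemma prufer_adjoin {R : Type u} [CommRing R] [IsLocalRing R] {S : Type u} [CommRing S]
    [Algebra R S] (hp : (algebraMap R S).IsPrufer) (s : S) :
    s ∈ (algebraMap R S).range ∨
      (1 : S) ∈ (IsLocalRing.maximalIdeal R) •
        (Subalgebra.toSubmodule (Algebra.adjoin R {s})) := by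
  by_cases hs : s ∈ (algebraMap R S).range
  · exact Or.inl hs
  right
  set T : Subring S := (Algebra.adjoin R {s}).toSubring with hTdef
  have hT : (algebraMap R S).range ≤ T := by
    rintro _ ⟨a, rfl⟩
    exact (Algebra.adjoin R {s}).algebraMap_mem a
  set f := (algebraMap R S).codRestrict T fun a => hT ((algebraMap R S).mem_range_self a) with hf
  have hfe := hp T hT
  letI : Algebra R ↥T := f.toAlgebra
  haveI : Module.Flat R ↥T := hfe.1
  have hepi : ∀ t : ↥T, (t ⊗ₜ[R] 1 : ↥T ⊗[R] ↥T) = 1 ⊗ₜ[R] t := hfe.tmul_comm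
  have hsT : s ∈ T := by
    rw [hTdef, Subalgebra.mem_toSubring]
    exact Algebra.self_mem_adjoin_singleton R s
  set sT : ↥T := ⟨s, hsT⟩ with hsTdef
  have hcond := conductor_smul_top hepi sT
  have halg : algebraMap R ↥T = f := RingHom.algebraMap_toAlgebra f
  have hcoesmul : ∀ (a : R) (v : ↥T), ((a • v : ↥T) : S) = algebraMap R S a * (v : S) := by
    intro a v
    rw [Algebra.smul_def, halg]
    rfl
  have hIm : Submodule.comap (LinearMap.toSpanSingleton R ↥T sT)
      (LinearMap.range (Algebra.linearMap R ↥T)) ≤ IsLocalRing.maximalIdeal R := by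
    intro a ha
    rw [Submodule.mem_comap] at ha
    obtain ⟨b, hb⟩ := ha
    rw [IsLocalRing.mem_maximalIdeal, mem_nonunits_iff]
    intro hua
    apply hs
    have hval : algebraMap R S b = algebraMap R S a * s := by
      have h := congrArg (Subtype.val) hb
      rw [LinearMap.toSpanSingleton_apply, hcoesmul] at h
      exact h
    refine ⟨↑hua.unit⁻¹ * b, ?_⟩
    rw [map_mul, hval, ← mul_assoc, ← map_mul]
    rw [IsUnit.val_inv_mul, map_one, one_mul]
  have h1T : (1 : ↥T) ∈ (IsLocalRing.maximalIdeal R) • (⊤ : Submodule R ↥T) := by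
    refine Submodule.smul_mono hIm le_rfl ?_
    rw [hcond]
    exact Submodule.mem_top
  let ι : ↥T →ₗ[R] S :=
    { toFun := Subtype.val
      map_add' := fun _ _ => rfl
      map_smul' := fun a v => by
        simp only [RingHom.id_apply]
        rw [hcoesmul, Algebra.smul_def] }
  have hrange : Submodule.map ι ⊤ = Subalgebra.toSubmodule (Algebra.adjoin R {s}) := by
    ext v
    simp only [Submodule.mem_map, Submodule.mem_top, true_and, Subalgebra.mem_toSubmodule]
    constructor
    · rintro ⟨⟨w, hw⟩, rfl⟩
      exact (Subalgebra.mem_toSubring).mp hw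
    · intro hv
      exact ⟨⟨v, (Subalgebra.mem_toSubring).mpr hv⟩, rfl⟩
  have hmem := Submodule.mem_map_of_mem (f := ι) h1T
  rw [Submodule.map_smul'', hrange] at hmem
  exact hmem

/-- Extract a polynomial certificate from membership in `J • R[s]`. -/
lemma exists_poly_of_mem_smul {R : Type u} {S : Type v} [CommRing R] [CommRing S] [Algebra R S]
    (J : Ideal R) (s : S) {v : S}
    (hv : v ∈ J • (Subalgebra.toSubmodule (Algebra.adjoin R {s}))) :
    ∃ q : Polynomial R, (∀ k, q.coeff k ∈ J) ∧ Polynomial.aeval s q = v := by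
  refine Submodule.smul_induction_on hv ?_ ?_
  · intro a ha t ht
    rw [Subalgebra.mem_toSubmodule, Algebra.adjoin_singleton_eq_range_aeval,
      AlgHom.mem_range] at ht
    obtain ⟨p, hp⟩ := ht
    refine ⟨Polynomial.C a * p, fun k => ?_, ?_⟩
    · rw [Polynomial.coeff_C_mul]
      exact Ideal.mul_mem_right _ _ ha
    · rw [map_mul, Polynomial.aeval_C, hp, ← Algebra.smul_def]
  · rintro z w ⟨q1, h1, e1⟩ ⟨q2, h2, e2⟩
    exact ⟨q1 + q2, fun k => by rw [Polynomial.coeff_add]; exact add_mem (h1 k) (h2 k),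
      by rw [map_add, e1, e2]⟩

/-- Nakayama: `1` cannot lie in `m • R[s]` when `R[s]` is a finitely generated module. -/
lemma not_one_mem_max_smul_of_fg {R : Type u} {S : Type v} [CommRing R] [IsLocalRing R]
    [CommRing S] [Nontrivial S] [Algebra R S] {s : S}
    (hfg : (Subalgebra.toSubmodule (Algebra.adjoin R {s})).FG)
    (h1 : (1 : S) ∈ (IsLocalRing.maximalIdeal R) •
      (Subalgebra.toSubmodule (Algebra.adjoin R {s}))) : False := by
  set N := Subalgebra.toSubmodule (Algebra.adjoin R {s}) with hN
  have hle : N ≤ (IsLocalRing.maximalIdeal R) • N := by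
    intro v hv
    have hv' : v ∈ Algebra.adjoin R {s} := hv
    have hmul : ∀ z ∈ (IsLocalRing.maximalIdeal R) • N,
        v * z ∈ (IsLocalRing.maximalIdeal R) • N := by
      intro z hz
      refine Submodule.smul_induction_on hz ?_ ?_
      · intro a ha t ht
        have ht' : t ∈ Algebra.adjoin R {s} := ht
        rw [mul_smul_comm]
        exact Submodule.smul_mem_smul ha (Subalgebra.mul_mem _ hv' ht')
      · intro z1 z2 hz1 hz2
        rw [mul_add]
        exact add_mem hz1 hz2
    have := hmul 1 h1
    rwa [mul_one] at this
  have hbot := Submodule.eq_bot_of_le_smul_of_le_jacobson_bot (IsLocalRing.maximalIdeal R) N hfg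
    hle (IsLocalRing.maximalIdeal_le_jacobson ⊥)
  have h1N : (1 : S) ∈ N := (Algebra.adjoin R {s}).one_mem
  rw [hbot] at h1N
  exact one_ne_zero (Submodule.mem_bot R |>.mp h1N)

open Polynomial IsLocalRing in
/-- Let `R` be a local ring and `x` a non-zero-divisor of `R`.  Then `x` is
a strong divisor iff the extension `R ⊆ R_x` is Prüfer. -/
theorem isStrongDivisor_iff_away_prufer {R : Type*} [CommRing R] [IsLocalRing R]
    (x : R) (hx : x ∈ nonZeroDivisors R) :
    IsStrongDivisor x ↔ (algebraMap R (Localization.Away x)).IsPrufer := by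
  classical
  set φ := algebraMap R (Localization.Away x) with hφdef
  have hpow : Submonoid.powers x ≤ nonZeroDivisors R := by
    rintro a ⟨n, rfl⟩
    exact pow_mem hx n
  have hinj : Function.Injective φ := IsLocalization.injective (Localization.Away x) hpow
  have hxunit : IsUnit (φ x) :=
    IsUnit.of_mul_eq_one _ (IsLocalization.Away.mul_invSelf x)
  constructor
  · -- strong divisor implies Prüfer
    intro hsd T hT
    set f := φ.codRestrict T fun a => hT (φ.mem_range_self a) with hf
    letI : Algebra R ↥T := f.toAlgebra
    have halg : algebraMap R ↥T = f := RingHom.algebraMap_toAlgebra f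
    set M : Submonoid R :=
      { carrier := {a : R | IsUnit (f a)}
        one_mem' := by
          simp only [Set.mem_setOf_eq, map_one]
          exact isUnit_one
        mul_mem' := fun ha hb => by
          simp only [Set.mem_setOf_eq, map_mul] at *
          exact ha.mul hb } with hM
    have hclaim : ∀ (n : ℕ) (r : R) (z : ↥T), (z : Localization.Away x) * φ (x ^ n) = φ r →
        ∃ (a σ : R), IsUnit (f σ) ∧ z * f σ = f a := by
      intro n
      induction n with
      | zero =>
        intro r z hz
        rw [pow_zero, map_one, mul_one] at hz
        refine ⟨r, 1, by rw [map_one]; exact isUnit_one, ?_⟩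
        rw [map_one, mul_one]
        exact Subtype.ext hz
      | succ n ih =>
        intro r z hz
        rcases hsd.2 (Ideal.span {r}) with h | h
        · -- r is divisible by x
          have hrx : r ∈ Ideal.span {x} := h (Ideal.mem_span_singleton_self r)
          obtain ⟨v, hv⟩ := Ideal.mem_span_singleton'.mp hrx
          refine ih v z ?_
          have h2 : ((z : Localization.Away x) * φ (x ^ n)) * φ x = φ v * φ x := by
            calc ((z : Localization.Away x) * φ (x ^ n)) * φ x
                = (z : Localization.Away x) * φ (x ^ (n + 1)) := by
                  rw [mul_assoc, ← map_mul, ← pow_succ]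
              _ = φ r := hz
              _ = φ v * φ x := by rw [← map_mul, hv]
          exact hxunit.mul_right_cancel h2
        · -- x is divisible by r
          have hxr : x ∈ Ideal.span {r} := h (Ideal.mem_span_singleton_self x)
          obtain ⟨sdiv, hs⟩ := Ideal.mem_span_singleton.mp hxr
          have h3 : (z : Localization.Away x) * φ (sdiv * x ^ n) * φ x = 1 * φ x := by
            calc (z : Localization.Away x) * φ (sdiv * x ^ n) * φ x
                = ((z : Localization.Away x) * φ (x ^ (n + 1))) * φ sdiv := by
                  rw [map_mul, pow_succ, map_mul]
                  ring
              _ = φ r * φ sdiv := by rw [hz]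
              _ = φ x := by rw [← map_mul, ← hs]
              _ = 1 * φ x := (one_mul _).symm
          have h4 : (z : Localization.Away x) * φ (sdiv * x ^ n) = 1 := hxunit.mul_right_cancel h3
          refine ⟨1, sdiv * x ^ n, ?_, ?_⟩
          · refine IsUnit.of_mul_eq_one z (Subtype.ext ?_)
            show φ (sdiv * x ^ n) * (z : Localization.Away x) = 1
            rw [mul_comm]
            exact h4
          · rw [map_one]
            exact Subtype.ext h4
    haveI hloc : IsLocalization M ↥T := by
      refine ⟨?_, ?_, ?_⟩
      · rintro ⟨σ, hσ⟩
        rw [halg]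
        exact hσ
      · intro z
        obtain ⟨⟨r, σ⟩, hzr⟩ := IsLocalization.surj (Submonoid.powers x) (z : Localization.Away x)
        obtain ⟨n, hn⟩ := σ.2
        obtain ⟨a, σ', hσ', hza⟩ := hclaim n r z (by
          have hn' : x ^ n = (σ : R) := hn
          rw [hn']
          exact hzr)
        exact ⟨(a, ⟨σ', hσ'⟩), by rw [halg]; exact hza⟩
      · intro a b hab
        rw [halg] at hab
        have hab' : φ a = φ b := congrArg Subtype.val hab
        exact ⟨1, by rw [OneMemClass.coe_one, one_mul, one_mul]; exact hinj hab'⟩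
    constructor
    · exact IsLocalization.flat ↥T M
    · intro C _ g h hcomp
      refine IsLocalization.ringHom_ext M ?_
      rw [halg]
      exact hcomp
  · -- Prüfer implies strong divisor
    intro hp
    haveI : Nontrivial (Localization.Away x) :=
      ⟨⟨1, 0, fun h => one_ne_zero (α := R)
        (hinj (show φ 1 = φ 0 by rw [map_one, map_zero]; exact h))⟩⟩
    have key : ∀ r : R, r ∈ Ideal.span {x} ∨ x ∈ Ideal.span {r} := by
      intro r
      by_cases hr : r ∈ Ideal.span {x}
      · exact Or.inl hr
      right
      set y : Localization.Away x := φ r * IsLocalization.Away.invSelf x with hy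
      have hsm : ∀ (a : R) (v : Localization.Away x), a • v = φ a * v := fun a v =>
        Algebra.smul_def a v
      have hyx : y * φ x = φ r := by
        rw [hy, mul_assoc, mul_comm (IsLocalization.Away.invSelf x),
          IsLocalization.Away.mul_invSelf, mul_one]
      have hynr : y ∉ φ.range := by
        rintro ⟨c, hc⟩
        apply hr
        rw [Ideal.mem_span_singleton']
        refine ⟨c, hinj ?_⟩
        rw [map_mul, hc, hyx]
      rcases prufer_adjoin hp y with hyr | h1
      · exact absurd hyr hynr
      obtain ⟨q0, hq0c, hq0⟩ := exists_poly_of_mem_smul _ y h1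
      have hex : ∃ n, ∃ q : R[X], q.natDegree ≤ n ∧ (∀ k, q.coeff k ∈ maximalIdeal R) ∧
          aeval y q = 1 := ⟨q0.natDegree, q0, le_rfl, hq0c, hq0⟩
      set n := Nat.find hex with hn
      obtain ⟨q, hdeg, hcoef, hq⟩ := Nat.find_spec hex
      rw [← hn] at hdeg
      have hn0 : n ≠ 0 := by
        intro h0
        have hdeg0 : q.natDegree ≤ 0 := h0 ▸ hdeg
        have hq' := hq
        rw [Polynomial.eq_C_of_natDegree_le_zero hdeg0, aeval_C] at hq'
        have h01 : q.coeff 0 = 1 := hinj (by rw [map_one]; exact hq')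
        exact (Ideal.ne_top_iff_one _).mp (Ideal.IsMaximal.ne_top (maximalIdeal.isMaximal R))
          (h01 ▸ hcoef 0)
      set c := q.coeff n with hc
      set u : Localization.Away x := φ c * y with hu
      have hsum : ∑ k ∈ Finset.range (n + 1), q.coeff k • y ^ k = 1 := by
        rw [← Polynomial.aeval_eq_sum_range' (Nat.lt_succ_of_le hdeg)]
        exact hq
      have hnn : n - 1 + 1 = n := Nat.succ_pred_eq_of_ne_zero hn0
      have e1 : ∀ k ∈ Finset.range n,
          φ c ^ (n - 1) * (q.coeff k • y ^ k) = φ (q.coeff k) * φ c ^ (n - 1 - k) * u ^ k := by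
        intro k hk
        rw [Finset.mem_range] at hk
        have hkle : n - 1 - k + k = n - 1 := by omega
        have hsplit : φ c ^ (n - 1 - k) * φ c ^ k = φ c ^ (n - 1) := by rw [← pow_add, hkle]
        calc φ c ^ (n - 1) * (q.coeff k • y ^ k)
            = φ c ^ (n - 1 - k) * φ c ^ k * (φ (q.coeff k) * y ^ k) := by rw [hsm, ← hsplit]
          _ = φ (q.coeff k) * φ c ^ (n - 1 - k) * (φ c ^ k * y ^ k) := by ring
          _ = φ (q.coeff k) * φ c ^ (n - 1 - k) * u ^ k := by
              conv_rhs => rw [hu, mul_pow]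
      have e2 : φ c ^ (n - 1) * (q.coeff n • y ^ n) = u ^ n := by
        conv_rhs => rw [hu, mul_pow]
        rw [hsm, ← hc, ← mul_assoc, ← pow_succ, hnn]
      have hkey : u ^ n + ∑ k ∈ Finset.range n, φ (q.coeff k) * φ c ^ (n - 1 - k) * u ^ k
          = φ c ^ (n - 1) := by
        have hmul := congrArg (fun z => φ c ^ (n - 1) * z) hsum
        simp only [mul_one] at hmul
        rw [Finset.sum_range_succ, mul_add, Finset.mul_sum, Finset.sum_congr rfl e1, e2,
          add_comm] at hmul
        exact hmul
      have hint : IsIntegral R u := by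
        refine ⟨Polynomial.X ^ n + ((∑ k ∈ Finset.range n,
          Polynomial.C (q.coeff k * c ^ (n - 1 - k)) * Polynomial.X ^ k)
            - Polynomial.C (c ^ (n - 1))), ?_, ?_⟩
        · apply Polynomial.monic_X_pow_add
          apply lt_of_le_of_lt (Polynomial.degree_sub_le _ _)
          rw [max_lt_iff]
          constructor
          · apply lt_of_le_of_lt (Polynomial.degree_sum_le _ _)
            refine (Finset.sup_lt_iff (WithBot.bot_lt_coe n)).mpr fun k hk => ?_
            apply lt_of_le_of_lt (Polynomial.degree_C_mul_X_pow_le _ _)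
            exact Nat.cast_lt.mpr (Finset.mem_range.mp hk)
          · apply lt_of_le_of_lt Polynomial.degree_C_le
            exact Nat.cast_pos.mpr (Nat.pos_of_ne_zero hn0)
        · rw [← Polynomial.aeval_def]
          rw [map_add, map_sub, map_pow, Polynomial.aeval_X, map_sum]
          simp only [map_mul, Polynomial.aeval_C, map_pow, Polynomial.aeval_X]
          simp only [← hφdef]
          rw [← add_sub_assoc, hkey, sub_self]
      rcases prufer_adjoin hp u with hur | h1u
      · obtain ⟨e, he⟩ := hur
        by_cases hue : IsUnit e
        · have hex3 : e * x = c * r := hinj (by rw [map_mul, map_mul, he, hu, mul_assoc, hyx])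
          rw [Ideal.mem_span_singleton']
          refine ⟨↑hue.unit⁻¹ * c, ?_⟩
          have hcancel : (↑hue.unit⁻¹ : R) * (e * x) = x := by
            rw [← mul_assoc, IsUnit.val_inv_mul, one_mul]
          rw [mul_assoc, ← hex3, hcancel]
        · exfalso
          have hem : e ∈ maximalIdeal R := by
            rw [IsLocalRing.mem_maximalIdeal, mem_nonunits_iff]
            exact hue
          set q' := q - Polynomial.monomial n c + Polynomial.monomial (n - 1) e with hq'
          have hcoef' : ∀ k, q'.coeff k ∈ maximalIdeal R := by
            intro k
            rw [hq', Polynomial.coeff_add, Polynomial.coeff_sub, Polynomial.coeff_monomial,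
              Polynomial.coeff_monomial]
            have hcm : c ∈ maximalIdeal R := hc ▸ hcoef n
            split_ifs
            · exact add_mem (sub_mem (hcoef k) hcm) hem
            · exact add_mem (sub_mem (hcoef k) hcm) (zero_mem _)
            · exact add_mem (sub_mem (hcoef k) (zero_mem _)) hem
            · exact add_mem (sub_mem (hcoef k) (zero_mem _)) (zero_mem _)
          have hdeg' : q'.natDegree ≤ n - 1 := by
            rw [Polynomial.natDegree_le_iff_coeff_eq_zero]
            intro N hN
            have hNn : n ≤ N := by omega
            rw [hq', Polynomial.coeff_add, Polynomial.coeff_sub, Polynomial.coeff_monomial,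
              Polynomial.coeff_monomial]
            rcases eq_or_lt_of_le hNn with hEq | hlt
            · rw [← hEq, if_pos rfl, if_neg (by omega), hc, sub_self, add_zero]
            · rw [if_neg (by omega), if_neg (by omega),
                Polynomial.coeff_eq_zero_of_natDegree_lt (lt_of_le_of_lt hdeg hlt),
                sub_zero, add_zero]
          have haev' : aeval y q' = 1 := by
            rw [hq', map_add, map_sub, hq, Polynomial.aeval_monomial, Polynomial.aeval_monomial]
            simp only [← hφdef]
            have hpe : φ e * y ^ (n - 1) = φ c * y ^ n := by
              rw [he, hu, mul_assoc, ← pow_succ', hnn]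
            rw [hpe]
            ring
          exact Nat.find_min hex (show n - 1 < n by omega) ⟨q', hdeg', hcoef', haev'⟩
      · exact False.elim
          (not_one_mem_max_smul_of_fg (IsIntegral.fg_adjoin_singleton hint) h1u)
    refine ⟨hx, fun I => ?_⟩
    by_cases hI : I ≤ Ideal.span {x}
    · exact Or.inl hI
    right
    rw [SetLike.not_le_iff_exists] at hI
    obtain ⟨r, hrI, hrx⟩ := hI
    rcases key r with h | h
    · exact absurd h hrx
    · have hrle : Ideal.span {r} ≤ I := (Ideal.span_singleton_le_iff_mem _).mpr hrI
      exact (Ideal.span_singleton_le_iff_mem _).mpr (hrle h)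
end

section
/- Let f : R → R' be a faithfully flat ring homomorphism between local commutative rings and let x ∈ R. If f(x) is a strong divisor of R', then x is a strong divisor of R. -/
/-- Descent of divisibility along a faithfully flat map. -/
lemma mem_span_of_apply_mem_span {R R' : Type*} [CommRing R] [CommRing R'] (f : R →+* R')
    (hff : letI := f.toAlgebra; Module.FaithfullyFlat R R')
    (a t : R) (h : f a ∈ Ideal.span {f t}) : a ∈ Ideal.span {t} := by
  letI := f.toAlgebra
  haveI : Module.FaithfullyFlat R R' := hff
  set Q := R ⧸ Ideal.span {t}
  set g : R →ₗ[R] Q := LinearMap.toSpanSingleton R Q (Submodule.Quotient.mk a)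
  obtain ⟨c, hc⟩ := Ideal.mem_span_singleton.mp h
  have key : ∀ (m : R'), m ⊗ₜ[R] (Submodule.Quotient.mk a : Q) = 0 := by
    intro m
    have h1 : (Submodule.Quotient.mk a : Q) = a • (Submodule.Quotient.mk 1 : Q) := by
      rw [← Submodule.Quotient.mk_smul, smul_eq_mul, mul_one]
    calc m ⊗ₜ[R] (Submodule.Quotient.mk a : Q)
        = (a • m) ⊗ₜ[R] (Submodule.Quotient.mk 1 : Q) := by
          rw [h1, TensorProduct.tmul_smul, TensorProduct.smul_tmul']
      _ = (c * m) ⊗ₜ[R] (t • (Submodule.Quotient.mk 1 : Q)) := by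
          rw [← TensorProduct.smul_tmul]
          congr 1
          rw [Algebra.smul_def, Algebra.smul_def]
          show f a * m = f t * (c * m)
          rw [hc]; ring
      _ = (c * m) ⊗ₜ[R] (Submodule.Quotient.mk t : Q) := by
          rw [← Submodule.Quotient.mk_smul, smul_eq_mul, mul_one]
      _ = 0 := by
          rw [(Submodule.Quotient.mk_eq_zero _).mpr
            (Ideal.mem_span_singleton_self t), TensorProduct.tmul_zero]
  have hg : g = 0 := by
    rw [Module.FaithfullyFlat.zero_iff_lTensor_zero R R' g]
    apply TensorProduct.ext'
    intro m r
    show m ⊗ₜ[R] g r = 0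
    have : g r = r • (Submodule.Quotient.mk a : Q) := rfl
    rw [this, TensorProduct.tmul_smul, key, smul_zero]
  have : (Submodule.Quotient.mk a : Q) = 0 := by
    have := congrFun (congrArg DFunLike.coe hg) 1
    simpa [g, LinearMap.toSpanSingleton] using this
  exact (Submodule.Quotient.mk_eq_zero _).mp this

/-- Let `f : R → R'` be a faithfully flat homomorphism between local rings
and `x ∈ R`.  If `f x` is a strong divisor of `R'`, then `x` is a strong divisor of `R`. -/
theorem isStrongDivisor_of_faithfullyFlat {R R' : Type*} [CommRing R] [CommRing R']
    [IsLocalRing R] [IsLocalRing R'] (f : R →+* R')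
    (hff : letI := f.toAlgebra; Module.FaithfullyFlat R R')
    (x : R) (hx : IsStrongDivisor (f x)) :
    IsStrongDivisor x := by
  obtain ⟨hreg, hcomp⟩ := hx
  constructor
  · rw [mem_nonZeroDivisors_iff_right]
    intro r hr
    have : f r * f x = 0 := by rw [← map_mul, hr, map_zero]
    have hfr : f r = 0 := mem_nonZeroDivisors_iff_right.mp hreg (f r) this
    have : r ∈ Ideal.span ({0} : Set R) := by
      apply mem_span_of_apply_mem_span f hff r 0
      rw [map_zero, hfr]
      exact Ideal.zero_mem _
    simpa [Ideal.span_singleton_eq_bot.mpr rfl] using this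
  · intro I
    by_cases hxI : x ∈ I
    · right
      rwa [Ideal.span_singleton_le_iff_mem]
    · left
      intro a ha
      rcases hcomp (Ideal.span {f a}) with h | h
      · have : f a ∈ Ideal.span {f x} := h (Ideal.mem_span_singleton_self _)
        exact mem_span_of_apply_mem_span f hff a x this
      · exfalso
        have : f x ∈ Ideal.span {f a} := h (Ideal.mem_span_singleton_self _)
        have hx' : x ∈ Ideal.span {a} := mem_span_of_apply_mem_span f hff x a this
        exact hxI (Ideal.span_le.mpr (by simpa using ha) hx')
end

section
/- Let R be a local commutative ring and s a strong divisor of R that is not a unit. Then P := ⋂_{n ∈ ℕ} R·sⁿ is a prime ideal of R, the localization R_s of R away from s coincides with the localization R_P of R at the prime P (the canonical R-algebra map R_P → R_s is an isomorphism), P·R_s = P, and the quotient R/P is a valuation domain. -/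
-- aux: powers of a strong divisor generate ideals comparable to all ideals
theorem sd_pow_comparable {R : Type*} [CommRing R] {s : R}
    (hs : ∀ I : Ideal R, I ≤ Ideal.span {s} ∨ Ideal.span {s} ≤ I) :
    ∀ n : ℕ, ∀ I : Ideal R, I ≤ Ideal.span {s ^ n} ∨ Ideal.span {s ^ n} ≤ I := by
  intro n
  induction n with
  | zero => intro I; left; simp [Ideal.span_singleton_one]
  | succ n ih =>
    intro I
    rcases ih I with h | h
    · rcases hs (I.colon (Ideal.span {s ^ n})) with hJ | hJ
      · left
        intro x hx
        obtain ⟨y, hy⟩ := Ideal.mem_span_singleton'.mp (h hx)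
        have hyJ : y ∈ I.colon (Ideal.span {s ^ n}) :=
          Ideal.mem_colon_span_singleton.mpr (by rw [hy]; exact hx)
        obtain ⟨z, hz⟩ := Ideal.mem_span_singleton'.mp (hJ hyJ)
        exact Ideal.mem_span_singleton'.mpr ⟨z, by rw [← hy, ← hz, pow_succ]; ring⟩
      · right
        rw [Ideal.span_singleton_le_iff_mem]
        have : s ∈ I.colon (Ideal.span {s ^ n}) := hJ (Ideal.mem_span_singleton_self s)
        have h2 := Ideal.mem_colon_span_singleton.mp this
        rwa [mul_comm, ← pow_succ] at h2
    · right
      exact le_trans (Ideal.span_singleton_le_span_singleton.mpr ⟨s, pow_succ s n⟩) h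

/-- Let `R` be local and `s` a non-unit strong divisor of `R`.  Then
`P := ⋂ₙ R·sⁿ` is a prime ideal, `R_s` coincides with the localization of `R` at `P`
(i.e., `R_s` is the localization of `R` at the complement of `P`), `P·R_s = P` (the extension
of `P` to `R_s` is just the image of `P`), and `R/P` is a valuation domain. -/
theorem strong_divisor_divided_prime {R : Type*} [CommRing R] [IsLocalRing R]
    (s : R) (hs : IsStrongDivisor s) (hsu : ¬ IsUnit s)
    (P : Ideal R) (hPdef : P = ⨅ n : ℕ, Ideal.span {s ^ n}) :
    ∃ hP : P.IsPrime,
      (letI := hP; IsLocalization.AtPrime (Localization.Away s) P) ∧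
      (Ideal.map (algebraMap R (Localization.Away s)) P : Set (Localization.Away s)) =
        (algebraMap R (Localization.Away s)) '' (P : Set R) ∧
      IsDomain (R ⧸ P) ∧ (∀ a b : R ⧸ P, a ∣ b ∨ b ∣ a) := by
  obtain ⟨hreg, hcomp⟩ := hs
  have pc := sd_pow_comparable hcomp
  have hmemP : ∀ x : R, x ∈ P ↔ ∀ n : ℕ, x ∈ Ideal.span {s ^ n} := by
    intro x; rw [hPdef]; simp [Ideal.mem_iInf]
  -- cancellation by powers of s
  have hcancel : ∀ (n : ℕ) (a b : R), s ^ n * a = s ^ n * b → a = b := by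
    intro n a b h
    exact (mul_cancel_left_mem_nonZeroDivisors (pow_mem hreg n)).mp h
  have hpow_not : ∀ n : ℕ, s ^ n ∉ Ideal.span {s ^ (n + 1)} := by
    intro n hmem
    obtain ⟨c, hc⟩ := Ideal.mem_span_singleton'.mp hmem
    apply hsu
    refine IsUnit.of_mul_eq_one (a := s) c ?_
    have key : s ^ n * (s * c) = s ^ n * 1 := by
      calc s ^ n * (s * c) = c * s ^ (n + 1) := by rw [pow_succ]; ring
        _ = s ^ n := hc
        _ = s ^ n * 1 := (mul_one _).symm
    exact hcancel n _ _ key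
  have hpow_notP : ∀ n : ℕ, s ^ n ∉ P := by
    intro n hn
    exact hpow_not n ((hmemP _).mp hn (n + 1))
  -- any element out of P divides a power of s
  have hnotP : ∀ a : R, a ∉ P → ∃ (n : ℕ) (c : R), s ^ n = a * c := by
    intro a ha
    rw [hmemP] at ha
    push_neg at ha
    obtain ⟨n, hn⟩ := ha
    rcases pc n (Ideal.span {a}) with h | h
    · exact absurd (h (Ideal.mem_span_singleton_self a)) hn
    · obtain ⟨c, hc⟩ := Ideal.mem_span_singleton.mp (h (Ideal.mem_span_singleton_self _))
      exact ⟨n, c, hc⟩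
  have hP : P.IsPrime := by
    constructor
    · intro htop
      exact hpow_notP 1 (htop ▸ Submodule.mem_top)
    · intro a b hab
      by_contra hcon
      push_neg at hcon
      obtain ⟨ha, hb⟩ := hcon
      obtain ⟨m, c, hc⟩ := hnotP a ha
      obtain ⟨k, d, hd⟩ := hnotP b hb
      obtain ⟨e, he⟩ := Ideal.mem_span_singleton'.mp ((hmemP _).mp hab (m + k + 1))
      apply hsu
      refine IsUnit.of_mul_eq_one (a := s) (e * c * d) ?_
      have key : s ^ (m + k) * (s * (e * c * d)) = s ^ (m + k) * 1 := by
        calc s ^ (m + k) * (s * (e * c * d))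
            = (e * s ^ (m + k + 1)) * (c * d) := by rw [pow_succ]; ring
          _ = (a * b) * (c * d) := by rw [he]
          _ = s ^ (m + k) * 1 := by rw [mul_one, pow_add, hc, hd]; ring
      exact hcancel _ _ _ key |>.trans (by ring)
  -- division by s inside P
  have hstep : ∀ x ∈ P, ∃ y ∈ P, x = s * y := by
    intro x hx
    obtain ⟨y, hy⟩ := Ideal.mem_span_singleton'.mp ((hmemP _).mp hx 1)
    rw [pow_one] at hy
    refine ⟨y, ?_, by rw [← hy]; ring⟩
    rw [hmemP]
    intro n
    obtain ⟨z, hz⟩ := Ideal.mem_span_singleton'.mp ((hmemP _).mp hx (n + 1))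
    have : s ^ 1 * y = s ^ 1 * (z * s ^ n) := by
      rw [pow_one, mul_comm s y, hy, ← hz, pow_succ]; ring
    rw [hcancel 1 _ _ this]
    exact Ideal.mem_span_singleton'.mpr ⟨z, rfl⟩
  have hdivpow : ∀ (n : ℕ), ∀ x ∈ P, ∃ y ∈ P, x = s ^ n * y := by
    intro n
    induction n with
    | zero => intro x hx; exact ⟨x, hx, by ring⟩
    | succ n ih =>
      intro x hx
      obtain ⟨y, hy, hxy⟩ := ih x hx
      obtain ⟨z, hz, hyz⟩ := hstep y hy
      exact ⟨z, hz, by rw [hxy, hyz, pow_succ]; ring⟩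
  -- divisibility dichotomy outside P
  have hdvd : ∀ a b : R, a ∉ P → b ∉ P → a ∣ b ∨ b ∣ a := by
    intro a b ha hb
    obtain ⟨k, d, hd⟩ := hnotP b hb
    have hdcancel : ∀ u v : R, d * u = d * v → u = v := by
      intro u v huv
      refine hcancel k u v ?_
      rw [hd]
      calc b * d * u = b * (d * u) := by ring
        _ = b * (d * v) := by rw [huv]
        _ = b * d * v := by ring
    rcases pc k (Ideal.span {a * d}) with h | h
    · right
      obtain ⟨e, he⟩ := Ideal.mem_span_singleton'.mp (h (Ideal.mem_span_singleton_self _))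
      -- e * s ^ k = a * d, s ^ k = b * d  ⇒ e * b * d = a * d ⇒ a = e * b
      refine ⟨e, ?_⟩
      have : d * a = d * (b * e) := by
        rw [← mul_comm a d, ← he, hd]; ring
      exact hdcancel _ _ this
    · left
      obtain ⟨e, he⟩ := Ideal.mem_span_singleton.mp
        (h (Ideal.mem_span_singleton_self (s ^ k)))
      -- s ^ k = a * d * e, s ^ k = b * d ⇒ b * d = a * e * d ⇒ b = a * e
      refine ⟨e, ?_⟩
      have : d * b = d * (a * e) := by
        rw [mul_comm d b, ← hd, he]; ring
      exact hdcancel _ _ this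
  refine ⟨hP, ?_, ?_, ?_, ?_⟩
  · -- localization statement
    letI := hP
    have hle : Submonoid.powers s ≤ P.primeCompl := by
      rintro x ⟨n, rfl⟩
      exact hpow_notP n
    exact IsLocalization.isLocalization_of_is_exists_mul_mem
      (Localization.Away s) (Submonoid.powers s) P.primeCompl hle
      (fun x => by
        obtain ⟨n, c, hc⟩ := hnotP x.1 x.2
        exact ⟨c, n, by rw [mul_comm]; exact hc⟩)
  · -- image statement
    set f := algebraMap R (Localization.Away s) with hf
    ext x
    constructor
    · intro hx
      have : Ideal.map f P = Ideal.span (f '' (P : Set R)) := rfl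
      rw [SetLike.mem_coe, this] at hx
      refine Submodule.span_induction ?_ ?_ ?_ ?_ hx
      · intro y hy; exact hy
      · exact ⟨0, P.zero_mem, map_zero f⟩
      · rintro y z _ _ ⟨p, hp, rfl⟩ ⟨q, hq, rfl⟩
        exact ⟨p + q, P.add_mem hp hq, map_add f p q⟩
      · rintro z y _ ⟨p, hp, rfl⟩
        obtain ⟨⟨r, m⟩, e⟩ := IsLocalization.surj (Submonoid.powers s) z
        obtain ⟨n, hm⟩ := m.2
        obtain ⟨p', hp', hpp'⟩ := hdivpow n p hp
        refine ⟨r * p', P.mul_mem_left r hp', ?_⟩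
        have : z • f p = z * (f ↑m * f p') := by
          rw [smul_eq_mul, hpp', ← hm, map_mul]
        rw [this, ← mul_assoc, e, ← map_mul]
    · rintro ⟨p, hp, rfl⟩
      exact Ideal.mem_map_of_mem f hp
  · haveI := hP
    infer_instance
  · intro a b
    obtain ⟨a, rfl⟩ := Ideal.Quotient.mk_surjective a
    obtain ⟨b, rfl⟩ := Ideal.Quotient.mk_surjective b
    by_cases ha : a ∈ P
    · right
      rw [(Ideal.Quotient.eq_zero_iff_mem).mpr ha]
      exact dvd_zero _
    by_cases hb : b ∈ P
    · left
      rw [(Ideal.Quotient.eq_zero_iff_mem).mpr hb]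
      exact dvd_zero _
    rcases hdvd a b ha hb with ⟨c, hc⟩ | ⟨c, hc⟩
    · left; exact ⟨Ideal.Quotient.mk P c, by rw [← map_mul, ← hc]⟩
    · right; exact ⟨Ideal.Quotient.mk P c, by rw [← map_mul, ← hc]⟩
end
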